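/- arXiv:2101.08519 — 13 statements merged into one kernel-verified Lean document; each statement's English description precedes it below -/
import Mathlib

section
/- Let η̃ > 0 and let (ξ_k)_{k≥1}, (E_k)_{k≥1}, (ε̃_k)_{k≥1} be sequences of nonnegative real numbers such that Σ_{k=1}^∞ ε̃_k² < ∞ and η̃·ξ_k² ≤ (E_k − E_{k+1}) + ε̃_k² for every k ≥ 1. Then min_{1≤t≤k} ξ_t = o(1/√k); that is, √k · (min_{1≤t≤k} ξ_t) → 0 as k → ∞. -/
/-- Lemma 1 (convergence speed of a nonnegative sequence): if
`η̃ ξ_k² ≤ (E_k − E_{k+1}) + ε̃_k²` for all `k ≥ 1`, with all sequences nonnegative and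
`Σ_{k≥1} ε̃_k² < ∞`, then `min_{1 ≤ t ≤ k} ξ_t = o(1/√k)`. -/
theorem stmt_0 (η : ℝ) (hη : 0 < η) (ξ E ε : ℕ → ℝ)
    (hξ : ∀ k, 1 ≤ k → 0 ≤ ξ k) (hE : ∀ k, 1 ≤ k → 0 ≤ E k)
    (hε : ∀ k, 1 ≤ k → 0 ≤ ε k)
    (hsum : Summable fun k : ℕ => ε (k + 1) ^ 2)
    (hrec : ∀ k, 1 ≤ k → η * ξ k ^ 2 ≤ (E k - E (k + 1)) + ε k ^ 2) :
    Filter.Tendsto (fun k : ℕ => Real.sqrt k * sInf (ξ '' Set.Icc 1 k))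
      Filter.atTop (nhds 0) := by
  set T := ∑' k : ℕ, ε (k + 1) ^ 2 with hT
  set m : ℕ → ℝ := fun k => sInf (ξ '' Set.Icc 1 k) with hm
  -- Summability of ξ(·+1)²
  have hg : Summable (fun t : ℕ => ξ (t + 1) ^ 2) := by
    apply summable_of_sum_range_le (c := (E 1 + T) / η) (fun n => sq_nonneg _)
    intro n
    rw [le_div_iff₀ hη, mul_comm]
    calc η * ∑ t ∈ Finset.range n, ξ (t + 1) ^ 2
        = ∑ t ∈ Finset.range n, η * ξ (t + 1) ^ 2 := Finset.mul_sum _ _ _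
      _ ≤ ∑ t ∈ Finset.range n, ((E (t + 1) - E (t + 2)) + ε (t + 1) ^ 2) := by
          apply Finset.sum_le_sum; intro i _; exact hrec (i + 1) (by omega)
      _ = (E 1 - E (n + 1)) + ∑ t ∈ Finset.range n, ε (t + 1) ^ 2 := by
          rw [Finset.sum_add_distrib, Finset.sum_range_sub' (fun i => E (i + 1))]
      _ ≤ E 1 + T := by
          have h1 : 0 ≤ E (n + 1) := hE (n + 1) (by omega)
          have h2 : ∑ t ∈ Finset.range n, ε (t + 1) ^ 2 ≤ T :=
            Summable.sum_le_tsum _ (fun i _ => sq_nonneg _) hsum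
          linarith
  set S : ℕ → ℝ := fun n => ∑ t ∈ Finset.range n, ξ (t + 1) ^ 2 with hS
  have hSlim : Filter.Tendsto S Filter.atTop (nhds (∑' t : ℕ, ξ (t + 1) ^ 2)) :=
    hg.hasSum.tendsto_sum_nat
  have hhalf : Filter.Tendsto (fun k : ℕ => k / 2) Filter.atTop Filter.atTop := by
    apply Filter.tendsto_atTop_atTop.mpr
    intro b; exact ⟨2 * b, fun k hk => by omega⟩
  have htail : Filter.Tendsto (fun k : ℕ => 2 * (S k - S (k / 2))) Filter.atTop (nhds 0) := by
    have := (hSlim.sub (hSlim.comp hhalf)).const_mul (2 : ℝ)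
    simpa using this
  -- basic facts about m
  have hm0 : ∀ k, 0 ≤ m k := by
    intro k
    apply Real.sInf_nonneg
    rintro x ⟨t, ht, rfl⟩
    exact hξ t ht.1
  have hmle : ∀ k t, 1 ≤ t → t ≤ k → m k ≤ ξ t := by
    intro k t h1 h2
    apply csInf_le
    · exact ⟨0, by rintro x ⟨s, hs, rfl⟩; exact hξ s hs.1⟩
    · exact ⟨t, ⟨h1, h2⟩, rfl⟩
  -- key bound
  have hkey : ∀ k : ℕ, (k : ℝ) * m k ^ 2 ≤ 2 * (S k - S (k / 2)) := by
    intro k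
    rcases Nat.eq_zero_or_pos k with h | h
    · simp [h]
    have hle : k / 2 ≤ k := Nat.div_le_self _ _
    have hdiff : S k - S (k / 2) = ∑ t ∈ Finset.Ico (k / 2) k, ξ (t + 1) ^ 2 := by
      rw [hS, Finset.sum_Ico_eq_sub _ hle]
    have hterm : ∀ t ∈ Finset.Ico (k / 2) k, m k ^ 2 ≤ ξ (t + 1) ^ 2 := by
      intro t ht
      rw [Finset.mem_Ico] at ht
      have h1 : m k ≤ ξ (t + 1) := hmle k (t + 1) (by omega) (by omega)
      exact pow_le_pow_left₀ (hm0 k) h1 2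
    have hsum2 : ((k - k / 2 : ℕ) : ℝ) * m k ^ 2 ≤ ∑ t ∈ Finset.Ico (k / 2) k, ξ (t + 1) ^ 2 := by
      have := Finset.card_nsmul_le_sum (Finset.Ico (k / 2) k) _ (m k ^ 2) hterm
      simpa [Nat.card_Ico, nsmul_eq_mul] using this
    have hcast : (k : ℝ) ≤ 2 * ((k - k / 2 : ℕ) : ℝ) := by
      have : k ≤ 2 * (k - k / 2) := by omega
      calc (k : ℝ) ≤ ((2 * (k - k / 2) : ℕ) : ℝ) := by exact_mod_cast this
        _ = 2 * ((k - k / 2 : ℕ) : ℝ) := by push_cast; ring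
    calc (k : ℝ) * m k ^ 2 ≤ 2 * ((k - k / 2 : ℕ) : ℝ) * m k ^ 2 := by
          exact mul_le_mul_of_nonneg_right hcast (sq_nonneg _)
      _ = 2 * (((k - k / 2 : ℕ) : ℝ) * m k ^ 2) := by ring
      _ ≤ 2 * (S k - S (k / 2)) := by
          rw [hdiff]; linarith [hsum2]
  have hsq : Filter.Tendsto (fun k : ℕ => (k : ℝ) * m k ^ 2) Filter.atTop (nhds 0) := by
    apply squeeze_zero (fun k => mul_nonneg (Nat.cast_nonneg k) (sq_nonneg _)) hkey htail
  have := hsq.sqrt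
  rw [Real.sqrt_zero] at this
  convert this using 2 with k
  rw [Real.sqrt_mul (Nat.cast_nonneg k), Real.sqrt_sq (hm0 k)]
end

section
/- Let f : ℝ^n → ℝ be lower semicontinuous and ρ-weakly convex, let γ ∈ (0, 1/ρ), and suppose f has the implicit Lipschitz subgradient property with constant L_f > 0. Let sequences (x^k)_{k≥1} in ℝ^n, (z^k)_{k≥0} in ℝ^n, (λ^k)_{k≥0} in ℝ^m and penalty parameters β_k > 0 satisfy, for every k ≥ 0: x^{k+1} = Prox_{γ,f}(z^k − γAᵀλ^{k+1}) and λ^{k+1} = λ^k + β_k(Ax^{k+1} − b). Then for every k ≥ 1: (i) ‖Aᵀ(λ^{k+1} − λ^k)‖ ≤ (L_f + γ⁻¹)‖x^{k+1} − x^k‖ + γ⁻¹‖z^k − z^{k−1}‖; and (ii) if moreover b lies in the column space of A and σ̃ > 0 satisfies ‖Aᵀv‖² ≥ σ̃‖v‖² for every v in the column space of A, then ‖λ^{k+1} − λ^k‖² ≤ 2 c_{γ,A}⁻¹ [ (γL_f + 1)²‖x^{k+1} − x^k‖² + ‖z^k − z^{k−1}‖² ], where c_{γ,A} := γ²σ̃.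 -/
set_option maxHeartbeats 1000000


/-- Lemma 4(a) (MEAL: controlling dual by primal, implicit Lipschitz subgradient case). -/
theorem stmt_2 (n m : ℕ) (A : Matrix (Fin m) (Fin n) ℝ) (b : EuclideanSpace ℝ (Fin m))
    (f : EuclideanSpace ℝ (Fin n) → ℝ) (ρ γ Lf : ℝ)
    (hρ : 0 < ρ) (hγ0 : 0 < γ) (hγ : γ < 1 / ρ) (hLf : 0 < Lf)
    (hlsc : LowerSemicontinuous f)
    (hwc : ConvexOn ℝ Set.univ fun x => f x + ρ / 2 * ‖x‖ ^ 2)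
    (prox : EuclideanSpace ℝ (Fin n) → EuclideanSpace ℝ (Fin n))
    (hproxmin : ∀ w x, f (prox w) + 1 / (2 * γ) * ‖prox w - w‖ ^ 2
        ≤ f x + 1 / (2 * γ) * ‖x - w‖ ^ 2)
    (hproxuniq : ∀ w x, (∀ y, f x + 1 / (2 * γ) * ‖x - w‖ ^ 2
        ≤ f y + 1 / (2 * γ) * ‖y - w‖ ^ 2) → x = prox w)
    (hlip : ∀ w w', ‖γ⁻¹ • (w - prox w) - γ⁻¹ • (w' - prox w')‖
        ≤ Lf * ‖prox w - prox w'‖)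
    (x z : ℕ → EuclideanSpace ℝ (Fin n)) (lam : ℕ → EuclideanSpace ℝ (Fin m))
    (β : ℕ → ℝ) (hβ : ∀ k, 0 < β k)
    (hx : ∀ k, x (k + 1) = prox (z k - γ • Matrix.toEuclideanLin A.transpose (lam (k + 1))))
    (hlam : ∀ k, lam (k + 1) = lam k + β k • (Matrix.toEuclideanLin A (x (k + 1)) - b))
    (σ : ℝ) (hσ : 0 < σ) :
    ∀ k, 1 ≤ k →
      (‖Matrix.toEuclideanLin A.transpose (lam (k + 1) - lam k)‖
          ≤ (Lf + γ⁻¹) * ‖x (k + 1) - x k‖ + γ⁻¹ * ‖z k - z (k - 1)‖) ∧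
      (b ∈ LinearMap.range (Matrix.toEuclideanLin A) →
        (∀ v ∈ LinearMap.range (Matrix.toEuclideanLin A),
          σ * ‖v‖ ^ 2 ≤ ‖Matrix.toEuclideanLin A.transpose v‖ ^ 2) →
        ‖lam (k + 1) - lam k‖ ^ 2
          ≤ 2 * (γ ^ 2 * σ)⁻¹ * ((γ * Lf + 1) ^ 2 * ‖x (k + 1) - x k‖ ^ 2
              + ‖z k - z (k - 1)‖ ^ 2)) := by
  intro k hk
  obtain ⟨j, rfl⟩ : ∃ j, k = j + 1 := ⟨k - 1, (Nat.succ_pred_eq_of_pos hk).symm⟩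
  have hjs : (j + 1 - 1 : ℕ) = j := rfl
  rw [hjs]
  set T := Matrix.toEuclideanLin A.transpose with hT
  set S := Matrix.toEuclideanLin A with hS
  have hγne : γ ≠ 0 := ne_of_gt hγ0
  set wk := z (j + 1) - γ • T (lam (j + 1 + 1)) with hwk
  set wj := z j - γ • T (lam (j + 1)) with hwj
  have hx1 : x (j + 1 + 1) = prox wk := hx (j + 1)
  have hx0 : x (j + 1) = prox wj := hx j
  have key : T (lam (j + 1 + 1) - lam (j + 1)) =
      γ⁻¹ • (z (j + 1) - z j) - γ⁻¹ • (x (j + 1 + 1) - x (j + 1))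
        - (γ⁻¹ • (wk - prox wk) - γ⁻¹ • (wj - prox wj)) := by
    rw [map_sub, ← hx1, ← hx0, hwk, hwj]
    match_scalars <;> field_simp <;> ring
  set a := ‖x (j + 1 + 1) - x (j + 1)‖ with ha
  set c := ‖z (j + 1) - z j‖ with hc
  have hnsmul : ∀ v : EuclideanSpace ℝ (Fin n), ‖γ⁻¹ • v‖ = γ⁻¹ * ‖v‖ := by
    intro v
    rw [norm_smul, Real.norm_eq_abs, abs_of_pos (inv_pos.mpr hγ0)]
  have hl : ‖γ⁻¹ • (wk - prox wk) - γ⁻¹ • (wj - prox wj)‖ ≤ Lf * a := by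
    calc ‖γ⁻¹ • (wk - prox wk) - γ⁻¹ • (wj - prox wj)‖
        ≤ Lf * ‖prox wk - prox wj‖ := hlip wk wj
      _ = Lf * a := by rw [ha, hx1, hx0]
  have h1 : ‖T (lam (j + 1 + 1) - lam (j + 1))‖ ≤ (Lf + γ⁻¹) * a + γ⁻¹ * c := by
    rw [key]
    calc ‖γ⁻¹ • (z (j + 1) - z j) - γ⁻¹ • (x (j + 1 + 1) - x (j + 1))
          - (γ⁻¹ • (wk - prox wk) - γ⁻¹ • (wj - prox wj))‖
        ≤ ‖γ⁻¹ • (z (j + 1) - z j) - γ⁻¹ • (x (j + 1 + 1) - x (j + 1))‖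
          + ‖γ⁻¹ • (wk - prox wk) - γ⁻¹ • (wj - prox wj)‖ := norm_sub_le _ _
      _ ≤ ‖γ⁻¹ • (z (j + 1) - z j)‖ + ‖γ⁻¹ • (x (j + 1 + 1) - x (j + 1))‖
          + ‖γ⁻¹ • (wk - prox wk) - γ⁻¹ • (wj - prox wj)‖ := by
            gcongr
            exact norm_sub_le _ _
      _ ≤ γ⁻¹ * c + γ⁻¹ * a + Lf * a := by
            rw [hnsmul, hnsmul]
            gcongr
      _ = (Lf + γ⁻¹) * a + γ⁻¹ * c := by ring
  refine ⟨h1, ?_⟩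
  intro hb hcoer
  obtain ⟨y, hy⟩ := hb
  have hd : lam (j + 1 + 1) - lam (j + 1) = S (β (j + 1) • (x (j + 1 + 1) - y)) := by
    rw [hlam (j + 1), map_smul, map_sub, hy]
    abel
  have hσd : σ * ‖lam (j + 1 + 1) - lam (j + 1)‖ ^ 2
      ≤ ‖T (lam (j + 1 + 1) - lam (j + 1))‖ ^ 2 :=
    hcoer _ ⟨_, hd.symm⟩
  set nd := ‖lam (j + 1 + 1) - lam (j + 1)‖ with hnd
  set td := ‖T (lam (j + 1 + 1) - lam (j + 1))‖ with htd
  have hanneg : 0 ≤ a := norm_nonneg _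
  have hcnneg : 0 ≤ c := norm_nonneg _
  have htdnneg : 0 ≤ td := norm_nonneg _
  have hndnneg : 0 ≤ nd := norm_nonneg _
  have hγtd : γ * td ≤ (γ * Lf + 1) * a + c := by
    have h2 := mul_le_mul_of_nonneg_left h1 hγ0.le
    have h3 : γ * ((Lf + γ⁻¹) * a + γ⁻¹ * c) = (γ * Lf + 1) * a + c := by
      linear_combination (a + c) * mul_inv_cancel₀ hγne
    linarith [h3 ▸ h2]
  have hsq : (γ * td) ^ 2 ≤ ((γ * Lf + 1) * a + c) ^ 2 := by
    have : 0 ≤ γ * td := by positivity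
    nlinarith
  have key2 : σ * γ ^ 2 * nd ^ 2 ≤ 2 * ((γ * Lf + 1) ^ 2 * a ^ 2 + c ^ 2) := by
    nlinarith [mul_le_mul_of_nonneg_left hσd (sq_nonneg γ), sq_nonneg ((γ * Lf + 1) * a - c)]
  have hone : (γ ^ 2 * σ)⁻¹ * (σ * γ ^ 2) = 1 := by
    rw [mul_comm σ (γ ^ 2), inv_mul_cancel₀ (by positivity)]
  calc nd ^ 2 = (γ ^ 2 * σ)⁻¹ * (σ * γ ^ 2 * nd ^ 2) := by
        rw [show (γ ^ 2 * σ)⁻¹ * (σ * γ ^ 2 * nd ^ 2)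
            = (γ ^ 2 * σ)⁻¹ * (σ * γ ^ 2) * nd ^ 2 from by ring, hone, one_mul]
    _ ≤ (γ ^ 2 * σ)⁻¹ * (2 * ((γ * Lf + 1) ^ 2 * a ^ 2 + c ^ 2)) :=
        mul_le_mul_of_nonneg_left key2 (by positivity)
    _ = 2 * (γ ^ 2 * σ)⁻¹ * ((γ * Lf + 1) ^ 2 * a ^ 2 + c ^ 2) := by ring
end

section
/- Let f : ℝ^n → ℝ be lower semicontinuous and ρ-weakly convex, let γ ∈ (0, 1/ρ), and suppose f has the implicit bounded subgradient property with constant L̂_f > 0. Let sequences (x^k)_{k≥1} in ℝ^n, (z^k)_{k≥0} in ℝ^n, (λ^k)_{k≥0} in ℝ^m and penalty parameters β_k > 0 satisfy, for every k ≥ 0: x^{k+1} = Prox_{γ,f}(z^k − γAᵀλ^{k+1}) and λ^{k+1} = λ^k + β_k(Ax^{k+1} − b). Assume b lies in the column space of A and σ̃ > 0 satisfies ‖Aᵀv‖² ≥ σ̃‖v‖² for every v in the column space of A, and set c_{γ,A} := γ²σ̃. Then for every k ≥ 1: ‖λ^{k+1} − λ^k‖² ≤ 3 c_{γ,A}⁻¹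 [ 4γ²L̂_f² + ‖x^{k+1} − x^k‖² + ‖z^k − z^{k−1}‖² ]. -/
set_option maxHeartbeats 1000000


/-- Lemma 4(b) (MEAL: controlling dual by primal, implicit bounded subgradient case). -/
theorem stmt_3 (n m : ℕ) (A : Matrix (Fin m) (Fin n) ℝ) (b : EuclideanSpace ℝ (Fin m))
    (f : EuclideanSpace ℝ (Fin n) → ℝ) (ρ γ Lfhat : ℝ)
    (hρ : 0 < ρ) (hγ0 : 0 < γ) (hγ : γ < 1 / ρ) (hLf : 0 < Lfhat)
    (hlsc : LowerSemicontinuous f)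
    (hwc : ConvexOn ℝ Set.univ fun x => f x + ρ / 2 * ‖x‖ ^ 2)
    (prox : EuclideanSpace ℝ (Fin n) → EuclideanSpace ℝ (Fin n))
    (hproxmin : ∀ w x, f (prox w) + 1 / (2 * γ) * ‖prox w - w‖ ^ 2
        ≤ f x + 1 / (2 * γ) * ‖x - w‖ ^ 2)
    (hproxuniq : ∀ w x, (∀ y, f x + 1 / (2 * γ) * ‖x - w‖ ^ 2
        ≤ f y + 1 / (2 * γ) * ‖y - w‖ ^ 2) → x = prox w)
    (hbnd : ∀ w, ‖γ⁻¹ • (w - prox w)‖ ≤ Lfhat)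
    (x z : ℕ → EuclideanSpace ℝ (Fin n)) (lam : ℕ → EuclideanSpace ℝ (Fin m))
    (β : ℕ → ℝ) (hβ : ∀ k, 0 < β k)
    (hx : ∀ k, x (k + 1) = prox (z k - γ • Matrix.toEuclideanLin A.transpose (lam (k + 1))))
    (hlam : ∀ k, lam (k + 1) = lam k + β k • (Matrix.toEuclideanLin A (x (k + 1)) - b))
    (σ : ℝ) (hσ : 0 < σ)
    (hb : b ∈ LinearMap.range (Matrix.toEuclideanLin A))
    (hσA : ∀ v ∈ LinearMap.range (Matrix.toEuclideanLin A),
      σ * ‖v‖ ^ 2 ≤ ‖Matrix.toEuclideanLin A.transpose v‖ ^ 2) :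
    ∀ k, 1 ≤ k →
      ‖lam (k + 1) - lam k‖ ^ 2
        ≤ 3 * (γ ^ 2 * σ)⁻¹ * (4 * γ ^ 2 * Lfhat ^ 2 + ‖x (k + 1) - x k‖ ^ 2
            + ‖z k - z (k - 1)‖ ^ 2) := by
  intro k hk
  obtain ⟨j, rfl⟩ : ∃ j, k = j + 1 := ⟨k - 1, (Nat.succ_pred_eq_of_pos hk).symm⟩
  set T := Matrix.toEuclideanLin A.transpose with hT
  set S := Matrix.toEuclideanLin A with hS
  set w1 := z (j + 1) - γ • T (lam (j + 2)) with hw1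
  set w0 := z j - γ • T (lam (j + 1)) with hw0
  set e1 := w1 - prox w1 with he1
  set e0 := w0 - prox w0 with he0
  -- bounds on errors
  have hbound : ∀ w : EuclideanSpace ℝ (Fin n), ‖w - prox w‖ ≤ γ * Lfhat := by
    intro w
    have := hbnd w
    rw [norm_smul, Real.norm_eq_abs, abs_of_pos (inv_pos.mpr hγ0)] at this
    calc ‖w - prox w‖ = γ * (γ⁻¹ * ‖w - prox w‖) := by field_simp
    _ ≤ γ * Lfhat := by nlinarith
  have hbe1 : ‖e1‖ ≤ γ * Lfhat := hbound w1
  have hbe0 : ‖e0‖ ≤ γ * Lfhat := hbound w0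
  -- key identity
  have hx1 : x (j + 2) = w1 - e1 := by rw [he1, hx (j + 1)]; abel
  have hx0 : x (j + 1) = w0 - e0 := by rw [he0, hx j]; abel
  have key : γ • T (lam (j + 2) - lam (j + 1))
      = (z (j + 1) - z j) - (x (j + 2) - x (j + 1)) - e1 + e0 := by
    rw [hx1, hx0, hw1, hw0, map_sub, smul_sub]
    abel
  -- range membership
  have hmem : lam (j + 2) - lam (j + 1) ∈ LinearMap.range S := by
    have h := hlam (j + 1)
    have : lam (j + 2) - lam (j + 1) = β (j + 1) • (S (x (j + 2)) - b) := by
      rw [h]; abel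
    rw [this]
    exact Submodule.smul_mem _ _ (Submodule.sub_mem _ (LinearMap.mem_range_self _ _) hb)
  have hσΔ := hσA _ hmem
  -- norm bound
  have hnorm : γ * ‖T (lam (j + 2) - lam (j + 1))‖
      ≤ ‖z (j + 1) - z j‖ + ‖x (j + 2) - x (j + 1)‖ + 2 * (γ * Lfhat) := by
    have h1 : ‖γ • T (lam (j + 2) - lam (j + 1))‖ = γ * ‖T (lam (j + 2) - lam (j + 1))‖ := by
      rw [norm_smul, Real.norm_eq_abs, abs_of_pos hγ0]
    rw [← h1, key]
    calc ‖(z (j + 1) - z j) - (x (j + 2) - x (j + 1)) - e1 + e0‖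
        ≤ ‖(z (j + 1) - z j) - (x (j + 2) - x (j + 1)) - e1‖ + ‖e0‖ := norm_add_le _ _
      _ ≤ ‖(z (j + 1) - z j) - (x (j + 2) - x (j + 1))‖ + ‖e1‖ + ‖e0‖ := by
          have := norm_sub_le ((z (j + 1) - z j) - (x (j + 2) - x (j + 1))) e1
          linarith
      _ ≤ ‖z (j + 1) - z j‖ + ‖x (j + 2) - x (j + 1)‖ + ‖e1‖ + ‖e0‖ := by
          have := norm_sub_le (z (j + 1) - z j) (x (j + 2) - x (j + 1))
          linarith
      _ ≤ _ := by linarith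
  -- conclude
  have hkk : j + 1 + 1 = j + 2 := rfl
  have hsub : j + 1 - 1 = j := rfl
  rw [hkk, hsub]
  set a := ‖z (j + 1) - z j‖
  set c := ‖x (j + 2) - x (j + 1)‖
  set d := ‖T (lam (j + 2) - lam (j + 1))‖
  set e := ‖lam (j + 2) - lam (j + 1)‖
  have ha : 0 ≤ a := norm_nonneg _
  have hc : 0 ≤ c := norm_nonneg _
  have hd : 0 ≤ d := norm_nonneg _
  have h2 : (γ * d) ^ 2 ≤ (a + c + 2 * (γ * Lfhat)) ^ 2 :=
    pow_le_pow_left₀ (by positivity) hnorm 2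
  have hsq : γ ^ 2 * d ^ 2 ≤ 3 * (a ^ 2 + c ^ 2 + 4 * γ ^ 2 * Lfhat ^ 2) := by
    nlinarith [sq_nonneg (a - c), sq_nonneg (a - 2 * γ * Lfhat), sq_nonneg (c - 2 * γ * Lfhat)]
  have hγσ : 0 < γ ^ 2 * σ := by positivity
  rw [show 3 * (γ ^ 2 * σ)⁻¹ * (4 * γ ^ 2 * Lfhat ^ 2 + c ^ 2 + a ^ 2)
      = (3 * (4 * γ ^ 2 * Lfhat ^ 2 + c ^ 2 + a ^ 2)) / (γ ^ 2 * σ) by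
        field_simp, le_div_iff₀ hγσ]
  nlinarith [mul_le_mul_of_nonneg_left hσΔ (sq_nonneg γ)]
end

section
/- Let f : ℝ^n → ℝ be lower semicontinuous and ρ-weakly convex, let γ ∈ (0, 1/ρ), and suppose f has the implicit Lipschitz subgradient property with constant L_f > 0. Let sequences (x^k)_{k≥1} in ℝ^n, (z^k)_{k≥0} in ℝ^n, (λ^k)_{k≥0} in ℝ^m, vectors s^k ∈ ℝ^n with ‖s^k‖ ≤ ε_k (ε_k ≥ 0), and penalty parameters β_k > 0 satisfy, for every k ≥ 0: x^{k+1} = Prox_{γ,f}(z^k − γ(Aᵀλ^{k+1} − s^k)) and λ^{k+1} = λ^k + β_k(Ax^{k+1} − b). Assume b lies in the column space of A and σ̃ > 0 satisfies ‖Aᵀv‖² ≥ σ̃‖v‖² for every v in the column space of A, and set c_{γ,A} := γ²σ̃. Then for every k ≥ 1: ‖λ^{k+1} − λ^k‖² ≤ 3 c_{γ,A}⁻¹ [ (γL_f + 1)²‖x^{k+1} − x^k‖² + ‖z^k − z^{k−1}‖² + γ²(ε_k + ε_{k−1})² ]. -/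
set_option maxHeartbeats 1000000 in
/-- Lemma 5(a) (iMEAL: controlling dual by primal, implicit Lipschitz subgradient case). -/
theorem stmt_4 (n m : ℕ) (A : Matrix (Fin m) (Fin n) ℝ) (b : EuclideanSpace ℝ (Fin m))
    (f : EuclideanSpace ℝ (Fin n) → ℝ) (ρ γ Lf : ℝ)
    (hρ : 0 < ρ) (hγ0 : 0 < γ) (hγ : γ < 1 / ρ) (hLf : 0 < Lf)
    (hlsc : LowerSemicontinuous f)
    (hwc : ConvexOn ℝ Set.univ fun x => f x + ρ / 2 * ‖x‖ ^ 2)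
    (prox : EuclideanSpace ℝ (Fin n) → EuclideanSpace ℝ (Fin n))
    (hproxmin : ∀ w x, f (prox w) + 1 / (2 * γ) * ‖prox w - w‖ ^ 2
        ≤ f x + 1 / (2 * γ) * ‖x - w‖ ^ 2)
    (hproxuniq : ∀ w x, (∀ y, f x + 1 / (2 * γ) * ‖x - w‖ ^ 2
        ≤ f y + 1 / (2 * γ) * ‖y - w‖ ^ 2) → x = prox w)
    (hlip : ∀ w w', ‖γ⁻¹ • (w - prox w) - γ⁻¹ • (w' - prox w')‖
        ≤ Lf * ‖prox w - prox w'‖)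
    (x z : ℕ → EuclideanSpace ℝ (Fin n)) (lam : ℕ → EuclideanSpace ℝ (Fin m))
    (s : ℕ → EuclideanSpace ℝ (Fin n)) (ε : ℕ → ℝ)
    (hε : ∀ k, 0 ≤ ε k) (hs : ∀ k, ‖s k‖ ≤ ε k)
    (β : ℕ → ℝ) (hβ : ∀ k, 0 < β k)
    (hx : ∀ k, x (k + 1)
        = prox (z k - γ • (Matrix.toEuclideanLin A.transpose (lam (k + 1)) - s k)))
    (hlam : ∀ k, lam (k + 1) = lam k + β k • (Matrix.toEuclideanLin A (x (k + 1)) - b))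
    (σ : ℝ) (hσ : 0 < σ)
    (hb : b ∈ LinearMap.range (Matrix.toEuclideanLin A))
    (hσA : ∀ v ∈ LinearMap.range (Matrix.toEuclideanLin A),
      σ * ‖v‖ ^ 2 ≤ ‖Matrix.toEuclideanLin A.transpose v‖ ^ 2) :
    ∀ k, 1 ≤ k →
      ‖lam (k + 1) - lam k‖ ^ 2
        ≤ 3 * (γ ^ 2 * σ)⁻¹ * ((γ * Lf + 1) ^ 2 * ‖x (k + 1) - x k‖ ^ 2
            + ‖z k - z (k - 1)‖ ^ 2 + γ ^ 2 * (ε k + ε (k - 1)) ^ 2) := by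
  intro k hk
  have hγne : γ ≠ 0 := ne_of_gt hγ0
  have hk1 : k - 1 + 1 = k := Nat.succ_pred_eq_of_pos hk
  set T := Matrix.toEuclideanLin A.transpose with hT
  set w1 := z k - γ • (T (lam (k + 1)) - s k) with hw1
  set w0 := z (k - 1) - γ • (T (lam k) - s (k - 1)) with hw0
  have hx1 : x (k + 1) = prox w1 := hx k
  have hx0 : x k = prox w0 := by
    conv_lhs => rw [← hk1]
    rw [hx (k - 1), hk1]
  have hD : ‖γ⁻¹ • (w1 - x (k + 1)) - γ⁻¹ • (w0 - x k)‖ ≤ Lf * ‖x (k + 1) - x k‖ := by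
    have := hlip w1 w0
    rw [← hx1, ← hx0] at this
    exact this
  have key : T (lam (k + 1)) - T (lam k)
      = γ⁻¹ • (z k - z (k - 1)) - γ⁻¹ • (x (k + 1) - x k) + (s k - s (k - 1))
        - (γ⁻¹ • (w1 - x (k + 1)) - γ⁻¹ • (w0 - x k)) := by
    rw [hw1, hw0]
    match_scalars <;> field_simp <;> ring
  -- norm bound
  have hnorm : ‖T (lam (k + 1)) - T (lam k)‖
      ≤ (Lf + γ⁻¹) * ‖x (k + 1) - x k‖ + γ⁻¹ * ‖z k - z (k - 1)‖ + (ε k + ε (k - 1)) := by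
    rw [key]
    have h1 : ‖γ⁻¹ • (z k - z (k - 1))‖ = γ⁻¹ * ‖z k - z (k - 1)‖ := by
      rw [norm_smul, Real.norm_eq_abs, abs_of_pos (inv_pos.mpr hγ0)]
    have h2 : ‖γ⁻¹ • (x (k + 1) - x k)‖ = γ⁻¹ * ‖x (k + 1) - x k‖ := by
      rw [norm_smul, Real.norm_eq_abs, abs_of_pos (inv_pos.mpr hγ0)]
    have h3 : ‖s k - s (k - 1)‖ ≤ ε k + ε (k - 1) :=
      (norm_sub_le _ _).trans (add_le_add (hs k) (hs (k - 1)))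
    calc ‖γ⁻¹ • (z k - z (k - 1)) - γ⁻¹ • (x (k + 1) - x k) + (s k - s (k - 1))
            - (γ⁻¹ • (w1 - x (k + 1)) - γ⁻¹ • (w0 - x k))‖
        ≤ ‖γ⁻¹ • (z k - z (k - 1))‖ + ‖γ⁻¹ • (x (k + 1) - x k)‖ + ‖s k - s (k - 1)‖
            + ‖γ⁻¹ • (w1 - x (k + 1)) - γ⁻¹ • (w0 - x k)‖ := by
          refine (norm_sub_le _ _).trans ?_
          gcongr
          refine (norm_add_le _ _).trans ?_
          gcongr
          exact norm_sub_le _ _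
      _ ≤ (Lf + γ⁻¹) * ‖x (k + 1) - x k‖ + γ⁻¹ * ‖z k - z (k - 1)‖ + (ε k + ε (k - 1)) := by
          rw [h1, h2]
          nlinarith [hD, norm_nonneg (x (k + 1) - x k)]
  -- membership in range
  have hmem : lam (k + 1) - lam k ∈ LinearMap.range (Matrix.toEuclideanLin A) := by
    obtain ⟨u, hu⟩ := hb
    refine ⟨β k • (x (k + 1) - u), ?_⟩
    rw [hlam k]
    simp [map_smul, map_sub, hu]
  have hσL : σ * ‖lam (k + 1) - lam k‖ ^ 2 ≤ ‖T (lam (k + 1)) - T (lam k)‖ ^ 2 := by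
    have := hσA _ hmem
    rwa [map_sub] at this
  -- abbreviations
  set X := ‖x (k + 1) - x k‖ with hX
  set Z := ‖z k - z (k - 1)‖ with hZ
  set E := ε k + ε (k - 1) with hE
  set N := ‖T (lam (k + 1)) - T (lam k)‖ with hN
  set L := ‖lam (k + 1) - lam k‖ with hL
  have hX0 : 0 ≤ X := norm_nonneg _
  have hZ0 : 0 ≤ Z := norm_nonneg _
  have hE0 : 0 ≤ E := add_nonneg (hε k) (hε (k - 1))
  have hN0 : 0 ≤ N := norm_nonneg _
  have hN2 : N ^ 2 ≤ 3 * ((Lf + γ⁻¹) ^ 2 * X ^ 2 + γ⁻¹ ^ 2 * Z ^ 2 + E ^ 2) := by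
    have h1 : N ^ 2 ≤ ((Lf + γ⁻¹) * X + γ⁻¹ * Z + E) ^ 2 := by
      apply pow_le_pow_left₀ hN0 hnorm
    refine h1.trans ?_
    nlinarith [sq_nonneg ((Lf + γ⁻¹) * X - γ⁻¹ * Z), sq_nonneg ((Lf + γ⁻¹) * X - E),
      sq_nonneg (γ⁻¹ * Z - E)]
  have hL2 : L ^ 2 ≤ σ⁻¹ * (3 * ((Lf + γ⁻¹) ^ 2 * X ^ 2 + γ⁻¹ ^ 2 * Z ^ 2 + E ^ 2)) := by
    rw [← mul_le_mul_iff_right₀ hσ, ← mul_assoc, mul_inv_cancel₀ (ne_of_gt hσ), one_mul]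
    exact hσL.trans hN2
  have heq : 3 * (γ ^ 2 * σ)⁻¹ * ((γ * Lf + 1) ^ 2 * X ^ 2 + Z ^ 2 + γ ^ 2 * E ^ 2)
      = σ⁻¹ * (3 * ((Lf + γ⁻¹) ^ 2 * X ^ 2 + γ⁻¹ ^ 2 * Z ^ 2 + E ^ 2)) := by
    field_simp
  rw [heq]
  exact hL2
end

section
/- Let f : ℝ^n → ℝ be lower semicontinuous and ρ-weakly convex, let γ ∈ (0, 1/ρ), and suppose f has the implicit bounded subgradient property with constant L̂_f > 0. Let sequences (x^k)_{k≥1} in ℝ^n, (z^k)_{k≥0} in ℝ^n, (λ^k)_{k≥0} in ℝ^m, vectors s^k ∈ ℝ^n with ‖s^k‖ ≤ ε_k (ε_k ≥ 0), and penalty parameters β_k > 0 satisfy, for every k ≥ 0: x^{k+1} = Prox_{γ,f}(z^k − γ(Aᵀλ^{k+1} − s^k)) and λ^{k+1} = λ^k + β_k(Ax^{k+1} − b). Assume b lies in the column space of A and σ̃ > 0 satisfies ‖Aᵀv‖² ≥ σ̃‖v‖² for every v in the column space of A, and set c_{γ,A} := γ²σ̃. Then for every k ≥ 1: ‖λ^{k+1}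 − λ^k‖² ≤ 4 c_{γ,A}⁻¹ [ 4γ²L̂_f² + ‖x^{k+1} − x^k‖² + ‖z^k − z^{k−1}‖² + γ²(ε_k + ε_{k−1})² ]. -/
set_option maxHeartbeats 1000000


/-- Lemma 5(b) (iMEAL: controlling dual by primal, implicit bounded subgradient case). -/
theorem stmt_5 (n m : ℕ) (A : Matrix (Fin m) (Fin n) ℝ) (b : EuclideanSpace ℝ (Fin m))
    (f : EuclideanSpace ℝ (Fin n) → ℝ) (ρ γ Lfhat : ℝ)
    (hρ : 0 < ρ) (hγ0 : 0 < γ) (hγ : γ < 1 / ρ) (hLf : 0 < Lfhat)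
    (hlsc : LowerSemicontinuous f)
    (hwc : ConvexOn ℝ Set.univ fun x => f x + ρ / 2 * ‖x‖ ^ 2)
    (prox : EuclideanSpace ℝ (Fin n) → EuclideanSpace ℝ (Fin n))
    (hproxmin : ∀ w x, f (prox w) + 1 / (2 * γ) * ‖prox w - w‖ ^ 2
        ≤ f x + 1 / (2 * γ) * ‖x - w‖ ^ 2)
    (hproxuniq : ∀ w x, (∀ y, f x + 1 / (2 * γ) * ‖x - w‖ ^ 2
        ≤ f y + 1 / (2 * γ) * ‖y - w‖ ^ 2) → x = prox w)
    (hbnd : ∀ w, ‖γ⁻¹ • (w - prox w)‖ ≤ Lfhat)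
    (x z : ℕ → EuclideanSpace ℝ (Fin n)) (lam : ℕ → EuclideanSpace ℝ (Fin m))
    (s : ℕ → EuclideanSpace ℝ (Fin n)) (ε : ℕ → ℝ)
    (hε : ∀ k, 0 ≤ ε k) (hs : ∀ k, ‖s k‖ ≤ ε k)
    (β : ℕ → ℝ) (hβ : ∀ k, 0 < β k)
    (hx : ∀ k, x (k + 1)
        = prox (z k - γ • (Matrix.toEuclideanLin A.transpose (lam (k + 1)) - s k)))
    (hlam : ∀ k, lam (k + 1) = lam k + β k • (Matrix.toEuclideanLin A (x (k + 1)) - b))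
    (σ : ℝ) (hσ : 0 < σ)
    (hb : b ∈ LinearMap.range (Matrix.toEuclideanLin A))
    (hσA : ∀ v ∈ LinearMap.range (Matrix.toEuclideanLin A),
      σ * ‖v‖ ^ 2 ≤ ‖Matrix.toEuclideanLin A.transpose v‖ ^ 2) :
    ∀ k, 1 ≤ k →
      ‖lam (k + 1) - lam k‖ ^ 2
        ≤ 4 * (γ ^ 2 * σ)⁻¹ * (4 * γ ^ 2 * Lfhat ^ 2 + ‖x (k + 1) - x k‖ ^ 2
            + ‖z k - z (k - 1)‖ ^ 2 + γ ^ 2 * (ε k + ε (k - 1)) ^ 2) := by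

  intro k hk
  obtain ⟨j, rfl⟩ : ∃ j, k = j + 1 := ⟨k - 1, (Nat.succ_pred_eq_of_pos hk).symm⟩
  simp only [Nat.add_sub_cancel]
  set B := Matrix.toEuclideanLin A.transpose with hB
  set AL := Matrix.toEuclideanLin A with hAL
  -- key bound on residual vectors
  have hkey : ∀ i : ℕ, ‖z i - γ • (B (lam (i+1)) - s i) - x (i+1)‖ ≤ γ * Lfhat := by
    intro i
    set w := z i - γ • (B (lam (i+1)) - s i) with hw
    have hp : prox w = x (i+1) := (hx i).symm
    have h1 : w - x (i+1) = γ • (γ⁻¹ • (w - x (i+1))) := by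
      rw [smul_smul, mul_inv_cancel₀ hγ0.ne', one_smul]
    calc ‖w - x (i+1)‖ = ‖γ • (γ⁻¹ • (w - x (i+1)))‖ := by rw [← h1]
      _ = γ * ‖γ⁻¹ • (w - x (i+1))‖ := by
          rw [norm_smul, Real.norm_eq_abs, abs_of_pos hγ0]
      _ ≤ γ * Lfhat := by
          have := hbnd w; rw [hp] at this
          exact mul_le_mul_of_nonneg_left this hγ0.le
  set d := lam (j+1+1) - lam (j+1) with hd
  have hdmem : d ∈ LinearMap.range AL := by
    rw [hd, hlam (j+1), add_sub_cancel_left]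
    obtain ⟨y, hy⟩ := hb
    exact Submodule.smul_mem _ _ (Submodule.sub_mem _ ⟨x (j+1+1), rfl⟩ ⟨y, hy⟩)
  have hσ1 : σ * ‖d‖ ^ 2 ≤ ‖B d‖ ^ 2 := hσA d hdmem
  set v : ℕ → EuclideanSpace ℝ (Fin n) :=
    fun i => z i - γ • (B (lam (i+1)) - s i) - x (i+1) with hv
  have hdecomp : γ • B d =
      (z (j+1) - z j) - (x (j+1+1) - x (j+1)) + γ • (s (j+1) - s j)
        - (v (j+1) - v j) := by
    simp only [hv, hd, map_sub, smul_sub]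
    module
  have hn : ‖γ • B d‖ ≤ ‖z (j+1) - z j‖ + ‖x (j+1+1) - x (j+1)‖
      + γ * (ε (j+1) + ε j) + 2 * (γ * Lfhat) := by
    rw [hdecomp]
    have t1 : ‖(z (j+1) - z j) - (x (j+1+1) - x (j+1)) + γ • (s (j+1) - s j)
        - (v (j+1) - v j)‖ ≤ ‖z (j+1) - z j‖ + ‖x (j+1+1) - x (j+1)‖
          + ‖γ • (s (j+1) - s j)‖ + (‖v (j+1)‖ + ‖v j‖) := by
      calc _ ≤ ‖(z (j+1) - z j) - (x (j+1+1) - x (j+1)) + γ • (s (j+1) - s j)‖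
            + ‖v (j+1) - v j‖ := norm_sub_le _ _
        _ ≤ ‖(z (j+1) - z j) - (x (j+1+1) - x (j+1))‖ + ‖γ • (s (j+1) - s j)‖
            + (‖v (j+1)‖ + ‖v j‖) := by
              gcongr
              · exact norm_add_le _ _
              · exact norm_sub_le _ _
        _ ≤ _ := by gcongr; exact norm_sub_le _ _
    refine t1.trans ?_
    have hss : ‖γ • (s (j+1) - s j)‖ ≤ γ * (ε (j+1) + ε j) := by
      rw [norm_smul, Real.norm_eq_abs, abs_of_pos hγ0]
      refine mul_le_mul_of_nonneg_left ?_ hγ0.le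
      exact (norm_sub_le _ _).trans (add_le_add (hs _) (hs _))
    have h1 := hkey (j+1); have h2 := hkey j
    simp only [hv]
    linarith
  have hγB : ‖γ • B d‖ = γ * ‖B d‖ := by
    rw [norm_smul, Real.norm_eq_abs, abs_of_pos hγ0]
  rw [hγB] at hn
  have hpos : (0:ℝ) < γ ^ 2 * σ := by positivity
  rw [show 4 * (γ ^ 2 * σ)⁻¹ * (4 * γ ^ 2 * Lfhat ^ 2 + ‖x (j+1+1) - x (j+1)‖ ^ 2
      + ‖z (j+1) - z j‖ ^ 2 + γ ^ 2 * (ε (j+1) + ε j) ^ 2)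
      = (4 * (4 * γ ^ 2 * Lfhat ^ 2 + ‖x (j+1+1) - x (j+1)‖ ^ 2
      + ‖z (j+1) - z j‖ ^ 2 + γ ^ 2 * (ε (j+1) + ε j) ^ 2)) / (γ ^ 2 * σ) from by
        rw [div_eq_mul_inv]; ring, le_div_iff₀ hpos]
  set Z := ‖z (j+1) - z j‖ with hZdef
  set X := ‖x (j+1+1) - x (j+1)‖ with hXdef
  set E := γ * (ε (j+1) + ε j) with hEdef
  set L := 2 * (γ * Lfhat) with hLdef
  have hZ : (0:ℝ) ≤ Z := norm_nonneg _
  have hX : (0:ℝ) ≤ X := norm_nonneg _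
  have hE : (0:ℝ) ≤ E := mul_nonneg hγ0.le (by have := hε (j+1); have := hε j; linarith)
  have hL : (0:ℝ) ≤ L := by positivity
  have h5 : (γ * ‖B d‖) ^ 2 ≤ (Z + X + E + L) ^ 2 :=
    pow_le_pow_left₀ (by positivity) hn 2
  have hS4 : (Z + X + E + L) ^ 2 ≤ 4 * (Z ^ 2 + X ^ 2 + E ^ 2 + L ^ 2) := by
    nlinarith [sq_nonneg (Z - X), sq_nonneg (Z - E), sq_nonneg (Z - L),
      sq_nonneg (X - E), sq_nonneg (X - L), sq_nonneg (E - L)]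
  have h6 : γ ^ 2 * (σ * ‖d‖ ^ 2) ≤ γ ^ 2 * ‖B d‖ ^ 2 :=
    mul_le_mul_of_nonneg_left hσ1 (by positivity)
  have hE2 : E ^ 2 = γ ^ 2 * (ε (j+1) + ε j) ^ 2 := by rw [hEdef]; ring
  have hL2 : L ^ 2 = 4 * γ ^ 2 * Lfhat ^ 2 := by rw [hLdef]; ring
  nlinarith [h5, hS4, h6]
end

section
/- Let h : ℝ^n → ℝ be differentiable with L_h-Lipschitz gradient ∇h, let g : ℝ^n → ℝ be lower semicontinuous and ρ_g-weakly convex, let γ ∈ (0, 1/ρ_g), and suppose g has the implicit Lipschitz subgradient property with constant L_g > 0. Let sequences (x^k)_{k≥0} in ℝ^n, (z^k)_{k≥0} in ℝ^n, (λ^k)_{k≥0} in ℝ^m and penalty parameters β_k > 0 satisfy, for every k ≥ 0: x^{k+1} = Prox_{γ,g}(z^k − γ(∇h(x^k) + Aᵀλ^{k+1})) and λ^{k+1} = λ^k + β_k(Ax^{k+1} − b). Then for every k ≥ 1: (i) ‖Aᵀ(λ^{k+1} − λ^k)‖ ≤ (L_g + γ⁻¹)‖x^{k+1} − x^k‖ +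 L_h‖x^k − x^{k−1}‖ + γ⁻¹‖z^k − z^{k−1}‖; and (ii) if moreover b lies in the column space of A and σ̃ > 0 satisfies ‖Aᵀv‖² ≥ σ̃‖v‖² for every v in the column space of A, then ‖λ^{k+1} − λ^k‖² ≤ 3 c_{γ,A}⁻¹ [ (γL_g + 1)²‖x^{k+1} − x^k‖² + γ²L_h²‖x^k − x^{k−1}‖² + ‖z^k − z^{k−1}‖² ], where c_{γ,A} := γ²σ̃. -/
private lemma norm_sub4 {E : Type*} [SeminormedAddCommGroup E] (a b c d : E) :
    ‖a - b - c - d‖ ≤ ‖a‖ + ‖b‖ + ‖c‖ + ‖d‖ := by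
  calc ‖a - b - c - d‖ ≤ ‖a - b - c‖ + ‖d‖ := norm_sub_le _ _
    _ ≤ ‖a - b‖ + ‖c‖ + ‖d‖ := by linarith [norm_sub_le (a - b) c]
    _ ≤ ‖a‖ + ‖b‖ + ‖c‖ + ‖d‖ := by linarith [norm_sub_le a b]

private lemma sq3 (u v w : ℝ) : (u + v + w) ^ 2 ≤ 3 * (u ^ 2 + v ^ 2 + w ^ 2) := by
  nlinarith [sq_nonneg (u - v), sq_nonneg (u - w), sq_nonneg (v - w)]

/-- Lemma 6(a) (LiMEAL: controlling dual by primal, implicit Lipschitz subgradient case). -/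
theorem stmt_6 (n m : ℕ) (A : Matrix (Fin m) (Fin n) ℝ) (b : EuclideanSpace ℝ (Fin m))
    (h : EuclideanSpace ℝ (Fin n) → ℝ) (h' : EuclideanSpace ℝ (Fin n) → EuclideanSpace ℝ (Fin n))
    (g : EuclideanSpace ℝ (Fin n) → ℝ) (ρg γ Lh Lg : ℝ)
    (hρg : 0 < ρg) (hγ0 : 0 < γ) (hγ : γ < 1 / ρg) (hLg : 0 < Lg)
    (hh' : ∀ x, HasGradientAt h (h' x) x)
    (hLh : ∀ x y, ‖h' x - h' y‖ ≤ Lh * ‖x - y‖)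
    (hlsc : LowerSemicontinuous g)
    (hwc : ConvexOn ℝ Set.univ fun x => g x + ρg / 2 * ‖x‖ ^ 2)
    (prox : EuclideanSpace ℝ (Fin n) → EuclideanSpace ℝ (Fin n))
    (hproxmin : ∀ w x, g (prox w) + 1 / (2 * γ) * ‖prox w - w‖ ^ 2
        ≤ g x + 1 / (2 * γ) * ‖x - w‖ ^ 2)
    (hproxuniq : ∀ w x, (∀ y, g x + 1 / (2 * γ) * ‖x - w‖ ^ 2
        ≤ g y + 1 / (2 * γ) * ‖y - w‖ ^ 2) → x = prox w)
    (hlip : ∀ w w', ‖γ⁻¹ • (w - prox w) - γ⁻¹ • (w' - prox w')‖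
        ≤ Lg * ‖prox w - prox w'‖)
    (x z : ℕ → EuclideanSpace ℝ (Fin n)) (lam : ℕ → EuclideanSpace ℝ (Fin m))
    (β : ℕ → ℝ) (hβ : ∀ k, 0 < β k)
    (hx : ∀ k, x (k + 1)
        = prox (z k - γ • (h' (x k) + Matrix.toEuclideanLin A.transpose (lam (k + 1)))))
    (hlam : ∀ k, lam (k + 1) = lam k + β k • (Matrix.toEuclideanLin A (x (k + 1)) - b))
    (σ : ℝ) (hσ : 0 < σ) :
    ∀ k, 1 ≤ k →
      (‖Matrix.toEuclideanLin A.transpose (lam (k + 1) - lam k)‖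
          ≤ (Lg + γ⁻¹) * ‖x (k + 1) - x k‖ + Lh * ‖x k - x (k - 1)‖
            + γ⁻¹ * ‖z k - z (k - 1)‖) ∧
      (b ∈ LinearMap.range (Matrix.toEuclideanLin A) →
        (∀ v ∈ LinearMap.range (Matrix.toEuclideanLin A),
          σ * ‖v‖ ^ 2 ≤ ‖Matrix.toEuclideanLin A.transpose v‖ ^ 2) →
        ‖lam (k + 1) - lam k‖ ^ 2
          ≤ 3 * (γ ^ 2 * σ)⁻¹ * ((γ * Lg + 1) ^ 2 * ‖x (k + 1) - x k‖ ^ 2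
              + γ ^ 2 * Lh ^ 2 * ‖x k - x (k - 1)‖ ^ 2
              + ‖z k - z (k - 1)‖ ^ 2)) := by
  intro k hk
  obtain ⟨j, rfl⟩ : ∃ j, k = j + 1 := ⟨k - 1, (Nat.succ_pred_eq_of_pos hk).symm⟩
  simp only [Nat.add_sub_cancel]
  set T := Matrix.toEuclideanLin A.transpose with hT
  set S := Matrix.toEuclideanLin A with hS
  have hγne : γ ≠ 0 := ne_of_gt hγ0
  have hγinv : (0:ℝ) < γ⁻¹ := inv_pos.mpr hγ0
  have e1 : x (j + 1) = prox (z j - γ • (h' (x j) + T (lam (j + 1)))) := hx j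
  have e2 : x (j + 1 + 1)
      = prox (z (j + 1) - γ • (h' (x (j + 1)) + T (lam (j + 1 + 1)))) := hx (j + 1)
  have hMlip := hlip (z (j + 1) - γ • (h' (x (j + 1)) + T (lam (j + 1 + 1))))
    (z j - γ • (h' (x j) + T (lam (j + 1))))
  rw [← e1, ← e2] at hMlip
  have key : T (lam (j + 1 + 1)) - T (lam (j + 1))
      = γ⁻¹ • (z (j + 1) - z j) - γ⁻¹ • (x (j + 1 + 1) - x (j + 1))
        - (h' (x (j + 1)) - h' (x j))
        - (γ⁻¹ • (z (j + 1) - γ • (h' (x (j + 1)) + T (lam (j + 1 + 1))) - x (j + 1 + 1))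
            - γ⁻¹ • (z j - γ • (h' (x j) + T (lam (j + 1))) - x (j + 1))) := by
    match_scalars <;> field_simp <;> ring
  have n1 : ‖γ⁻¹ • (z (j + 1) - z j)‖ = γ⁻¹ * ‖z (j + 1) - z j‖ := by
    rw [norm_smul, Real.norm_eq_abs, abs_of_pos hγinv]
  have n2 : ‖γ⁻¹ • (x (j + 1 + 1) - x (j + 1))‖ = γ⁻¹ * ‖x (j + 1 + 1) - x (j + 1)‖ := by
    rw [norm_smul, Real.norm_eq_abs, abs_of_pos hγinv]
  have t1 : ‖T (lam (j + 1 + 1)) - T (lam (j + 1))‖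
      ≤ (Lg + γ⁻¹) * ‖x (j + 1 + 1) - x (j + 1)‖ + Lh * ‖x (j + 1) - x j‖
        + γ⁻¹ * ‖z (j + 1) - z j‖ := by
    rw [key]
    refine le_trans (norm_sub4 _ _ _ _) ?_
    rw [n1, n2]
    have := hLh (x (j + 1)) (x j)
    linarith [hMlip]
  constructor
  · rw [map_sub]
    exact t1
  · intro hb hσ'
    obtain ⟨u, hu⟩ := hb
    have hrange : lam (j + 1 + 1) - lam (j + 1) ∈ LinearMap.range S := by
      refine ⟨β (j + 1) • (x (j + 1 + 1) - u), ?_⟩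
      rw [hlam (j + 1), map_smul, map_sub, hu]
      abel
    have h1 := hσ' _ hrange
    have h2 : ‖T (lam (j + 1 + 1) - lam (j + 1))‖ ^ 2
        ≤ ((Lg + γ⁻¹) * ‖x (j + 1 + 1) - x (j + 1)‖ + Lh * ‖x (j + 1) - x j‖
            + γ⁻¹ * ‖z (j + 1) - z j‖) ^ 2 := by
      refine pow_le_pow_left₀ (norm_nonneg _) ?_ 2
      rw [map_sub]; exact t1
    set a := ‖x (j + 1 + 1) - x (j + 1)‖
    set b' := ‖x (j + 1) - x j‖
    set c := ‖z (j + 1) - z j‖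
    have hE : γ * ((Lg + γ⁻¹) * a + Lh * b' + γ⁻¹ * c)
        = (γ * Lg + 1) * a + γ * Lh * b' + c := by
      field_simp
    have h4 : (γ * ((Lg + γ⁻¹) * a + Lh * b' + γ⁻¹ * c)) ^ 2
        ≤ 3 * (((γ * Lg + 1) * a) ^ 2 + (γ * Lh * b') ^ 2 + c ^ 2) := by
      rw [hE]; exact sq3 _ _ _
    have hpos : (0:ℝ) < γ ^ 2 * σ := by positivity
    have h5 : σ * ‖lam (j + 1 + 1) - lam (j + 1)‖ ^ 2
        ≤ ((Lg + γ⁻¹) * a + Lh * b' + γ⁻¹ * c) ^ 2 := h1.trans h2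
    have goal' : (γ ^ 2 * σ) * ‖lam (j + 1 + 1) - lam (j + 1)‖ ^ 2
        ≤ 3 * ((γ * Lg + 1) ^ 2 * a ^ 2 + γ ^ 2 * Lh ^ 2 * b' ^ 2 + c ^ 2) := by
      calc (γ ^ 2 * σ) * ‖lam (j + 1 + 1) - lam (j + 1)‖ ^ 2
          = γ ^ 2 * (σ * ‖lam (j + 1 + 1) - lam (j + 1)‖ ^ 2) := by ring
        _ ≤ γ ^ 2 * ((Lg + γ⁻¹) * a + Lh * b' + γ⁻¹ * c) ^ 2 :=
            mul_le_mul_of_nonneg_left h5 (sq_nonneg γ)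
        _ = (γ * ((Lg + γ⁻¹) * a + Lh * b' + γ⁻¹ * c)) ^ 2 := by ring
        _ ≤ 3 * (((γ * Lg + 1) * a) ^ 2 + (γ * Lh * b') ^ 2 + c ^ 2) := h4
        _ = 3 * ((γ * Lg + 1) ^ 2 * a ^ 2 + γ ^ 2 * Lh ^ 2 * b' ^ 2 + c ^ 2) := by ring
    calc ‖lam (j + 1 + 1) - lam (j + 1)‖ ^ 2
        = (γ ^ 2 * σ)⁻¹ * ((γ ^ 2 * σ) * ‖lam (j + 1 + 1) - lam (j + 1)‖ ^ 2) := by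
          rw [← mul_assoc, inv_mul_cancel₀ hpos.ne', one_mul]
      _ ≤ (γ ^ 2 * σ)⁻¹ * (3 * ((γ * Lg + 1) ^ 2 * a ^ 2 + γ ^ 2 * Lh ^ 2 * b' ^ 2 + c ^ 2)) :=
          mul_le_mul_of_nonneg_left goal' (inv_nonneg.mpr hpos.le)
      _ = 3 * (γ ^ 2 * σ)⁻¹ * ((γ * Lg + 1) ^ 2 * a ^ 2 + γ ^ 2 * Lh ^ 2 * b' ^ 2 + c ^ 2) := by
          ring
end

section
/- Let h : ℝ^n → ℝ be differentiable with L_h-Lipschitz gradient ∇h, let g : ℝ^n → ℝ be lower semicontinuous and ρ_g-weakly convex, let γ ∈ (0, 1/ρ_g), and suppose g has the implicit bounded subgradient property with constant L̂_g > 0. Let sequences (x^k)_{k≥0} in ℝ^n, (z^k)_{k≥0} in ℝ^n, (λ^k)_{k≥0} in ℝ^m and penalty parameters β_k > 0 satisfy, for every k ≥ 0: x^{k+1} = Prox_{γ,g}(z^k − γ(∇h(x^k) + Aᵀλ^{k+1})) and λ^{k+1} = λ^k + β_k(Ax^{k+1} − b). Assume b lies in the column space of A and σ̃ > 0 satisfies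 ‖Aᵀv‖² ≥ σ̃‖v‖² for every v in the column space of A, and set c_{γ,A} := γ²σ̃. Then for every k ≥ 1: ‖λ^{k+1} − λ^k‖² ≤ 4 c_{γ,A}⁻¹ [ 4γ²L̂_g² + ‖x^{k+1} − x^k‖² + γ²L_h²‖x^k − x^{k−1}‖² + ‖z^k − z^{k−1}‖² ]. -/
lemma sq_sum4_aux (p q r s : ℝ) : (p + q + r + s) ^ 2 ≤ 4 * (p ^ 2 + q ^ 2 + r ^ 2 + s ^ 2) := by
  nlinarith [sq_nonneg (p - q), sq_nonneg (p - r), sq_nonneg (p - s), sq_nonneg (q - r),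
    sq_nonneg (q - s), sq_nonneg (r - s)]

/-- Lemma 6(b) (LiMEAL: controlling dual by primal, implicit bounded subgradient case). -/
theorem stmt_7 (n m : ℕ) (A : Matrix (Fin m) (Fin n) ℝ) (b : EuclideanSpace ℝ (Fin m))
    (h : EuclideanSpace ℝ (Fin n) → ℝ) (h' : EuclideanSpace ℝ (Fin n) → EuclideanSpace ℝ (Fin n))
    (g : EuclideanSpace ℝ (Fin n) → ℝ) (ρg γ Lh Lghat : ℝ)
    (hρg : 0 < ρg) (hγ0 : 0 < γ) (hγ : γ < 1 / ρg) (hLg : 0 < Lghat)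
    (hh' : ∀ x, HasGradientAt h (h' x) x)
    (hLh : ∀ x y, ‖h' x - h' y‖ ≤ Lh * ‖x - y‖)
    (hlsc : LowerSemicontinuous g)
    (hwc : ConvexOn ℝ Set.univ fun x => g x + ρg / 2 * ‖x‖ ^ 2)
    (prox : EuclideanSpace ℝ (Fin n) → EuclideanSpace ℝ (Fin n))
    (hproxmin : ∀ w x, g (prox w) + 1 / (2 * γ) * ‖prox w - w‖ ^ 2
        ≤ g x + 1 / (2 * γ) * ‖x - w‖ ^ 2)
    (hproxuniq : ∀ w x, (∀ y, g x + 1 / (2 * γ) * ‖x - w‖ ^ 2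
        ≤ g y + 1 / (2 * γ) * ‖y - w‖ ^ 2) → x = prox w)
    (hbnd : ∀ w, ‖γ⁻¹ • (w - prox w)‖ ≤ Lghat)
    (x z : ℕ → EuclideanSpace ℝ (Fin n)) (lam : ℕ → EuclideanSpace ℝ (Fin m))
    (β : ℕ → ℝ) (hβ : ∀ k, 0 < β k)
    (hx : ∀ k, x (k + 1)
        = prox (z k - γ • (h' (x k) + Matrix.toEuclideanLin A.transpose (lam (k + 1)))))
    (hlam : ∀ k, lam (k + 1) = lam k + β k • (Matrix.toEuclideanLin A (x (k + 1)) - b))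
    (σ : ℝ) (hσ : 0 < σ)
    (hb : b ∈ LinearMap.range (Matrix.toEuclideanLin A))
    (hσA : ∀ v ∈ LinearMap.range (Matrix.toEuclideanLin A),
      σ * ‖v‖ ^ 2 ≤ ‖Matrix.toEuclideanLin A.transpose v‖ ^ 2) :
    ∀ k, 1 ≤ k →
      ‖lam (k + 1) - lam k‖ ^ 2
        ≤ 4 * (γ ^ 2 * σ)⁻¹ * (4 * γ ^ 2 * Lghat ^ 2 + ‖x (k + 1) - x k‖ ^ 2
            + γ ^ 2 * Lh ^ 2 * ‖x k - x (k - 1)‖ ^ 2 + ‖z k - z (k - 1)‖ ^ 2) := by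
  intro k hk
  obtain ⟨j, rfl⟩ : ∃ j, k = j + 1 := ⟨k - 1, (Nat.succ_pred_eq_of_pos hk).symm⟩
  simp only [Nat.add_sub_cancel]
  set Tt : EuclideanSpace ℝ (Fin m) →ₗ[ℝ] EuclideanSpace ℝ (Fin n) :=
    Matrix.toEuclideanLin A.transpose with hTt
  set T : EuclideanSpace ℝ (Fin n) →ₗ[ℝ] EuclideanSpace ℝ (Fin m) :=
    Matrix.toEuclideanLin A with hT
  set v := lam (j + 1 + 1) - lam (j + 1) with hv
  obtain ⟨u, hu⟩ := hb
  have hvrange : v ∈ LinearMap.range T := by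
    refine ⟨β (j + 1) • (x (j + 1 + 1) - u), ?_⟩
    rw [map_smul, map_sub, hu, hv, hlam (j + 1)]
    abel
  have h1 : σ * ‖v‖ ^ 2 ≤ ‖Tt v‖ ^ 2 := hσA v hvrange
  set w1 := z (j + 1) - γ • (h' (x (j + 1)) + Tt (lam (j + 1 + 1))) with hw1
  set w0 := z j - γ • (h' (x j) + Tt (lam (j + 1))) with hw0
  have hx1 : x (j + 1 + 1) = prox w1 := hx (j + 1)
  have hx0 : x (j + 1) = prox w0 := hx j
  have key : γ • Tt v = (z (j + 1) - z j) + (-(γ • (h' (x (j + 1)) - h' (x j))))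
      + (-(w1 - x (j + 1 + 1))) + (-(x (j + 1 + 1) - x (j + 1))) + (-(x (j + 1) - w0)) := by
    rw [hv, map_sub, smul_sub, hw1, hw0]
    simp only [smul_add, smul_sub]
    abel
  have hres : ∀ w' : EuclideanSpace ℝ (Fin n), ‖w' - prox w'‖ ≤ γ * Lghat := by
    intro w'
    have h2 : γ⁻¹ * ‖w' - prox w'‖ ≤ Lghat := by
      simpa [norm_smul, abs_inv, abs_of_pos hγ0] using hbnd w'
    have := mul_le_mul_of_nonneg_left h2 hγ0.le
    rwa [← mul_assoc, mul_inv_cancel₀ hγ0.ne', one_mul] at this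
  have hb1 : ‖w1 - x (j + 1 + 1)‖ ≤ γ * Lghat := by rw [hx1]; exact hres w1
  have hb0 : ‖x (j + 1) - w0‖ ≤ γ * Lghat := by
    rw [norm_sub_rev, hx0]; exact hres w0
  have hLb : ‖γ • (h' (x (j + 1)) - h' (x j))‖ ≤ γ * Lh * ‖x (j + 1) - x j‖ := by
    rw [norm_smul, Real.norm_eq_abs, abs_of_pos hγ0, mul_assoc]
    exact mul_le_mul_of_nonneg_left (hLh _ _) hγ0.le
  have htri : γ * ‖Tt v‖ ≤ 2 * (γ * Lghat) + ‖x (j + 1 + 1) - x (j + 1)‖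
      + γ * Lh * ‖x (j + 1) - x j‖ + ‖z (j + 1) - z j‖ := by
    have hnorm : ‖γ • Tt v‖ = γ * ‖Tt v‖ := by
      rw [norm_smul, Real.norm_eq_abs, abs_of_pos hγ0]
    rw [← hnorm, key]
    have t1 : ‖(z (j + 1) - z j) + (-(γ • (h' (x (j + 1)) - h' (x j))))
        + (-(w1 - x (j + 1 + 1))) + (-(x (j + 1 + 1) - x (j + 1))) + (-(x (j + 1) - w0))‖
        ≤ ‖z (j + 1) - z j‖ + ‖γ • (h' (x (j + 1)) - h' (x j))‖ + ‖w1 - x (j + 1 + 1)‖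
          + ‖x (j + 1 + 1) - x (j + 1)‖ + ‖x (j + 1) - w0‖ := by
      calc ‖(z (j + 1) - z j) + (-(γ • (h' (x (j + 1)) - h' (x j))))
            + (-(w1 - x (j + 1 + 1))) + (-(x (j + 1 + 1) - x (j + 1))) + (-(x (j + 1) - w0))‖
          ≤ ‖(z (j + 1) - z j) + (-(γ • (h' (x (j + 1)) - h' (x j))))
            + (-(w1 - x (j + 1 + 1))) + (-(x (j + 1 + 1) - x (j + 1)))‖
            + ‖-(x (j + 1) - w0)‖ := norm_add_le _ _
        _ ≤ (‖(z (j + 1) - z j) + (-(γ • (h' (x (j + 1)) - h' (x j))))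
            + (-(w1 - x (j + 1 + 1)))‖ + ‖-(x (j + 1 + 1) - x (j + 1))‖)
            + ‖-(x (j + 1) - w0)‖ := by gcongr; exact norm_add_le _ _
        _ ≤ ((‖(z (j + 1) - z j) + (-(γ • (h' (x (j + 1)) - h' (x j))))‖
            + ‖-(w1 - x (j + 1 + 1))‖) + ‖-(x (j + 1 + 1) - x (j + 1))‖)
            + ‖-(x (j + 1) - w0)‖ :=
            by gcongr; exact norm_add_le _ _
        _ ≤ (((‖z (j + 1) - z j‖ + ‖-(γ • (h' (x (j + 1)) - h' (x j)))‖)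
            + ‖-(w1 - x (j + 1 + 1))‖) + ‖-(x (j + 1 + 1) - x (j + 1))‖)
            + ‖-(x (j + 1) - w0)‖ :=
            by gcongr; exact norm_add_le _ _
        _ = ‖z (j + 1) - z j‖ + ‖γ • (h' (x (j + 1)) - h' (x j))‖ + ‖w1 - x (j + 1 + 1)‖
            + ‖x (j + 1 + 1) - x (j + 1)‖ + ‖x (j + 1) - w0‖ := by
            simp only [norm_neg]
    refine t1.trans ?_
    linarith
  have h2 : γ ^ 2 * (σ * ‖v‖ ^ 2) ≤ (γ * ‖Tt v‖) ^ 2 := by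
    rw [mul_pow]
    exact mul_le_mul_of_nonneg_left h1 (sq_nonneg γ)
  have hsq : (γ * ‖Tt v‖) ^ 2 ≤ (2 * (γ * Lghat) + ‖x (j + 1 + 1) - x (j + 1)‖
      + γ * Lh * ‖x (j + 1) - x j‖ + ‖z (j + 1) - z j‖) ^ 2 :=
    pow_le_pow_left₀ (by positivity) htri 2
  have hS := sq_sum4_aux (2 * (γ * Lghat)) ‖x (j + 1 + 1) - x (j + 1)‖
    (γ * Lh * ‖x (j + 1) - x j‖) ‖z (j + 1) - z j‖
  have hE : γ ^ 2 * σ * ‖v‖ ^ 2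
      ≤ 4 * (4 * γ ^ 2 * Lghat ^ 2 + ‖x (j + 1 + 1) - x (j + 1)‖ ^ 2
        + γ ^ 2 * Lh ^ 2 * ‖x (j + 1) - x j‖ ^ 2 + ‖z (j + 1) - z j‖ ^ 2) := by
    have e1 : (2 * (γ * Lghat)) ^ 2 = 4 * γ ^ 2 * Lghat ^ 2 := by ring
    have e2 : (γ * Lh * ‖x (j + 1) - x j‖) ^ 2 = γ ^ 2 * Lh ^ 2 * ‖x (j + 1) - x j‖ ^ 2 := by ring
    have e3 : γ ^ 2 * (σ * ‖v‖ ^ 2) = γ ^ 2 * σ * ‖v‖ ^ 2 := by ring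
    linarith [h2, hsq, hS]
  have hpos : (0:ℝ) < γ ^ 2 * σ := by positivity
  have heq : ‖v‖ ^ 2 = (γ ^ 2 * σ)⁻¹ * (γ ^ 2 * σ * ‖v‖ ^ 2) := by
    rw [← mul_assoc, inv_mul_cancel₀ hpos.ne', one_mul]
  calc ‖v‖ ^ 2 = (γ ^ 2 * σ)⁻¹ * (γ ^ 2 * σ * ‖v‖ ^ 2) := heq
    _ ≤ (γ ^ 2 * σ)⁻¹ * (4 * (4 * γ ^ 2 * Lghat ^ 2 + ‖x (j + 1 + 1) - x (j + 1)‖ ^ 2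
        + γ ^ 2 * Lh ^ 2 * ‖x (j + 1) - x j‖ ^ 2 + ‖z (j + 1) - z j‖ ^ 2)) :=
        mul_le_mul_of_nonneg_left hE (inv_nonneg.mpr hpos.le)
    _ = 4 * (γ ^ 2 * σ)⁻¹ * (4 * γ ^ 2 * Lghat ^ 2 + ‖x (j + 1 + 1) - x (j + 1)‖ ^ 2
        + γ ^ 2 * Lh ^ 2 * ‖x (j + 1) - x j‖ ^ 2 + ‖z (j + 1) - z j‖ ^ 2) := by ring
end

section
/- Let f : ℝ^n → ℝ be lower semicontinuous and ρ-weakly convex, γ ∈ (0, 1/ρ), η ∈ (0, 2), and β_k > 0. Let sequences (x^k)_{k≥0}, (z^k)_{k≥0} in ℝ^n and (λ^k)_{k≥0} in ℝ^m satisfy, for every k ≥ 0: x^{k+1} is a global minimizer of x ↦ P_{β_k}(x, z^k, λ^k); z^{k+1} = z^k − η(z^k − x^{k+1}); λ^{k+1} = λ^k + β_k(Ax^{k+1} − b). Then for every k ≥ 0: P_{β_k}(x^k, z^k, λ^k) − P_{β_{k+1}}(x^{k+1}, z^{k+1}, λ^{k+1}) ≥ ((1 − γρ)/(2γ))‖x^{k+1}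 − x^k‖² + (1/(4γ))(2/η − 1)‖z^{k+1} − z^k‖² + (γη(2 − η)/4)·Φ_k² − ((β_k + β_{k+1} + γη(1 − η/2))/(2β_k²))‖λ^{k+1} − λ^k‖², where Φ_k² := (ηγ)⁻²‖z^k − z^{k+1}‖² + β_k⁻²‖λ^{k+1} − λ^k‖². -/
open scoped RealInnerProductSpace

private lemma sq_expand {E : Type*} [NormedAddCommGroup E] [InnerProductSpace ℝ E]
    (v d : E) (t : ℝ) :
    ‖v + t • d‖ ^ 2 = ‖v‖ ^ 2 + 2 * t * ⟪v, d⟫ + t ^ 2 * ‖d‖ ^ 2 := by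
  rw [norm_add_sq_real, real_inner_smul_right, norm_smul]
  simp [mul_pow, sq_abs]
  ring

private lemma habs_aux : ∀ Dv K : ℝ, 0 ≤ K → (∀ t : ℝ, 0 < t → t ≤ 1 → K - t * K ≤ Dv) →
    K ≤ Dv := by
  intro Dv K hK hall
  by_contra hcon
  push_neg at hcon
  have ht0 : 0 < min 1 ((K - Dv) / (2 * (K + 1))) :=
    lt_min one_pos (div_pos (by linarith) (by linarith))
  have h := hall _ ht0 (min_le_left _ _)
  have h2 : min 1 ((K - Dv) / (2 * (K + 1))) * K ≤ ((K - Dv) / (2 * (K + 1))) * K :=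
    mul_le_mul_of_nonneg_right (min_le_right _ _) hK
  have h3 : ((K - Dv) / (2 * (K + 1))) * K < K - Dv := by
    rw [div_mul_eq_mul_div, div_lt_iff₀ (by linarith)]
    nlinarith
  linarith

/-- One-step strong-convexity bound for the proximal augmented Lagrangian minimizer. -/
private lemma strong_min {E F : Type*} [NormedAddCommGroup E] [InnerProductSpace ℝ E]
    [NormedAddCommGroup F] [InnerProductSpace ℝ F]
    (f : E → ℝ) (T : E →ₗ[ℝ] F) (bb LL : F) (zk : E) (ρ γ βk : ℝ)
    (hγ0 : 0 < γ) (hγρ : γ * ρ < 1) (hβ : 0 < βk)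
    (hwc : ConvexOn ℝ Set.univ fun x => f x + ρ / 2 * ‖x‖ ^ 2)
    (m a : E)
    (hmin : ∀ x', f m + ⟪LL, T m - bb⟫ + βk / 2 * ‖T m - bb‖ ^ 2 + 1 / (2 * γ) * ‖m - zk‖ ^ 2
        ≤ f x' + ⟪LL, T x' - bb⟫ + βk / 2 * ‖T x' - bb‖ ^ 2 + 1 / (2 * γ) * ‖x' - zk‖ ^ 2) :
    f a + ⟪LL, T a - bb⟫ + βk / 2 * ‖T a - bb‖ ^ 2 + 1 / (2 * γ) * ‖a - zk‖ ^ 2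
      - (f m + ⟪LL, T m - bb⟫ + βk / 2 * ‖T m - bb‖ ^ 2 + 1 / (2 * γ) * ‖m - zk‖ ^ 2)
      ≥ (1 / (2 * γ) - ρ / 2) * ‖a - m‖ ^ 2 := by
  have hρinv : 0 ≤ 1 / (2 * γ) - ρ / 2 := by
    have h1 : ρ < 1 / γ := (lt_div_iff₀ hγ0).mpr (by nlinarith)
    have h2 : 1 / (2 * γ) = (1 / γ) / 2 := by ring
    linarith
  -- expansions at the point a
  have EA0 : T a - bb = (T m - bb) + T (a - m) := by rw [map_sub]; abel
  have EA1 : ⟪LL, T a - bb⟫ = ⟪LL, T m - bb⟫ + ⟪LL, T (a - m)⟫ := by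
    rw [EA0, inner_add_right]
  have EA2 : ‖T a - bb‖ ^ 2
      = ‖T m - bb‖ ^ 2 + 2 * ⟪T m - bb, T (a - m)⟫ + ‖T (a - m)‖ ^ 2 := by
    rw [EA0, norm_add_sq_real]
  have EA3 : ‖a - zk‖ ^ 2
      = ‖m - zk‖ ^ 2 + 2 * ⟪m - zk, a - m⟫ + ‖a - m‖ ^ 2 := by
    rw [show a - zk = (m - zk) + (a - m) from by abel, norm_add_sq_real]
  -- the key inequality for each t ∈ (0,1]
  have key : ∀ t : ℝ, 0 < t → t ≤ 1 →
      (1 / (2 * γ) - ρ / 2) * ((1 - t) * ‖a - m‖ ^ 2)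
        ≤ f a + (⟪LL, T m - bb⟫ + ⟪LL, T (a - m)⟫)
            + βk / 2 * (‖T m - bb‖ ^ 2 + 2 * ⟪T m - bb, T (a - m)⟫ + ‖T (a - m)‖ ^ 2)
            + 1 / (2 * γ) * (‖m - zk‖ ^ 2 + 2 * ⟪m - zk, a - m⟫ + ‖a - m‖ ^ 2)
          - (f m + ⟪LL, T m - bb⟫ + βk / 2 * ‖T m - bb‖ ^ 2 + 1 / (2 * γ) * ‖m - zk‖ ^ 2) := by
    intro t ht0 ht1
    have hw : (1 - t) • m + t • a = m + t • (a - m) := by module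
    have hconv := hwc.2 (Set.mem_univ m) (Set.mem_univ a)
      (by linarith : (0:ℝ) ≤ 1 - t) ht0.le (by ring)
    simp only [smul_eq_mul] at hconv
    rw [hw] at hconv
    rw [sq_expand m (a - m) t] at hconv
    rw [show ‖a‖ ^ 2 = ‖m‖ ^ 2 + 2 * ⟪m, a - m⟫ + ‖a - m‖ ^ 2 from by
      conv_lhs => rw [show a = m + (a - m) from by abel]
      rw [norm_add_sq_real]] at hconv
    have hmin' := hmin (m + t • (a - m))
    rw [show T (m + t • (a - m)) - bb = (T m - bb) + t • T (a - m) from by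
        rw [map_add, map_smul]; abel,
      show (m + t • (a - m)) - zk = (m - zk) + t • (a - m) from by abel,
      inner_add_right, real_inner_smul_right,
      sq_expand (T m - bb) (T (a - m)) t,
      sq_expand (m - zk) (a - m) t] at hmin'
    have hpos : 0 ≤ βk * (t * ((1 - t) * ‖T (a - m)‖ ^ 2)) :=
      mul_nonneg hβ.le (mul_nonneg ht0.le (mul_nonneg (by linarith) (sq_nonneg _)))
    have h6 : t * ((1 / (2 * γ) - ρ / 2) * ((1 - t) * ‖a - m‖ ^ 2))
        ≤ t * (f a + (⟪LL, T m - bb⟫ + ⟪LL, T (a - m)⟫)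
            + βk / 2 * (‖T m - bb‖ ^ 2 + 2 * ⟪T m - bb, T (a - m)⟫ + ‖T (a - m)‖ ^ 2)
            + 1 / (2 * γ) * (‖m - zk‖ ^ 2 + 2 * ⟪m - zk, a - m⟫ + ‖a - m‖ ^ 2)
          - (f m + ⟪LL, T m - bb⟫ + βk / 2 * ‖T m - bb‖ ^ 2 + 1 / (2 * γ) * ‖m - zk‖ ^ 2)) := by
      nlinarith [hmin', hconv, hpos]
    exact le_of_mul_le_mul_left h6 ht0
  rw [EA1, EA2, EA3, ge_iff_le]
  refine habs_aux _ _ (mul_nonneg hρinv (sq_nonneg _)) ?_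
  intro t ht0 ht1
  have h := key t ht0 ht1
  nlinarith [h]

/-- `P_β(x, z, λ) = f(x) + ⟨λ, Ax − b⟩ + (β/2)‖Ax − b‖² + (1/(2γ))‖x − z‖²`. -/
noncomputable def Pfun {n m : ℕ} (f : EuclideanSpace ℝ (Fin n) → ℝ)
    (A : Matrix (Fin m) (Fin n) ℝ) (b : EuclideanSpace ℝ (Fin m)) (γ β : ℝ)
    (x z : EuclideanSpace ℝ (Fin n)) (lam : EuclideanSpace ℝ (Fin m)) : ℝ :=
  f x + ⟪lam, Matrix.toEuclideanLin A x - b⟫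
    + β / 2 * ‖Matrix.toEuclideanLin A x - b‖ ^ 2 + 1 / (2 * γ) * ‖x - z‖ ^ 2

/-- Lemma 7 (MEAL: one-step progress). -/
theorem stmt_8 (n m : ℕ) (A : Matrix (Fin m) (Fin n) ℝ) (b : EuclideanSpace ℝ (Fin m))
    (f : EuclideanSpace ℝ (Fin n) → ℝ) (ρ γ η : ℝ)
    (hρ : 0 < ρ) (hγ0 : 0 < γ) (hγ : γ < 1 / ρ) (hη0 : 0 < η) (hη2 : η < 2)
    (hlsc : LowerSemicontinuous f)
    (hwc : ConvexOn ℝ Set.univ fun x => f x + ρ / 2 * ‖x‖ ^ 2)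
    (x z : ℕ → EuclideanSpace ℝ (Fin n)) (lam : ℕ → EuclideanSpace ℝ (Fin m))
    (β : ℕ → ℝ) (hβ : ∀ k, 0 < β k)
    (hxmin : ∀ k x', Pfun f A b γ (β k) (x (k + 1)) (z k) (lam k)
        ≤ Pfun f A b γ (β k) x' (z k) (lam k))
    (hz : ∀ k, z (k + 1) = z k - η • (z k - x (k + 1)))
    (hlam : ∀ k, lam (k + 1) = lam k + β k • (Matrix.toEuclideanLin A (x (k + 1)) - b)) :
    ∀ k : ℕ,
      Pfun f A b γ (β k) (x k) (z k) (lam k)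
          - Pfun f A b γ (β (k + 1)) (x (k + 1)) (z (k + 1)) (lam (k + 1))
        ≥ (1 - γ * ρ) / (2 * γ) * ‖x (k + 1) - x k‖ ^ 2
          + 1 / (4 * γ) * (2 / η - 1) * ‖z (k + 1) - z k‖ ^ 2
          + γ * η * (2 - η) / 4 *
            (((η * γ) ^ 2)⁻¹ * ‖z k - z (k + 1)‖ ^ 2
              + (β k ^ 2)⁻¹ * ‖lam (k + 1) - lam k‖ ^ 2)
          - (β k + β (k + 1) + γ * η * (1 - η / 2)) / (2 * β k ^ 2)
              * ‖lam (k + 1) - lam k‖ ^ 2 := by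
  intro k
  have hγρ' : γ * ρ < 1 := by rwa [lt_div_iff₀ hρ] at hγ
  have h1 := strong_min f (Matrix.toEuclideanLin A) b (lam k) (z k) ρ γ (β k)
    hγ0 hγρ' (hβ k) hwc (x (k + 1)) (x k)
    (fun x' => by simpa only [Pfun] using hxmin k x')
  rw [norm_sub_rev (x k) (x (k + 1))] at h1
  have hz1 : ‖z (k + 1) - z k‖ ^ 2 = η ^ 2 * ‖x (k + 1) - z k‖ ^ 2 := by
    rw [show z (k + 1) - z k = η • (x (k + 1) - z k) from by rw [hz k]; module,
      norm_smul, mul_pow, Real.norm_eq_abs, sq_abs]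
  have hz2 : ‖z k - z (k + 1)‖ ^ 2 = η ^ 2 * ‖x (k + 1) - z k‖ ^ 2 := by
    rw [norm_sub_rev]; exact hz1
  have hz3 : ‖x (k + 1) - z (k + 1)‖ ^ 2 = (1 - η) ^ 2 * ‖x (k + 1) - z k‖ ^ 2 := by
    rw [show x (k + 1) - z (k + 1) = (1 - η) • (x (k + 1) - z k) from by rw [hz k]; module,
      norm_smul, mul_pow, Real.norm_eq_abs, sq_abs]
  have hl2 : ‖lam (k + 1) - lam k‖ ^ 2
      = (β k) ^ 2 * ‖Matrix.toEuclideanLin A (x (k + 1)) - b‖ ^ 2 := by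
    rw [show lam (k + 1) - lam k = β k • (Matrix.toEuclideanLin A (x (k + 1)) - b) from by
        rw [hlam k]; abel,
      norm_smul, mul_pow, Real.norm_eq_abs, sq_abs]
  have hl3 : ⟪lam (k + 1), Matrix.toEuclideanLin A (x (k + 1)) - b⟫
      = ⟪lam k, Matrix.toEuclideanLin A (x (k + 1)) - b⟫
        + β k * ‖Matrix.toEuclideanLin A (x (k + 1)) - b‖ ^ 2 := by
    rw [hlam k, inner_add_left, real_inner_smul_left, real_inner_self_eq_norm_sq]
  have keyid : (1 - γ * ρ) / (2 * γ) * ‖x (k + 1) - x k‖ ^ 2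
      + 1 / (4 * γ) * (2 / η - 1) * (η ^ 2 * ‖x (k + 1) - z k‖ ^ 2)
      + γ * η * (2 - η) / 4 *
          (((η * γ) ^ 2)⁻¹ * (η ^ 2 * ‖x (k + 1) - z k‖ ^ 2)
            + (β k ^ 2)⁻¹ * ((β k) ^ 2 * ‖Matrix.toEuclideanLin A (x (k + 1)) - b‖ ^ 2))
      - (β k + β (k + 1) + γ * η * (1 - η / 2)) / (2 * β k ^ 2)
          * ((β k) ^ 2 * ‖Matrix.toEuclideanLin A (x (k + 1)) - b‖ ^ 2)
      = (1 / (2 * γ) - ρ / 2) * ‖x (k + 1) - x k‖ ^ 2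
        + 1 / (2 * γ) * (1 - (1 - η) ^ 2) * ‖x (k + 1) - z k‖ ^ 2
        - (β k + β (k + 1)) / 2 * ‖Matrix.toEuclideanLin A (x (k + 1)) - b‖ ^ 2 := by
    have hγ' : γ ≠ 0 := hγ0.ne'
    have hη' : η ≠ 0 := hη0.ne'
    have hβ' : β k ≠ 0 := (hβ k).ne'
    field_simp
    ring
  simp only [Pfun]
  rw [hz1, hz2, hz3, hl2, hl3]
  linarith [h1, keyid]
end

section
/- Let f : ℝ^n → ℝ be lower semicontinuous and ρ-weakly convex, γ ∈ (0, 1/ρ), η ∈ (0, 2), and β_k > 0. Let sequences (x^k)_{k≥0}, (z^k)_{k≥0} in ℝ^n, (λ^k)_{k≥0} in ℝ^m, and vectors s^k ∈ ℝ^n satisfy, for every k ≥ 0: P_{β_k}(x^k, z^k, λ^k) ≥ P_{β_k}(x^{k+1}, z^k, λ^k) + ⟨s^k, x^k − x^{k+1}⟩ + ((γ⁻¹ − ρ)/2)‖x^{k+1} − x^k‖²; z^{k+1} = z^k − η(z^k − x^{k+1}); λ^{k+1} = λ^k + β_k(Ax^{k+1} − b). Then for every k ≥ 0: P_{β_k}(x^k,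 z^k, λ^k) − P_{β_{k+1}}(x^{k+1}, z^{k+1}, λ^{k+1}) ≥ ((1 − γρ)/(2γ))‖x^{k+1} − x^k‖² + ⟨s^k, x^k − x^{k+1}⟩ + (1/(4γ))(2/η − 1)‖z^{k+1} − z^k‖² + ((γη/2)(1 − η/2))·Φ_k² − ((β_k + β_{k+1} + γη(1 − η/2))/(2β_k²))‖λ^{k+1} − λ^k‖², where Φ_k² := (ηγ)⁻²‖z^k − z^{k+1}‖² + β_k⁻²‖λ^{k+1} − λ^k‖². -/
open scoped RealInnerProductSpace

/-- Lemma 8 (iMEAL: one-step progress). -/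
theorem stmt_9 (n m : ℕ) (A : Matrix (Fin m) (Fin n) ℝ) (b : EuclideanSpace ℝ (Fin m))
    (f : EuclideanSpace ℝ (Fin n) → ℝ) (ρ γ η : ℝ)
    (hρ : 0 < ρ) (hγ0 : 0 < γ) (hγ : γ < 1 / ρ) (hη0 : 0 < η) (hη2 : η < 2)
    (hlsc : LowerSemicontinuous f)
    (hwc : ConvexOn ℝ Set.univ fun x => f x + ρ / 2 * ‖x‖ ^ 2)
    (x z s : ℕ → EuclideanSpace ℝ (Fin n)) (lam : ℕ → EuclideanSpace ℝ (Fin m))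
    (β : ℕ → ℝ) (hβ : ∀ k, 0 < β k)
    (hxdesc : ∀ k, Pfun f A b γ (β k) (x k) (z k) (lam k)
        ≥ Pfun f A b γ (β k) (x (k + 1)) (z k) (lam k)
          + ⟪s k, x k - x (k + 1)⟫ + (γ⁻¹ - ρ) / 2 * ‖x (k + 1) - x k‖ ^ 2)
    (hz : ∀ k, z (k + 1) = z k - η • (z k - x (k + 1)))
    (hlam : ∀ k, lam (k + 1) = lam k + β k • (Matrix.toEuclideanLin A (x (k + 1)) - b)) :
    ∀ k : ℕ,
      Pfun f A b γ (β k) (x k) (z k) (lam k)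
          - Pfun f A b γ (β (k + 1)) (x (k + 1)) (z (k + 1)) (lam (k + 1))
        ≥ (1 - γ * ρ) / (2 * γ) * ‖x (k + 1) - x k‖ ^ 2
          + ⟪s k, x k - x (k + 1)⟫
          + 1 / (4 * γ) * (2 / η - 1) * ‖z (k + 1) - z k‖ ^ 2
          + γ * η / 2 * (1 - η / 2) *
            (((η * γ) ^ 2)⁻¹ * ‖z k - z (k + 1)‖ ^ 2
              + (β k ^ 2)⁻¹ * ‖lam (k + 1) - lam k‖ ^ 2)
          - (β k + β (k + 1) + γ * η * (1 - η / 2)) / (2 * β k ^ 2)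
              * ‖lam (k + 1) - lam k‖ ^ 2 := by

  intro k
  have hγne : γ ≠ 0 := ne_of_gt hγ0
  have hηne : η ≠ 0 := ne_of_gt hη0
  have hβne : β k ≠ 0 := ne_of_gt (hβ k)
  have h := hxdesc k
  set r : EuclideanSpace ℝ (Fin m) := Matrix.toEuclideanLin A (x (k + 1)) - b with hr
  have e1 : x (k + 1) - z (k + 1) = (1 - η) • (x (k + 1) - z k) := by
    rw [hz k]; module
  have e2 : z (k + 1) - z k = η • (x (k + 1) - z k) := by
    rw [hz k]; module
  have e3 : z k - z (k + 1) = (-η) • (x (k + 1) - z k) := by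
    rw [hz k]; module
  have e4 : lam (k + 1) - lam k = β k • r := by
    rw [hlam k]; module
  have n1 : ‖x (k + 1) - z (k + 1)‖ ^ 2 = (1 - η) ^ 2 * ‖x (k + 1) - z k‖ ^ 2 := by
    rw [e1, norm_smul, mul_pow, Real.norm_eq_abs, sq_abs]
  have n2 : ‖z (k + 1) - z k‖ ^ 2 = η ^ 2 * ‖x (k + 1) - z k‖ ^ 2 := by
    rw [e2, norm_smul, mul_pow, Real.norm_eq_abs, sq_abs]
  have n3 : ‖z k - z (k + 1)‖ ^ 2 = η ^ 2 * ‖x (k + 1) - z k‖ ^ 2 := by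
    rw [e3, norm_smul, mul_pow, Real.norm_eq_abs, sq_abs, neg_pow]
    ring
  have n4 : ‖lam (k + 1) - lam k‖ ^ 2 = β k ^ 2 * ‖r‖ ^ 2 := by
    rw [e4, norm_smul, mul_pow, Real.norm_eq_abs, sq_abs]
  have h4 : ⟪lam (k + 1), r⟫ = ⟪lam k, r⟫ + β k * ‖r‖ ^ 2 := by
    rw [hlam k, inner_add_left, real_inner_smul_left, real_inner_self_eq_norm_sq]
  simp only [Pfun, ← hr] at h ⊢
  rw [n1, n2, n3, n4, h4]
  rw [ge_iff_le, ← sub_nonneg] at h ⊢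
  convert h using 1
  field_simp
  ring
end

section
/- Let h : ℝ^n → ℝ be differentiable with L_h-Lipschitz gradient ∇h, let g : ℝ^n → ℝ be lower semicontinuous and ρ_g-weakly convex, γ ∈ (0, 1/ρ_g), η ∈ (0, 2), and β_k > 0. Let sequences (x^k)_{k≥0}, (z^k)_{k≥0} in ℝ^n and (λ^k)_{k≥0} in ℝ^m satisfy, for every k ≥ 0: x^{k+1} is a global minimizer of x ↦ h(x^k) + ⟨∇h(x^k), x − x^k⟩ + g(x) + ⟨λ^k, Ax − b⟩ + (β_k/2)‖Ax − b‖² + (1/(2γ))‖x − z^k‖²; z^{k+1} = z^k − η(z^k − x^{k+1}); λ^{k+1} = λ^k + β_k(Ax^{k+1} − b). Then for every k ≥ 0: P_{β_k}(x^k, z^k, λ^k) − P_{β_{k+1}}(x^{k+1}, z^{k+1}, λ^{k+1}) ≥ ((1 − γ(ρ_g + L_h))/(2γ) − (γ/4)(2 − η)η L_h²)‖x^{k+1} − x^k‖² + (1/(4γ))(2/η − 1)‖z^{k+1} − z^k‖² + ((γη/4)(1 − η/2))·G_k² − ((β_k + β_{k+1} + γη(1 − η/2))/(2β_k²))‖λ^{k+1}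 − λ^k‖², where G_k² := ‖γ⁻¹(z^k − x^{k+1}) + ∇h(x^{k+1}) − ∇h(x^k)‖² + β_k⁻²‖λ^{k+1} − λ^k‖². -/
open scoped RealInnerProductSpace

set_option maxHeartbeats 1000000

variable {E : Type*} [NormedAddCommGroup E] [InnerProductSpace ℝ E] [CompleteSpace E]

/-- Descent lemma. -/
theorem my_descent (h : E → ℝ) (h' : E → E) (Lh : ℝ)
    (hh' : ∀ x, HasGradientAt h (h' x) x)
    (hLh : ∀ x y, ‖h' x - h' y‖ ≤ Lh * ‖x - y‖) (a a' : E) :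
    h a' ≤ h a + ⟪h' a, a' - a⟫ + Lh / 2 * ‖a' - a‖ ^ 2 := by
  set Δ := a' - a with hΔ
  set q : ℝ → ℝ := fun t => h (a + t • Δ) with hq
  set q' : ℝ → ℝ := fun t => ⟪h' (a + t • Δ), Δ⟫ with hq'
  have hline : ∀ t : ℝ, HasDerivAt (fun s : ℝ => a + s • Δ) Δ t := by
    intro t
    simpa using ((hasDerivAt_id t).smul_const Δ).const_add a
  have hderiv : ∀ t : ℝ, HasDerivAt q (q' t) t := by
    intro t
    have H := ((hh' (a + t • Δ)).hasFDerivAt.comp_hasDerivAt t (hline t))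
    simpa [hq, hq', InnerProductSpace.toDual_apply_apply, Function.comp_def] using H
  have hlip : LipschitzWith (Real.toNNReal Lh) h' := by
    apply LipschitzWith.of_dist_le_mul
    intro p q
    rw [dist_eq_norm, dist_eq_norm]
    calc ‖h' p - h' q‖ ≤ Lh * ‖p - q‖ := hLh p q
      _ ≤ Real.toNNReal Lh * ‖p - q‖ := by
          gcongr
          exact Real.le_coe_toNNReal Lh
  have hcont : Continuous q' := by
    apply Continuous.inner
    · exact hlip.continuous.comp (by continuity)
    · exact continuous_const
  have hftc : ∫ t in (0:ℝ)..1, q' t = q 1 - q 0 := by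
    apply intervalIntegral.integral_eq_sub_of_hasDerivAt
    · intro t _; exact hderiv t
    · exact (hcont.intervalIntegrable 0 1)
  have hbound : ∀ t ∈ Set.Icc (0:ℝ) 1, q' t ≤ q' 0 + Lh * ‖Δ‖ ^ 2 * t := by
    intro t ht
    have h1 : q' t - q' 0 = ⟪h' (a + t • Δ) - h' (a + (0:ℝ) • Δ), Δ⟫ := by
      simp [hq', inner_sub_left]
    have h2 : ‖h' (a + t • Δ) - h' (a + (0:ℝ) • Δ)‖ ≤ Lh * (t * ‖Δ‖) := by
      have := hLh (a + t • Δ) (a + (0:ℝ) • Δ)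
      simpa [norm_smul, abs_of_nonneg ht.1] using this
    have h3 : q' t - q' 0 ≤ Lh * (t * ‖Δ‖) * ‖Δ‖ := by
      rw [h1]
      calc ⟪h' (a + t • Δ) - h' (a + (0:ℝ) • Δ), Δ⟫
          ≤ ‖h' (a + t • Δ) - h' (a + (0:ℝ) • Δ)‖ * ‖Δ‖ := real_inner_le_norm _ _
        _ ≤ Lh * (t * ‖Δ‖) * ‖Δ‖ := by gcongr
    nlinarith [sq_nonneg ‖Δ‖]
  have hint : ∫ t in (0:ℝ)..1, q' t ≤ ∫ t in (0:ℝ)..1, (q' 0 + Lh * ‖Δ‖ ^ 2 * t) := by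
    apply intervalIntegral.integral_mono_on (by norm_num)
    · exact hcont.intervalIntegrable 0 1
    · exact (Continuous.intervalIntegrable (by continuity) 0 1)
    · exact hbound
  have hval : ∫ t in (0:ℝ)..1, (q' 0 + Lh * ‖Δ‖ ^ 2 * t) = q' 0 + Lh * ‖Δ‖ ^ 2 / 2 := by
    rw [intervalIntegral.integral_add (intervalIntegrable_const)
      (((by fun_prop : Continuous fun t:ℝ => Lh * ‖Δ‖ ^ 2 * t)).intervalIntegrable 0 1),
      intervalIntegral.integral_const_mul, integral_id]
    simp
    ring
  have hq1 : q 1 = h a' := by simp [hq, hΔ]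
  have hq0 : q 0 = h a := by simp [hq]
  have hq'0 : q' 0 = ⟪h' a, a' - a⟫ := by simp [hq', hΔ]
  nlinarith [hftc, hint, hval]


variable {E F : Type*} [NormedAddCommGroup E] [InnerProductSpace ℝ E]
  [NormedAddCommGroup F] [InnerProductSpace ℝ F]

lemma my_combo_sq (p q : F) (t : ℝ) :
    ‖(1 - t) • p + t • q‖ ^ 2
      = (1 - t) * ‖p‖ ^ 2 + t * ‖q‖ ^ 2 - t * (1 - t) * ‖p - q‖ ^ 2 := by
  have h1 := real_inner_self_eq_norm_sq ((1 - t) • p + t • q)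
  have h2 := real_inner_self_eq_norm_sq (p - q)
  have h3 := real_inner_self_eq_norm_sq p
  have h4 := real_inner_self_eq_norm_sq q
  simp only [inner_add_left, inner_add_right, inner_sub_left, inner_sub_right,
    real_inner_smul_left, real_inner_smul_right] at h1 h2
  linear_combination (-1 : ℝ) * h1 + (1 - t) * h3 + t * h4 - (t * (1 - t)) * h2

lemma my_strong_min (g : E → ℝ) (ρg γ B : ℝ) (hγ0 : 0 < γ) (hB : 0 < B)
    (hργ : ρg * γ ≤ 1)
    (hwc : ConvexOn ℝ Set.univ fun u => g u + ρg / 2 * ‖u‖ ^ 2)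
    (L : E →ₗ[ℝ] F) (bb : F) (w : E) (l : F) (zz a a' : E)
    (hmin : ∀ u : E, g a' + ⟪w, a'⟫ + ⟪l, L a' - bb⟫ + B / 2 * ‖L a' - bb‖ ^ 2
        + 1 / (2 * γ) * ‖a' - zz‖ ^ 2
      ≤ g u + ⟪w, u⟫ + ⟪l, L u - bb⟫ + B / 2 * ‖L u - bb‖ ^ 2
        + 1 / (2 * γ) * ‖u - zz‖ ^ 2) :
    (g a + ⟪w, a⟫ + ⟪l, L a - bb⟫ + B / 2 * ‖L a - bb‖ ^ 2
        + 1 / (2 * γ) * ‖a - zz‖ ^ 2)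
      - (g a' + ⟪w, a'⟫ + ⟪l, L a' - bb⟫ + B / 2 * ‖L a' - bb‖ ^ 2
        + 1 / (2 * γ) * ‖a' - zz‖ ^ 2)
      ≥ (1 / γ - ρg) / 2 * ‖a - a'‖ ^ 2 := by
  set φ : E → ℝ := fun u => g u + ⟪w, u⟫ + ⟪l, L u - bb⟫ + B / 2 * ‖L u - bb‖ ^ 2
    + 1 / (2 * γ) * ‖u - zz‖ ^ 2 with hφ
  set c : ℝ := φ a - φ a' with hc
  set K : ℝ := (1 / (2 * γ) - ρg / 2) * ‖a - a'‖ ^ 2 + B / 2 * ‖L a - L a'‖ ^ 2 with hK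
  have hmin0 : ∀ u : E, φ a' ≤ φ u := hmin
  have key : ∀ t ∈ Set.Ioo (0:ℝ) 1, (1 - t) * K ≤ c := by
    intro t ht
    set u : E := (1 - t) • a' + t • a with hu
    have hcvx := hwc.2 (Set.mem_univ a') (Set.mem_univ a)
      (by linarith [ht.2] : (0:ℝ) ≤ 1 - t) (le_of_lt ht.1) (by ring)
    simp only [smul_eq_mul] at hcvx
    have hcvx' : g u + ρg / 2 * ‖u‖ ^ 2
        ≤ (1 - t) * (g a' + ρg / 2 * ‖a'‖ ^ 2) + t * (g a + ρg / 2 * ‖a‖ ^ 2) := by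
      rw [hu]; exact hcvx
    have hnu : ‖u‖ ^ 2 = (1 - t) * ‖a'‖ ^ 2 + t * ‖a‖ ^ 2 - t * (1 - t) * ‖a' - a‖ ^ 2 :=
      my_combo_sq a' a t
    have hnz : ‖u - zz‖ ^ 2 = (1 - t) * ‖a' - zz‖ ^ 2 + t * ‖a - zz‖ ^ 2
        - t * (1 - t) * ‖a' - a‖ ^ 2 := by
      have h : u - zz = (1 - t) • (a' - zz) + t • (a - zz) := by
        simp only [hu]; module
      rw [h, my_combo_sq]
      congr 3
      abel
    have hLu : L u - bb = (1 - t) • (L a' - bb) + t • (L a - bb) := by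
      simp only [hu, map_add, map_smul]; module
    have hnL : ‖L u - bb‖ ^ 2 = (1 - t) * ‖L a' - bb‖ ^ 2 + t * ‖L a - bb‖ ^ 2
        - t * (1 - t) * ‖L a' - L a‖ ^ 2 := by
      rw [hLu, my_combo_sq]
      congr 3
      abel
    have hiw : ⟪w, u⟫ = (1 - t) * ⟪w, a'⟫ + t * ⟪w, a⟫ := by
      simp [hu, inner_add_right, real_inner_smul_right]
    have hil : ⟪l, L u - bb⟫ = (1 - t) * ⟪l, L a' - bb⟫ + t * ⟪l, L a - bb⟫ := by
      rw [hLu]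
      simp [inner_add_right, real_inner_smul_right]
    have hsymm : ‖a' - a‖ ^ 2 = ‖a - a'‖ ^ 2 := by rw [← norm_neg]; congr 1; abel
    have hsymL : ‖L a' - L a‖ ^ 2 = ‖L a - L a'‖ ^ 2 := by rw [← norm_neg]; congr 1; abel
    rw [hsymm] at hnu hnz
    rw [hsymL] at hnL
    have ht1 : 0 < t := ht.1
    have hgu : g u ≤ (1 - t) * g a' + t * g a + ρg / 2 * (t * (1 - t) * ‖a - a'‖ ^ 2) := by
      calc g u = (g u + ρg / 2 * ‖u‖ ^ 2) - ρg / 2 * ‖u‖ ^ 2 := by ring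
        _ ≤ ((1 - t) * (g a' + ρg / 2 * ‖a'‖ ^ 2) + t * (g a + ρg / 2 * ‖a‖ ^ 2))
            - ρg / 2 * ‖u‖ ^ 2 := by linarith [hcvx']
        _ = (1 - t) * g a' + t * g a + ρg / 2 * (t * (1 - t) * ‖a - a'‖ ^ 2) := by
            rw [hnu]; ring
    have hφu : φ u ≤ (1 - t) * φ a' + t * φ a - t * (1 - t) * K := by
      simp only [hφ, hK]
      rw [hiw, hil, hnL, hnz]
      linarith [hgu]
    have h5 : t * ((1 - t) * K) ≤ t * (φ a - φ a') := by
      have h6 := hmin0 u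
      linarith [hφu, h6]
    have h7 : (1 - t) * K ≤ φ a - φ a' := le_of_mul_le_mul_left h5 ht1
    exact h7
  have hcoef : 0 ≤ 1 / (2 * γ) - ρg / 2 := by
    have h1 : ρg ≤ 1 / γ := by
      rw [le_div_iff₀ hγ0]; linarith [hργ]
    have h2 : 1 / (2 * γ) = (1 / γ) / 2 := by ring
    linarith
  have hK0 : 0 ≤ K := by
    have h2 : 0 ≤ B / 2 * ‖L a - L a'‖ ^ 2 := by positivity
    have h3 : 0 ≤ (1 / (2 * γ) - ρg / 2) * ‖a - a'‖ ^ 2 :=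
      mul_nonneg hcoef (by positivity)
    rw [hK]; linarith
  have htend : Filter.Tendsto (fun t : ℝ => (1 - t) * K) (nhdsWithin 0 (Set.Ioi 0)) (nhds K) := by
    have hcont : Continuous fun t : ℝ => (1 - t) * K := by continuity
    have h0 := hcont.tendsto 0
    simp only [sub_zero, one_mul] at h0
    exact h0.mono_left nhdsWithin_le_nhds
  have hKc : K ≤ c := by
    refine le_of_tendsto htend ?_
    filter_upwards [Ioo_mem_nhdsGT_of_mem
      (by norm_num : (0:ℝ) ∈ Set.Ico (0:ℝ) 1)] with t ht using key t ht
  have hKge : (1 / γ - ρg) / 2 * ‖a - a'‖ ^ 2 ≤ K := by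
    have h2 : 0 ≤ B / 2 * ‖L a - L a'‖ ^ 2 := by positivity
    have : (1 / γ - ρg) / 2 = 1 / (2 * γ) - ρg / 2 := by
      field_simp
    rw [hK, this]
    linarith
  calc (1 / γ - ρg) / 2 * ‖a - a'‖ ^ 2 ≤ K := hKge
    _ ≤ c := hKc


/-- Lemma 9 (LiMEAL: one-step progress). -/
theorem stmt_10 (n m : ℕ) (A : Matrix (Fin m) (Fin n) ℝ) (b : EuclideanSpace ℝ (Fin m))
    (h : EuclideanSpace ℝ (Fin n) → ℝ)
    (h' : EuclideanSpace ℝ (Fin n) → EuclideanSpace ℝ (Fin n))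
    (g : EuclideanSpace ℝ (Fin n) → ℝ) (ρg γ η Lh : ℝ)
    (hρg : 0 < ρg) (hγ0 : 0 < γ) (hγ : γ < 1 / ρg) (hη0 : 0 < η) (hη2 : η < 2)
    (hh' : ∀ x, HasGradientAt h (h' x) x)
    (hLh : ∀ x y, ‖h' x - h' y‖ ≤ Lh * ‖x - y‖)
    (hlsc : LowerSemicontinuous g)
    (hwc : ConvexOn ℝ Set.univ fun x => g x + ρg / 2 * ‖x‖ ^ 2)
    (x z : ℕ → EuclideanSpace ℝ (Fin n)) (lam : ℕ → EuclideanSpace ℝ (Fin m))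
    (β : ℕ → ℝ) (hβ : ∀ k, 0 < β k)
    (hxmin : ∀ k x',
      h (x k) + ⟪h' (x k), x (k + 1) - x k⟫ + g (x (k + 1))
          + ⟪lam k, Matrix.toEuclideanLin A (x (k + 1)) - b⟫
          + β k / 2 * ‖Matrix.toEuclideanLin A (x (k + 1)) - b‖ ^ 2
          + 1 / (2 * γ) * ‖x (k + 1) - z k‖ ^ 2
        ≤ h (x k) + ⟪h' (x k), x' - x k⟫ + g x'
          + ⟪lam k, Matrix.toEuclideanLin A x' - b⟫
          + β k / 2 * ‖Matrix.toEuclideanLin A x' - b‖ ^ 2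
          + 1 / (2 * γ) * ‖x' - z k‖ ^ 2)
    (hz : ∀ k, z (k + 1) = z k - η • (z k - x (k + 1)))
    (hlam : ∀ k, lam (k + 1) = lam k + β k • (Matrix.toEuclideanLin A (x (k + 1)) - b)) :
    ∀ k : ℕ,
      Pfun (fun a => h a + g a) A b γ (β k) (x k) (z k) (lam k)
          - Pfun (fun a => h a + g a) A b γ (β (k + 1)) (x (k + 1)) (z (k + 1)) (lam (k + 1))
        ≥ ((1 - γ * (ρg + Lh)) / (2 * γ) - γ / 4 * (2 - η) * η * Lh ^ 2)
              * ‖x (k + 1) - x k‖ ^ 2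
          + 1 / (4 * γ) * (2 / η - 1) * ‖z (k + 1) - z k‖ ^ 2
          + γ * η / 4 * (1 - η / 2) *
            (‖γ⁻¹ • (z k - x (k + 1)) + h' (x (k + 1)) - h' (x k)‖ ^ 2
              + (β k ^ 2)⁻¹ * ‖lam (k + 1) - lam k‖ ^ 2)
          - (β k + β (k + 1) + γ * η * (1 - η / 2)) / (2 * β k ^ 2)
              * ‖lam (k + 1) - lam k‖ ^ 2 := by
  intro k
  have hγne : γ ≠ 0 := ne_of_gt hγ0
  have hηne : η ≠ 0 := ne_of_gt hη0
  have hBpos : 0 < β k := hβ k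
  have hBne : β k ≠ 0 := ne_of_gt hBpos
  have hργ : ρg * γ ≤ 1 := by
    rw [lt_div_iff₀ hρg] at hγ
    nlinarith
  set a := x k
  set a' := x (k + 1)
  set zz := z k
  set zz' := z (k + 1)
  set l := lam k
  set l' := lam (k + 1)
  set B := β k
  set B' := β (k + 1)
  set L : EuclideanSpace ℝ (Fin n) →ₗ[ℝ] EuclideanSpace ℝ (Fin m) :=
    Matrix.toEuclideanLin A with hL
  -- strong convexity of subproblem
  have hminφ : ∀ u, g a' + ⟪h' a, a'⟫ + ⟪l, L a' - b⟫ + B / 2 * ‖L a' - b‖ ^ 2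
      + 1 / (2 * γ) * ‖a' - zz‖ ^ 2
    ≤ g u + ⟪h' a, u⟫ + ⟪l, L u - b⟫ + B / 2 * ‖L u - b‖ ^ 2
      + 1 / (2 * γ) * ‖u - zz‖ ^ 2 := by
    intro u
    have H := hxmin k u
    simp only [inner_sub_right] at H ⊢
    linarith
  have hsc := my_strong_min g ρg γ B hγ0 hBpos hργ hwc L b (h' a) l zz a a' hminφ
  have hdesc := my_descent h h' Lh hh' hLh a a'
  -- scalar atoms
  have hsx : ‖a - a'‖ = ‖a' - a‖ := norm_sub_rev _ _
  rw [hsx] at hsc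
  -- z-update identities
  have hz' : zz' = zz - η • (zz - a') := hz k
  have e1 : a' - zz' = (1 - η) • (a' - zz) := by rw [hz']; module
  have e2 : zz' - zz = η • (a' - zz) := by rw [hz']; module
  have n1 : ‖a' - zz'‖ ^ 2 = (1 - η) ^ 2 * ‖a' - zz‖ ^ 2 := by
    rw [e1, norm_smul, mul_pow, Real.norm_eq_abs, sq_abs]
  have n2 : ‖zz' - zz‖ ^ 2 = η ^ 2 * ‖a' - zz‖ ^ 2 := by
    rw [e2, norm_smul, mul_pow, Real.norm_eq_abs, sq_abs]
  -- lambda-update identities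
  have hl' : l' = l + B • (L a' - b) := hlam k
  have m1 : ⟪l', L a' - b⟫ = ⟪l, L a' - b⟫ + B * ‖L a' - b‖ ^ 2 := by
    rw [hl', inner_add_left, real_inner_smul_left, real_inner_self_eq_norm_sq]
  have m2 : ‖l' - l‖ ^ 2 = B ^ 2 * ‖L a' - b‖ ^ 2 := by
    have : l' - l = B • (L a' - b) := by rw [hl']; abel
    rw [this, norm_smul, mul_pow, Real.norm_eq_abs, sq_abs]
  -- the gradient-like vector
  have hvv : γ⁻¹ • (zz - a') + h' a' - h' a
      = γ⁻¹ • (zz - a') + (h' a' - h' a) := by abel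
  have nv : ‖γ⁻¹ • (zz - a')‖ ^ 2 = γ⁻¹ * γ⁻¹ * ‖a' - zz‖ ^ 2 := by
    rw [norm_smul, mul_pow, Real.norm_eq_abs, sq_abs, norm_sub_rev]
    ring
  have bound1 : ‖γ⁻¹ • (zz - a') + (h' a' - h' a)‖ ^ 2
      ≤ 2 * ‖γ⁻¹ • (zz - a')‖ ^ 2 + 2 * ‖h' a' - h' a‖ ^ 2 := by
    have hh := norm_add_le (γ⁻¹ • (zz - a')) (h' a' - h' a)
    nlinarith [norm_nonneg (γ⁻¹ • (zz - a')), norm_nonneg (h' a' - h' a),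
      norm_nonneg (γ⁻¹ • (zz - a') + (h' a' - h' a)),
      sq_nonneg (‖γ⁻¹ • (zz - a')‖ - ‖h' a' - h' a‖)]
  have bound2 : ‖h' a' - h' a‖ ^ 2 ≤ Lh ^ 2 * ‖a' - a‖ ^ 2 := by
    have hh := hLh a' a
    nlinarith [norm_nonneg (h' a' - h' a)]
  -- positivity of the coefficient c'
  have hc'pos : 0 ≤ γ * η / 4 * (1 - η / 2) := by
    have h1 : 0 < 1 - η / 2 := by linarith
    nlinarith [mul_pos (mul_pos hγ0 hη0) h1]
  -- combined bounds with coefficient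
  have hJ6 : γ * η / 4 * (1 - η / 2) * ‖γ⁻¹ • (zz - a') + (h' a' - h' a)‖ ^ 2
      ≤ γ * η / 4 * (1 - η / 2)
        * (2 * (γ⁻¹ * γ⁻¹ * ‖a' - zz‖ ^ 2) + 2 * ‖h' a' - h' a‖ ^ 2) := by
    rw [← nv]
    exact mul_le_mul_of_nonneg_left bound1 hc'pos
  have hJ7 : γ * η / 4 * (1 - η / 2) * (2 * ‖h' a' - h' a‖ ^ 2)
      ≤ γ * η / 4 * (1 - η / 2) * (2 * (Lh ^ 2 * ‖a' - a‖ ^ 2)) := by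
    apply mul_le_mul_of_nonneg_left _ hc'pos
    linarith [bound2]
  -- coefficient identities (clearing inverses)
  have hq1 : γ * η / 4 * (1 - η / 2) * (2 * (γ⁻¹ * γ⁻¹ * ‖a' - zz‖ ^ 2))
      = η * (2 - η) / (4 * γ) * ‖a' - zz‖ ^ 2 := by
    field_simp
  have hq2 : 1 / (4 * γ) * (2 / η - 1) * (η ^ 2 * ‖a' - zz‖ ^ 2)
      = η * (2 - η) / (4 * γ) * ‖a' - zz‖ ^ 2 := by
    field_simp
  have hq3 : γ * η / 4 * (1 - η / 2) * ((B ^ 2)⁻¹ * (B ^ 2 * ‖L a' - b‖ ^ 2))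
      = γ * η / 4 * (1 - η / 2) * ‖L a' - b‖ ^ 2 := by
    field_simp
  have hq4 : (B + B' + γ * η * (1 - η / 2)) / (2 * B ^ 2) * (B ^ 2 * ‖L a' - b‖ ^ 2)
      = (B + B') / 2 * ‖L a' - b‖ ^ 2
        + γ * η / 2 * (1 - η / 2) * ‖L a' - b‖ ^ 2 := by
    field_simp
  have hq5 : (1 - γ * (ρg + Lh)) / (2 * γ) * ‖a' - a‖ ^ 2
      = ((1 / γ - ρg) / 2 - Lh / 2) * ‖a' - a‖ ^ 2 := by
    field_simp
    ring
  have hq6 : 1 / (2 * γ) * ‖a' - zz'‖ ^ 2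
      = 1 / (2 * γ) * ‖a' - zz‖ ^ 2 - 2 * (η * (2 - η) / (4 * γ)) * ‖a' - zz‖ ^ 2 := by
    rw [n1]; field_simp; ring
  have hcR : 0 ≤ γ * η / 4 * (1 - η / 2) * ‖L a' - b‖ ^ 2 :=
    mul_nonneg hc'pos (by positivity)
  -- unfold the goal
  simp only [inner_sub_right] at hdesc
  simp only [Pfun, ← hL, hvv, ge_iff_le]
  rw [n2, m2, hq2]
  linarith [hsc, hdesc, m1, hJ6, hJ7, hq1, hq3, hq4, hq5, hq6, hcR]
end

section
/- Let f : ℝ^n → ℝ be lower semicontinuous and ρ-weakly convex with the implicit Lipschitz subgradient property with constant L_f > 0, let γ ∈ (0, 1/ρ), η ∈ (0, 2), and let β > 0 be a fixed penalty parameter. Assume b lies in the column space of A and σ̃ > 0 satisfies ‖Aᵀv‖² ≥ σ̃‖v‖² for every v in the column space of A; set c_{γ,A} := γ²σ̃ and α := (2β + γη(1 − η/2))/(2c_{γ,A}β²), and assume α < min{ (1 − γρ)/(4γ(1 + γL_f)²), (1/(8γ))(2/η − 1) }. Let (x^k, z^k, λ^k) be MEAL iterates with constant penalty β_k = β and step size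 η, and suppose the sequence E^k := P_β(x^k, z^k, λ^k) + 2α‖z^k − z^{k−1}‖² (k ≥ 1) is bounded below. Then √k · (min_{1≤t≤k} Φ_t) → 0 as k → ∞, where Φ_t := √((ηγ)⁻²‖z^t − z^{t+1}‖² + β⁻²‖λ^{t+1} − λ^t‖²). -/
set_option maxHeartbeats 4000000

open scoped RealInnerProductSpace

lemma combo {E : Type*} [NormedAddCommGroup E] [InnerProductSpace ℝ E] (u v : E) (t : ℝ) :
    ‖(1-t)•u + t•v‖^2 = (1-t)*‖u‖^2 + t*‖v‖^2 - t*(1-t)*‖u-v‖^2 := by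
  simp only [norm_add_sq_real, norm_sub_sq_real, norm_smul, inner_smul_left, inner_smul_right,
    real_inner_self_eq_norm_sq, Real.norm_eq_abs, mul_pow, sq_abs, map_sub, map_one,
    RingHom.id_apply, starRingEnd_apply, star_trivial]
  ring

lemma growth {n m : ℕ} {f : EuclideanSpace ℝ (Fin n) → ℝ}
    {A : Matrix (Fin m) (Fin n) ℝ} {b : EuclideanSpace ℝ (Fin m)} {ρ γ β : ℝ}
    (hγ0 : 0 < γ) (hβ : 0 ≤ β)
    (hwc : ConvexOn ℝ Set.univ fun x => f x + ρ / 2 * ‖x‖ ^ 2)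
    (z : EuclideanSpace ℝ (Fin n)) (lam : EuclideanSpace ℝ (Fin m))
    (xs : EuclideanSpace ℝ (Fin n))
    (hmin : ∀ x', Pfun f A b γ β xs z lam ≤ Pfun f A b γ β x' z lam)
    (x : EuclideanSpace ℝ (Fin n)) :
    Pfun f A b γ β xs z lam + (1/(2*γ) - ρ/2) * ‖x - xs‖^2 ≤ Pfun f A b γ β x z lam := by
  set T := Matrix.toEuclideanLin A with hT
  have key : ∀ t : ℝ, 0 < t → t < 1 →
      (1 - t) * ((1/(2*γ) - ρ/2) * ‖x - xs‖^2)
        ≤ Pfun f A b γ β x z lam - Pfun f A b γ β xs z lam := by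
    intro t ht0 ht1
    set c : EuclideanSpace ℝ (Fin n) := (1-t) • xs + t • x with hc
    have hnorm : ‖xs - x‖^2 = ‖x - xs‖^2 := by rw [norm_sub_rev]
    have hTc : T c = (1-t) • T xs + t • T x := by simp [hc, map_add, map_smul]
    have hb' : T c - b = (1-t) • (T xs - b) + t • (T x - b) := by rw [hTc]; module
    have e1 : ⟪lam, T c - b⟫ = (1-t) * ⟪lam, T xs - b⟫ + t * ⟪lam, T x - b⟫ := by
      rw [hb', inner_add_right, inner_smul_right, inner_smul_right]
    have e2 : ‖T c - b‖^2 = (1-t)*‖T xs - b‖^2 + t*‖T x - b‖^2 - t*(1-t)*‖T (xs - x)‖^2 := by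
      have hd : (T xs - b) - (T x - b) = T (xs - x) := by rw [map_sub]; abel
      rw [hb', combo, hd]
    have e3 : ‖c - z‖^2 = (1-t)*‖xs - z‖^2 + t*‖x - z‖^2 - t*(1-t)*‖x - xs‖^2 := by
      have hb2 : c - z = (1-t) • (xs - z) + t • (x - z) := by rw [hc]; module
      have hd : (xs - z) - (x - z) = xs - x := by abel
      rw [hb2, combo, hd, hnorm]
    have e4 : ‖c‖^2 = (1-t)*‖xs‖^2 + t*‖x‖^2 - t*(1-t)*‖x - xs‖^2 := by
      rw [hc, combo, hnorm]
    have Pc : Pfun f A b γ β c z lam = (f c + ρ/2*‖c‖^2)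
        + ((1-t)*(⟪lam, T xs - b⟫ + β/2*‖T xs - b‖^2 + 1/(2*γ)*‖xs-z‖^2 - ρ/2*‖xs‖^2)
          + t*(⟪lam, T x - b⟫ + β/2*‖T x - b‖^2 + 1/(2*γ)*‖x-z‖^2 - ρ/2*‖x‖^2)
          - t*(1-t)*(β/2*‖T (xs-x)‖^2 + (1/(2*γ) - ρ/2)*‖x-xs‖^2)) := by
      simp only [Pfun, ← hT]
      linear_combination e1 + β/2 * e2 + 1/(2*γ) * e3 - ρ/2 * e4
    have hPxs : Pfun f A b γ β xs z lam
        = f xs + ⟪lam, T xs - b⟫ + β/2*‖T xs - b‖^2 + 1/(2*γ)*‖xs-z‖^2 := by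
      simp only [Pfun, ← hT]
    have hPx : Pfun f A b γ β x z lam
        = f x + ⟪lam, T x - b⟫ + β/2*‖T x - b‖^2 + 1/(2*γ)*‖x-z‖^2 := by
      simp only [Pfun, ← hT]
    have hcv := hwc.2 (Set.mem_univ xs) (Set.mem_univ x) (by linarith : (0:ℝ) ≤ 1 - t)
      (le_of_lt ht0) (by ring : (1:ℝ) - t + t = 1)
    simp only [smul_eq_mul, ← hc] at hcv
    have hm := hmin c
    rw [hPxs, Pc] at hm
    have hpos : 0 ≤ t*(1-t)*(β/2*‖T (xs-x)‖^2) := by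
      have h1t : (0:ℝ) < 1 - t := by linarith
      positivity
    have hstep : t * ((1-t) * ((1/(2*γ) - ρ/2) * ‖x - xs‖^2))
        ≤ t * ((f x + ⟪lam, T x - b⟫ + β/2*‖T x - b‖^2 + 1/(2*γ)*‖x-z‖^2)
            - (f xs + ⟪lam, T xs - b⟫ + β/2*‖T xs - b‖^2 + 1/(2*γ)*‖xs-z‖^2)) := by
      linarith [hm, hcv, hpos]
    rw [hPxs, hPx]
    exact le_of_mul_le_mul_left hstep ht0
  have hlim : Filter.Tendsto (fun j : ℕ => (1 - 1/(j+2:ℝ)) * ((1/(2*γ) - ρ/2) * ‖x - xs‖^2))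
      Filter.atTop (nhds ((1/(2*γ) - ρ/2) * ‖x - xs‖^2)) := by
    have ha : Filter.Tendsto (fun j : ℕ => (j:ℝ)+2) Filter.atTop Filter.atTop :=
      Filter.tendsto_atTop_add_const_right _ 2 tendsto_natCast_atTop_atTop
    have h2 : Filter.Tendsto (fun j : ℕ => 1/((j:ℝ)+2)) Filter.atTop (nhds 0) := by
      simpa [one_div, Function.comp_def] using tendsto_inv_atTop_zero.comp ha
    have h1 : Filter.Tendsto (fun j : ℕ => 1 - 1/((j:ℝ)+2)) Filter.atTop (nhds 1) := by
      simpa using (tendsto_const_nhds.sub h2)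
    simpa using h1.mul_const ((1/(2*γ) - ρ/2) * ‖x - xs‖^2)
  have hev : ∀ j : ℕ, (1 - 1/((j:ℝ)+2)) * ((1/(2*γ) - ρ/2) * ‖x - xs‖^2)
      ≤ Pfun f A b γ β x z lam - Pfun f A b γ β xs z lam := by
    intro j
    have hj2 : (0:ℝ) < (j:ℝ) + 2 := by positivity
    exact key (1/((j:ℝ)+2)) (by positivity) (by rw [div_lt_one hj2]; linarith)
  have := le_of_tendsto hlim (Filter.Eventually.of_forall hev)
  linarith
/-- Theorem 1(a): iteration complexity `o(1/√k)` of MEAL under the implicit Lipschitz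
subgradient assumption. -/
theorem stmt_11 (n m : ℕ) (A : Matrix (Fin m) (Fin n) ℝ) (b : EuclideanSpace ℝ (Fin m))
    (f : EuclideanSpace ℝ (Fin n) → ℝ) (ρ γ η Lf β σ α : ℝ)
    (hρ : 0 < ρ) (hγ0 : 0 < γ) (hγ : γ < 1 / ρ) (hη0 : 0 < η) (hη2 : η < 2)
    (hLf : 0 < Lf) (hβ : 0 < β) (hσ : 0 < σ)
    (hlsc : LowerSemicontinuous f)
    (hwc : ConvexOn ℝ Set.univ fun x => f x + ρ / 2 * ‖x‖ ^ 2)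
    (prox : EuclideanSpace ℝ (Fin n) → EuclideanSpace ℝ (Fin n))
    (hproxmin : ∀ w x, f (prox w) + 1 / (2 * γ) * ‖prox w - w‖ ^ 2
        ≤ f x + 1 / (2 * γ) * ‖x - w‖ ^ 2)
    (hproxuniq : ∀ w x, (∀ y, f x + 1 / (2 * γ) * ‖x - w‖ ^ 2
        ≤ f y + 1 / (2 * γ) * ‖y - w‖ ^ 2) → x = prox w)
    (hlip : ∀ w w', ‖γ⁻¹ • (w - prox w) - γ⁻¹ • (w' - prox w')‖
        ≤ Lf * ‖prox w - prox w'‖)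
    (hb : b ∈ LinearMap.range (Matrix.toEuclideanLin A))
    (hσA : ∀ v ∈ LinearMap.range (Matrix.toEuclideanLin A),
      σ * ‖v‖ ^ 2 ≤ ‖Matrix.toEuclideanLin A.transpose v‖ ^ 2)
    (hαdef : α = (2 * β + γ * η * (1 - η / 2)) / (2 * (γ ^ 2 * σ) * β ^ 2))
    (hα : α < min ((1 - γ * ρ) / (4 * γ * (1 + γ * Lf) ^ 2)) (1 / (8 * γ) * (2 / η - 1)))
    (x z : ℕ → EuclideanSpace ℝ (Fin n)) (lam : ℕ → EuclideanSpace ℝ (Fin m))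
    (hxmin : ∀ k x', Pfun f A b γ β (x (k + 1)) (z k) (lam k)
        ≤ Pfun f A b γ β x' (z k) (lam k))
    (hz : ∀ k, z (k + 1) = z k - η • (z k - x (k + 1)))
    (hlam : ∀ k, lam (k + 1) = lam k + β • (Matrix.toEuclideanLin A (x (k + 1)) - b))
    (hprox : ∀ k, x (k + 1) = prox (z k - γ • Matrix.toEuclideanLin A.transpose (lam (k + 1))))
    (B : ℝ)
    (hB : ∀ k, 1 ≤ k →
      B ≤ Pfun f A b γ β (x k) (z k) (lam k) + 2 * α * ‖z k - z (k - 1)‖ ^ 2) :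
    Filter.Tendsto (fun k : ℕ => Real.sqrt k *
        sInf ((fun t => Real.sqrt (((η * γ) ^ 2)⁻¹ * ‖z t - z (t + 1)‖ ^ 2
            + (β ^ 2)⁻¹ * ‖lam (t + 1) - lam t‖ ^ 2)) '' Set.Icc 1 k))
      Filter.atTop (nhds 0) := by
  have hγne : γ ≠ 0 := ne_of_gt hγ0
  have hηne : η ≠ 0 := ne_of_gt hη0
  have hβne : β ≠ 0 := ne_of_gt hβ
  have hγρ : γ * ρ < 1 := by
    rw [lt_div_iff₀ hρ] at hγ; linarith
  set Φ : ℕ → ℝ := fun t => Real.sqrt (((η * γ) ^ 2)⁻¹ * ‖z t - z (t + 1)‖ ^ 2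
      + (β ^ 2)⁻¹ * ‖lam (t + 1) - lam t‖ ^ 2) with hPhi
  set T := Matrix.toEuclideanLin A with hT
  set Tt := Matrix.toEuclideanLin A.transpose with hTt
  obtain ⟨c, hcdef⟩ : ∃ c : ℝ, c = γ^2*σ := ⟨_, rfl⟩
  rw [show (2 * (γ ^ 2 * σ) * β ^ 2) = 2 * (γ^2*σ) * β^2 from rfl, ← hcdef] at hαdef
  have hc : 0 < c := by rw [hcdef]; positivity
  obtain ⟨Lb, hLbdef⟩ : ∃ l : ℝ, l = 1 + γ*Lf := ⟨_, rfl⟩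
  have hLb : 0 < Lb := by rw [hLbdef]; linarith [mul_pos hγ0 hLf]
  have hα1 : α < (1 - γ*ρ)/(4*γ*Lb^2) := by
    rw [hLbdef]
    exact lt_of_lt_of_le hα (min_le_left _ _)
  have hα2 : α < 1/(8*γ)*(2/η - 1) := lt_of_lt_of_le hα (min_le_right _ _)
  have hαl : 1/(c*β) < α := by
    rw [hαdef, hcdef, div_lt_div_iff₀ (by positivity) (by positivity)]
    have h1 : 0 < γ*η*(1 - η/2) := by
      have : 0 < 1 - η/2 := by linarith
      positivity
    linarith [mul_pos h1 (mul_pos (mul_pos (mul_pos hγ0 hγ0) hσ) hβ)]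
  have hαpos : 0 < α := lt_trans (by positivity) hαl
  have hacb : 1 < α*(c*β) := by
    have := (div_lt_iff₀ (mul_pos hc hβ)).1 hαl
    linarith
  -- the three positive constants
  obtain ⟨e0, he0def⟩ : ∃ e : ℝ, e = 1/(2*γ) - ρ/2 - 2*Lb^2/(c*β) := ⟨_, rfl⟩
  obtain ⟨d1, hd1def⟩ : ∃ d : ℝ, d = 2*α - 2/(c*β) := ⟨_, rfl⟩
  obtain ⟨d2, hd2def⟩ : ∃ d : ℝ, d = (2-η)/(2*γ*η) - 2*α := ⟨_, rfl⟩
  have hd1 : 0 < d1 := by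
    rw [hd1def]
    have : 2/(c*β) < 2*α := by
      rw [div_lt_iff₀ (mul_pos hc hβ)]; linarith [hacb]
    linarith
  have hd2 : 0 < d2 := by
    rw [hd2def]
    have hq : (2-η)/(2*γ*η) = 4*(1/(8*γ)*(2/η - 1)) := by
      field_simp; ring
    rw [hq]; linarith
  have he0 : 0 < e0 := by
    rw [he0def]
    have h1 : 2*Lb^2/(c*β) < 2*Lb^2*α := by
      rw [div_lt_iff₀ (mul_pos hc hβ)]
      linarith [mul_pos (mul_pos hLb hLb) (sub_pos.2 hacb)]
    have h2 : 2*Lb^2*α < (1 - γ*ρ)/(2*γ) := by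
      rw [lt_div_iff₀ (by positivity : (0:ℝ) < 2*γ)]
      have := (lt_div_iff₀ (by positivity : (0:ℝ) < 4*γ*Lb^2)).1 hα1
      linarith
    have h3 : (1-γ*ρ)/(2*γ) = 1/(2*γ) - ρ/2 := by field_simp
    linarith [h2, h1, h3.symm.le]
  -- normalized-index iterate facts
  have hzx : ∀ k, z (k+1) - z k = η • (x (k+1) - z k) := fun k => by rw [hz k]; module
  have hxz2 : ∀ k, x (k+2) - z (k+2) = (1-η) • (x (k+2) - z (k+1)) := fun k => by
    rw [hz (k+1)]; module
  have hzx2 : ∀ k, z (k+2) - z (k+1) = η • (x (k+2) - z (k+1)) := fun k => hzx (k+1)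
  have hlam2 : ∀ k, lam (k+2) = lam (k+1) + β • (T (x (k+2)) - b) := fun k => hlam (k+1)
  have hprox2 : ∀ k, x (k+2) = prox (z (k+1) - γ • Tt (lam (k+2))) := fun k => hprox (k+1)
  -- dual bound
  have hduals : ∀ k, c * ‖lam (k+2) - lam (k+1)‖^2
      ≤ 2*‖z (k+1) - z k‖^2 + 2*Lb^2*‖x (k+2) - x (k+1)‖^2 := by
    intro k
    have hv : lam (k+2) - lam (k+1) = β • (T (x (k+2)) - b) := by rw [hlam2 k]; abel
    have hmem : lam (k+2) - lam (k+1) ∈ LinearMap.range T := by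
      obtain ⟨u, hu⟩ := hb
      refine ⟨β • (x (k+2) - u), ?_⟩
      rw [map_smul, map_sub, hu, hv]
    have hσ' := hσA _ hmem
    have hid : γ • Tt (lam (k+2) - lam (k+1))
        = (z (k+1) - z k) - (x (k+2) - x (k+1))
          - (((z (k+1) - γ • Tt (lam (k+2))) - x (k+2))
            - ((z k - γ • Tt (lam (k+1))) - x (k+1))) := by
      rw [map_sub, smul_sub]; module
    have hlipk := hlip (z (k+1) - γ • Tt (lam (k+2))) (z k - γ • Tt (lam (k+1)))
    rw [← hprox2 k, ← hprox k] at hlipk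
    have hsm : γ • (γ⁻¹ • ((z (k+1) - γ • Tt (lam (k+2))) - x (k+2))
        - γ⁻¹ • ((z k - γ • Tt (lam (k+1))) - x (k+1)))
        = ((z (k+1) - γ • Tt (lam (k+2))) - x (k+2)) - ((z k - γ • Tt (lam (k+1))) - x (k+1)) := by
      rw [smul_sub, smul_inv_smul₀ hγne, smul_inv_smul₀ hγne]
    have hdn : ‖((z (k+1) - γ • Tt (lam (k+2))) - x (k+2)) - ((z k - γ • Tt (lam (k+1))) - x (k+1))‖
        ≤ γ * (Lf * ‖x (k+2) - x (k+1)‖) := by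
      rw [← hsm, norm_smul, Real.norm_eq_abs, abs_of_pos hγ0]
      exact mul_le_mul_of_nonneg_left hlipk hγ0.le
    have htri : ‖γ • Tt (lam (k+2) - lam (k+1))‖
        ≤ ‖z (k+1) - z k‖ + Lb * ‖x (k+2) - x (k+1)‖ := by
      rw [hid]
      calc ‖(z (k+1) - z k) - (x (k+2) - x (k+1))
            - (((z (k+1) - γ • Tt (lam (k+2))) - x (k+2)) - ((z k - γ • Tt (lam (k+1))) - x (k+1)))‖
          ≤ ‖(z (k+1) - z k) - (x (k+2) - x (k+1))‖
            + ‖((z (k+1) - γ • Tt (lam (k+2))) - x (k+2)) - ((z k - γ • Tt (lam (k+1))) - x (k+1))‖ :=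
            norm_sub_le _ _
        _ ≤ (‖z (k+1) - z k‖ + ‖x (k+2) - x (k+1)‖) + γ * (Lf * ‖x (k+2) - x (k+1)‖) :=
            add_le_add (norm_sub_le _ _) hdn
        _ = ‖z (k+1) - z k‖ + Lb * ‖x (k+2) - x (k+1)‖ := by rw [hLbdef]; ring
    have h1 : ‖γ • Tt (lam (k+2) - lam (k+1))‖^2
        ≤ (‖z (k+1) - z k‖ + Lb * ‖x (k+2) - x (k+1)‖)^2 :=
      pow_le_pow_left₀ (norm_nonneg _) htri 2
    have h2 : ‖γ • Tt (lam (k+2) - lam (k+1))‖^2 = γ^2 * ‖Tt (lam (k+2) - lam (k+1))‖^2 := by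
      rw [norm_smul, mul_pow, Real.norm_eq_abs, sq_abs]
    have h3 := mul_le_mul_of_nonneg_left hσ' (sq_nonneg γ)
    rw [hcdef]
    linarith [h1, h2, h3, sq_nonneg (‖z (k+1) - z k‖ - Lb * ‖x (k+2) - x (k+1)‖)]
  -- one-step descent
  have descent : ∀ k,
      Pfun f A b γ β (x (k+2)) (z (k+2)) (lam (k+2)) + 2*α*‖z (k+2) - z (k+1)‖^2
        + d1*‖z (k+1) - z k‖^2 + d2*‖z (k+2) - z (k+1)‖^2 + e0*‖x (k+2) - x (k+1)‖^2
      ≤ Pfun f A b γ β (x (k+1)) (z (k+1)) (lam (k+1)) + 2*α*‖z (k+1) - z k‖^2 := by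
    intro k
    have hq1 : ‖x (k+2) - z (k+2)‖^2 = (1-η)^2 * ‖x (k+2) - z (k+1)‖^2 := by
      rw [hxz2 k, norm_smul, mul_pow, Real.norm_eq_abs, sq_abs]
    have hq2 : ‖z (k+2) - z (k+1)‖^2 = η^2 * ‖x (k+2) - z (k+1)‖^2 := by
      rw [hzx2 k, norm_smul, mul_pow, Real.norm_eq_abs, sq_abs]
    have hzup : Pfun f A b γ β (x (k+2)) (z (k+2)) (lam (k+2))
        + (2-η)/(2*γ*η) * ‖z (k+2) - z (k+1)‖^2
        = Pfun f A b γ β (x (k+2)) (z (k+1)) (lam (k+2)) := by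
      have hsc : 1/(2*γ)*((1-η)^2*‖x (k+2) - z (k+1)‖^2)
          + (2-η)/(2*γ*η)*(η^2*‖x (k+2) - z (k+1)‖^2)
          = 1/(2*γ)*‖x (k+2) - z (k+1)‖^2 := by
        field_simp
        ring
      simp only [Pfun, ← hT]
      rw [hq1, hq2]
      linarith [hsc]
    have hlupv : ⟪lam (k+2), T (x (k+2)) - b⟫
        = ⟪lam (k+1), T (x (k+2)) - b⟫ + β * ‖T (x (k+2)) - b‖^2 := by
      rw [hlam2 k, inner_add_left, real_inner_smul_left, real_inner_self_eq_norm_sq]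
    have hv : lam (k+2) - lam (k+1) = β • (T (x (k+2)) - b) := by rw [hlam2 k]; abel
    have hDl : ‖lam (k+2) - lam (k+1)‖^2 = β^2 * ‖T (x (k+2)) - b‖^2 := by
      rw [hv, norm_smul, mul_pow, Real.norm_eq_abs, sq_abs]
    have hlup : Pfun f A b γ β (x (k+2)) (z (k+1)) (lam (k+2))
        = Pfun f A b γ β (x (k+2)) (z (k+1)) (lam (k+1)) + 1/β * ‖lam (k+2) - lam (k+1)‖^2 := by
      have hsc : 1/β*(β^2*‖T (x (k+2)) - b‖^2) = β*‖T (x (k+2)) - b‖^2 := by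
        field_simp
      simp only [Pfun, ← hT]
      rw [hDl, hlupv]
      linarith [hsc]
    have hgrow := growth hγ0 hβ.le hwc (z (k+1)) (lam (k+1)) (x (k+2))
      (fun x' => hxmin (k+1) x') (x (k+1))
    rw [norm_sub_rev (x (k+1)) (x (k+2))] at hgrow
    have hd := hduals k
    have hdual' : 1/β * ‖lam (k+2) - lam (k+1)‖^2
        ≤ 2/(c*β) * ‖z (k+1) - z k‖^2 + 2*Lb^2/(c*β) * ‖x (k+2) - x (k+1)‖^2 := by
      have h3 := (div_le_div_iff_of_pos_right (mul_pos hc hβ)).2 hd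
      have e1 : (c * ‖lam (k+2) - lam (k+1)‖^2)/(c*β) = 1/β * ‖lam (k+2) - lam (k+1)‖^2 := by
        field_simp
      have e2 : (2*‖z (k+1) - z k‖^2 + 2*Lb^2*‖x (k+2) - x (k+1)‖^2)/(c*β)
          = 2/(c*β) * ‖z (k+1) - z k‖^2 + 2*Lb^2/(c*β) * ‖x (k+2) - x (k+1)‖^2 := by ring
      rw [e1, e2] at h3
      exact h3
    rw [hd1def, hd2def, he0def]
    linarith [hzup, hlup, hgrow, hdual']
  -- Lyapunov sequence
  obtain ⟨F, hFdef⟩ : ∃ F : ℕ → ℝ, F = fun k => Pfun f A b γ β (x (k+1)) (z (k+1)) (lam (k+1))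
      + 2*α*‖z (k+1) - z k‖^2 := ⟨_, rfl⟩
  have hFd : ∀ k, F (k+1) + d1*‖z (k+1) - z k‖^2 + d2*‖z (k+2) - z (k+1)‖^2
      + e0*‖x (k+2) - x (k+1)‖^2 ≤ F k := fun k => by
    simp only [hFdef]
    exact descent k
  have hsq : ∀ (v : EuclideanSpace ℝ (Fin n)), (0:ℝ) ≤ ‖v‖^2 := fun v => by positivity
  have hanti : Antitone F := antitone_nat_of_succ_le (fun k => by
    have h := hFd k
    linarith [mul_nonneg hd1.le (hsq (z (k+1) - z k)), mul_nonneg hd2.le (hsq (z (k+2) - z (k+1))),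
      mul_nonneg he0.le (hsq (x (k+2) - x (k+1)))])
  have hFB : ∀ k, B ≤ F k := by
    intro k
    have h := hB (k+1) (Nat.le_add_left 1 k)
    simpa [hFdef, Nat.add_sub_cancel] using h
  have hbdd : BddBelow (Set.range F) := ⟨B, by rintro y ⟨k, rfl⟩; exact hFB k⟩
  obtain ⟨L, hLdef⟩ : ∃ L : ℝ, L = ⨅ i, F i := ⟨_, rfl⟩
  have hFL : Filter.Tendsto F Filter.atTop (nhds L) := by
    rw [hLdef]; exact tendsto_atTop_ciInf hanti hbdd
  have hLF : ∀ k, L ≤ F k := fun k => by rw [hLdef]; exact ciInf_le hbdd k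
  -- the quantity under the square root
  obtain ⟨G, hGdef⟩ : ∃ G : ℕ → ℝ, G = fun t => ((η * γ) ^ 2)⁻¹ * ‖z t - z (t + 1)‖ ^ 2
      + (β ^ 2)⁻¹ * ‖lam (t + 1) - lam t‖ ^ 2 := ⟨_, rfl⟩
  have hPhiG : ∀ t, Φ t = Real.sqrt (G t) := fun t => by rw [hPhi, hGdef]
  have hG0 : ∀ t, 0 ≤ G t := fun t => by simp only [hGdef]; positivity
  obtain ⟨K, hKdef⟩ : ∃ K : ℝ, K = ((η*γ)^2)⁻¹/d2 + (2/(c*β^2))/d1 + (2*Lb^2/(c*β^2))/e0 :=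
    ⟨_, rfl⟩
  have hK0 : 0 ≤ K := by
    rw [hKdef]
    have h1 : (0:ℝ) ≤ ((η*γ)^2)⁻¹/d2 := div_nonneg (by positivity) hd2.le
    have h2 : (0:ℝ) ≤ (2/(c*β^2))/d1 := div_nonneg (by positivity) hd1.le
    have h3 : (0:ℝ) ≤ (2*Lb^2/(c*β^2))/e0 := div_nonneg (by positivity) he0.le
    linarith
  have hGb : ∀ k, G (k+1) ≤ K * (F k - F (k+1)) := by
    intro k
    have hd := hduals k
    have hcb2 : (0:ℝ) < c * β^2 := by positivity
    have hlb2 : (β^2)⁻¹ * ‖lam (k+2) - lam (k+1)‖^2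
        ≤ 2/(c*β^2) * ‖z (k+1) - z k‖^2 + 2*Lb^2/(c*β^2) * ‖x (k+2) - x (k+1)‖^2 := by
      have h3 := (div_le_div_iff_of_pos_right hcb2).2 hd
      have e1 : (c * ‖lam (k+2) - lam (k+1)‖^2)/(c*β^2) = (β^2)⁻¹ * ‖lam (k+2) - lam (k+1)‖^2 := by
        field_simp
      have e2 : (2*‖z (k+1) - z k‖^2 + 2*Lb^2*‖x (k+2) - x (k+1)‖^2)/(c*β^2)
          = 2/(c*β^2) * ‖z (k+1) - z k‖^2 + 2*Lb^2/(c*β^2) * ‖x (k+2) - x (k+1)‖^2 := by ring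
      rw [e1, e2] at h3
      exact h3
    have hK1 : ((η*γ)^2)⁻¹ ≤ K * d2 := by
      have hle : ((η*γ)^2)⁻¹/d2 ≤ K := by
        rw [hKdef]
        have h2 : (0:ℝ) ≤ (2/(c*β^2))/d1 := div_nonneg (by positivity) hd1.le
        have h3 : (0:ℝ) ≤ (2*Lb^2/(c*β^2))/e0 := div_nonneg (by positivity) he0.le
        linarith
      have := mul_le_mul_of_nonneg_right hle hd2.le
      rwa [div_mul_cancel₀ _ hd2.ne'] at this
    have hK2 : 2/(c*β^2) ≤ K * d1 := by
      have hle : (2/(c*β^2))/d1 ≤ K := by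
        rw [hKdef]
        have h1 : (0:ℝ) ≤ ((η*γ)^2)⁻¹/d2 := div_nonneg (by positivity) hd2.le
        have h3 : (0:ℝ) ≤ (2*Lb^2/(c*β^2))/e0 := div_nonneg (by positivity) he0.le
        linarith
      have := mul_le_mul_of_nonneg_right hle hd1.le
      rwa [div_mul_cancel₀ _ hd1.ne'] at this
    have hK3 : 2*Lb^2/(c*β^2) ≤ K * e0 := by
      have hle : (2*Lb^2/(c*β^2))/e0 ≤ K := by
        rw [hKdef]
        have h1 : (0:ℝ) ≤ ((η*γ)^2)⁻¹/d2 := div_nonneg (by positivity) hd2.le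
        have h2 : (0:ℝ) ≤ (2/(c*β^2))/d1 := div_nonneg (by positivity) hd1.le
        linarith
      have := mul_le_mul_of_nonneg_right hle he0.le
      rwa [div_mul_cancel₀ _ he0.ne'] at this
    have hFdk := hFd k
    have ha1 : ((η*γ)^2)⁻¹ * ‖z (k+2) - z (k+1)‖^2 ≤ (K*d2) * ‖z (k+2) - z (k+1)‖^2 :=
      mul_le_mul_of_nonneg_right hK1 (hsq _)
    have ha2 : 2/(c*β^2) * ‖z (k+1) - z k‖^2 ≤ (K*d1) * ‖z (k+1) - z k‖^2 :=
      mul_le_mul_of_nonneg_right hK2 (hsq _)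
    have ha3 : 2*Lb^2/(c*β^2) * ‖x (k+2) - x (k+1)‖^2 ≤ (K*e0) * ‖x (k+2) - x (k+1)‖^2 :=
      mul_le_mul_of_nonneg_right hK3 (hsq _)
    have hGv : G (k+1) = ((η*γ)^2)⁻¹ * ‖z (k+2) - z (k+1)‖^2
        + (β^2)⁻¹ * ‖lam (k+2) - lam (k+1)‖^2 := by
      have h0 : G (k+1) = ((η*γ)^2)⁻¹ * ‖z (k+1) - z (k+2)‖^2
          + (β^2)⁻¹ * ‖lam (k+2) - lam (k+1)‖^2 := by
        rw [hGdef]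
      rw [h0, norm_sub_rev (z (k+1)) (z (k+2))]
    have hsum3 : d1*‖z (k+1) - z k‖^2 + d2*‖z (k+2) - z (k+1)‖^2
        + e0*‖x (k+2) - x (k+1)‖^2 ≤ F k - F (k+1) := by linarith [hFdk]
    have hKF := mul_le_mul_of_nonneg_left hsum3 hK0
    rw [hGv]
    linarith [hlb2, ha1, ha2, ha3, hKF]
  -- final convergence argument
  have key : ∀ k : ℕ, 1 ≤ k → Real.sqrt k * sInf (Φ '' Set.Icc 1 k)
      ≤ Real.sqrt (2*K*(F (k/2) - L)) := by
    intro k hk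
    have hNpos : 0 < k - k/2 := by omega
    set N := k - k/2 with hN
    have hsum : ∑ i ∈ Finset.range N, G (k/2 + i + 1) ≤ K * (F (k/2) - L) := by
      have hstep : ∑ i ∈ Finset.range N, G (k/2 + i + 1)
          ≤ ∑ i ∈ Finset.range N, K * (F (k/2 + i) - F (k/2 + i + 1)) :=
        Finset.sum_le_sum (fun i _ => hGb (k/2 + i))
      have htel : ∑ i ∈ Finset.range N, K * (F (k/2 + i) - F (k/2 + i + 1))
          = K * (F (k/2) - F (k/2 + N)) := by
        rw [← Finset.mul_sum]
        congr 1
        have := Finset.sum_range_sub' (fun i => F (k/2 + i)) N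
        simpa [add_assoc] using this
      have hlast : K * (F (k/2) - F (k/2 + N)) ≤ K * (F (k/2) - L) :=
        mul_le_mul_of_nonneg_left (by linarith [hLF (k/2 + N)]) hK0
      linarith [hstep, htel.le, htel.ge, hlast]
    have hex : ∃ i, i < N ∧ (N:ℝ) * G (k/2 + i + 1) ≤ K * (F (k/2) - L) := by
      by_contra hcon
      push_neg at hcon
      have hne : (Finset.range N).Nonempty := Finset.nonempty_range_iff.2 (by omega)
      have h1 := Finset.sum_lt_sum_of_nonempty hne
        (fun i hi => hcon i (Finset.mem_range.1 hi))
      rw [Finset.sum_const, Finset.card_range, nsmul_eq_mul, ← Finset.mul_sum] at h1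
      have h2 : (N:ℝ) * ∑ i ∈ Finset.range N, G (k/2 + i + 1) ≤ (N:ℝ) * (K * (F (k/2) - L)) :=
        mul_le_mul_of_nonneg_left hsum (Nat.cast_nonneg N)
      linarith
    obtain ⟨i, hiN, hGi⟩ := hex
    have ht1 : 1 ≤ k/2 + i + 1 := by omega
    have htk : k/2 + i + 1 ≤ k := by omega
    have hmem : Φ (k/2 + i + 1) ∈ Φ '' Set.Icc 1 k := ⟨k/2 + i + 1, ⟨ht1, htk⟩, rfl⟩
    have hbdd2 : BddBelow (Φ '' Set.Icc 1 k) := by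
      refine ⟨0, ?_⟩
      rintro y ⟨s, _, rfl⟩
      rw [hPhi]
      exact Real.sqrt_nonneg _
    have hInf_le : sInf (Φ '' Set.Icc 1 k) ≤ Φ (k/2 + i + 1) := csInf_le hbdd2 hmem
    have hInf0 : 0 ≤ sInf (Φ '' Set.Icc 1 k) := Real.sInf_nonneg (by
      rintro y ⟨s, _, rfl⟩
      rw [hPhi]
      exact Real.sqrt_nonneg _)
    have hkG : (k:ℝ) * G (k/2 + i + 1) ≤ 2*K*(F (k/2) - L) := by
      have hk2N : (k:ℝ) ≤ 2*(N:ℝ) := by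
        have : k ≤ 2*N := by omega
        exact_mod_cast this
      have h5 : (k:ℝ) * G (k/2 + i + 1) ≤ 2*(N:ℝ) * G (k/2 + i + 1) :=
        mul_le_mul_of_nonneg_right hk2N (hG0 _)
      linarith
    calc Real.sqrt k * sInf (Φ '' Set.Icc 1 k)
        ≤ Real.sqrt k * Φ (k/2 + i + 1) :=
          mul_le_mul_of_nonneg_left hInf_le (Real.sqrt_nonneg _)
      _ = Real.sqrt ((k:ℝ) * G (k/2 + i + 1)) := by
          rw [hPhiG, ← Real.sqrt_mul (Nat.cast_nonneg k)]
      _ ≤ Real.sqrt (2*K*(F (k/2) - L)) := Real.sqrt_le_sqrt hkG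
  have hg0 : Filter.Tendsto (fun k : ℕ => Real.sqrt (2*K*(F (k/2) - L)))
      Filter.atTop (nhds 0) := by
    have hdiv : Filter.Tendsto (fun k : ℕ => k/2) Filter.atTop Filter.atTop :=
      Filter.tendsto_atTop_atTop.2 (fun b => ⟨2*b, fun a ha => by omega⟩)
    have h1 : Filter.Tendsto (fun k : ℕ => F (k/2)) Filter.atTop (nhds L) := hFL.comp hdiv
    have h2 : Filter.Tendsto (fun k : ℕ => 2*K*(F (k/2) - L)) Filter.atTop (nhds 0) := by
      have := (h1.sub_const L).const_mul (2*K)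
      simpa using this
    have h3 := (Real.continuous_sqrt.tendsto 0).comp h2
    simpa [Function.comp_def] using h3
  apply squeeze_zero (g := fun k : ℕ => Real.sqrt (2*K*(F (k/2) - L)))
  · intro k
    exact mul_nonneg (Real.sqrt_nonneg _) (Real.sInf_nonneg (by
      rintro y ⟨s, _, rfl⟩
      rw [hPhi]
      exact Real.sqrt_nonneg _))
  · intro k
    match k with
    | 0 =>
      have he : Set.Icc 1 0 = (∅ : Set ℕ) := Set.Icc_eq_empty (by omega)
      rw [he]
      simp only [Set.image_empty, Real.sInf_empty, mul_zero]
      exact Real.sqrt_nonneg _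
    | (k+1) => exact key (k+1) (Nat.le_add_left 1 k)
  · exact hg0
end

section
/- Let f : ℝ^n → ℝ be lower semicontinuous and ρ-weakly convex with the implicit bounded subgradient property with constant L̂_f > 0, let γ ∈ (0, 1/ρ), η ∈ (0, 2), and fix an integer K ≥ 1. Assume b lies in the column space of A and σ̃ > 0 satisfies ‖Aᵀv‖² ≥ σ̃‖v‖² for every v in the column space of A; set c_{γ,A} := γ²σ̃. Let (x^k, z^k, λ^k) be MEAL iterates with penalty parameters β_k > 0 chosen so that α_k := (β_k + β_{k+1} + γη(1 − η/2))/(2c_{γ,A}β_k²) = α*/K for every k, where 0 < α* ≤ min{ (1 − ργ)/(6γ), (1/(12γ))(2/η − 1) }. Suppose Ẽ^k := P_{β_k}(x^k, z^k, λ^k) + 3α_k‖z^k − z^{k−1}‖² ≥ E* for all 1 ≤ k ≤ K + 1. Then min_{1≤t≤K} Φ_t ≤ √( (Ẽ¹ − E* + 12γ²L̂_f²α*) / ((γη/2)(1 − η/2)) ) / √K, where Φ_t := √((ηγ)⁻²‖z^t − z^{t+1}‖² + β_t⁻²‖λ^{t+1} − λ^t‖²). -/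
open scoped RealInnerProductSpace

lemma combo_norm {E : Type*} [NormedAddCommGroup E] [InnerProductSpace ℝ E] (p q a : E) (t : ℝ) :
    ‖p + t • (q - p) - a‖ ^ 2
      = (1 - t) * ‖p - a‖ ^ 2 + t * ‖q - a‖ ^ 2 - t * (1 - t) * ‖q - p‖ ^ 2 := by
  have h1 : p + t • (q - p) - a = (p - a) + t • (q - p) := by abel
  have h2 : q - a = (p - a) + (q - p) := by abel
  rw [h1, h2, norm_add_sq_real, norm_add_sq_real, real_inner_smul_right, norm_smul]
  rw [Real.norm_eq_abs, mul_pow, sq_abs]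
  ring

lemma sq_smul_norm {E : Type*} [NormedAddCommGroup E] [NormedSpace ℝ E] (t : ℝ) (v : E) :
    ‖t • v‖ ^ 2 = t ^ 2 * ‖v‖ ^ 2 := by
  rw [norm_smul, Real.norm_eq_abs, mul_pow, sq_abs]

set_option maxHeartbeats 2000000 in
lemma strong_min_s12 {n m : ℕ} (f : EuclideanSpace ℝ (Fin n) → ℝ)
    (A : Matrix (Fin m) (Fin n) ℝ) (b : EuclideanSpace ℝ (Fin m)) (γ βk ρ : ℝ)
    (hγ0 : 0 < γ) (hβ : 0 < βk) (hργ : ρ * γ ≤ 1)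
    (hwc : ConvexOn ℝ Set.univ fun x => f x + ρ / 2 * ‖x‖ ^ 2)
    (z xs : EuclideanSpace ℝ (Fin n)) (lam : EuclideanSpace ℝ (Fin m))
    (hmin : ∀ x', Pfun f A b γ βk xs z lam ≤ Pfun f A b γ βk x' z lam)
    (x' : EuclideanSpace ℝ (Fin n)) :
    Pfun f A b γ βk xs z lam + (1 - ρ * γ) / (2 * γ) * ‖x' - xs‖ ^ 2
      ≤ Pfun f A b γ βk x' z lam := by
  set AL := Matrix.toEuclideanLin A with hAL
  have hD0 : (0:ℝ) ≤ ‖x' - xs‖ ^ 2 := sq_nonneg _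
  set C : ℝ := (1 - ρ * γ) / (2 * γ) * ‖x' - xs‖ ^ 2 with hC
  have hC0 : 0 ≤ C := mul_nonneg (div_nonneg (by linarith) (by linarith)) hD0
  have key : ∀ t : ℝ, 0 < t → t ≤ 1 →
      Pfun f A b γ βk xs z lam + C ≤ Pfun f A b γ βk x' z lam + t * C := by
    intro t ht0 ht1
    set u := xs + t • (x' - xs) with hu
    have hmin' := hmin u
    have hcvx := hwc.2 (Set.mem_univ xs) (Set.mem_univ x')
      (by linarith : (0:ℝ) ≤ 1 - t) (le_of_lt ht0) (by ring)
    have hucombo : (1 - t) • xs + t • x' = u := by rw [hu]; module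
    rw [hucombo] at hcvx
    simp only [smul_eq_mul] at hcvx
    have hn1 : ‖u‖ ^ 2 = (1 - t) * ‖xs‖ ^ 2 + t * ‖x'‖ ^ 2 - t * (1 - t) * ‖x' - xs‖ ^ 2 := by
      have := combo_norm xs x' 0 t
      simpa using this
    have hn2 : ‖u - z‖ ^ 2
        = (1 - t) * ‖xs - z‖ ^ 2 + t * ‖x' - z‖ ^ 2 - t * (1 - t) * ‖x' - xs‖ ^ 2 :=
      combo_norm xs x' z t
    have hAu : AL u = AL xs + t • (AL x' - AL xs) := by
      rw [hu]; simp [map_add, map_smul, map_sub]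
    have hn3 : ‖AL u - b‖ ^ 2
        = (1 - t) * ‖AL xs - b‖ ^ 2 + t * ‖AL x' - b‖ ^ 2
          - t * (1 - t) * ‖AL x' - AL xs‖ ^ 2 := by
      rw [hAu]; exact combo_norm (AL xs) (AL x') b t
    have hin : ⟪lam, AL u - b⟫ = (1 - t) * ⟪lam, AL xs - b⟫ + t * ⟪lam, AL x' - b⟫ := by
      have : AL u - b = (1 - t) • (AL xs - b) + t • (AL x' - b) := by
        rw [hAu]; module
      rw [this, inner_add_right, real_inner_smul_right, real_inner_smul_right]
    have hfu : f u ≤ (1 - t) * f xs + t * f x'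
        + ρ / 2 * (t * (1 - t) * ‖x' - xs‖ ^ 2) := by
      nlinarith [hcvx, hn1]
    have hPeq1 : Pfun f A b γ βk u z lam
        = f u + ((1 - t) * ⟪lam, AL xs - b⟫ + t * ⟪lam, AL x' - b⟫)
          + βk / 2 * ((1 - t) * ‖AL xs - b‖ ^ 2 + t * ‖AL x' - b‖ ^ 2
              - t * (1 - t) * ‖AL x' - AL xs‖ ^ 2)
          + 1 / (2 * γ) * ((1 - t) * ‖xs - z‖ ^ 2 + t * ‖x' - z‖ ^ 2
              - t * (1 - t) * ‖x' - xs‖ ^ 2) := by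
      simp only [Pfun, ← hAL]
      rw [hn2, hn3, hin]
    have hPeq2 : Pfun f A b γ βk xs z lam
        = f xs + ⟪lam, AL xs - b⟫ + βk / 2 * ‖AL xs - b‖ ^ 2
          + 1 / (2 * γ) * ‖xs - z‖ ^ 2 := by simp only [Pfun, ← hAL]
    have hPeq3 : Pfun f A b γ βk x' z lam
        = f x' + ⟪lam, AL x' - b⟫ + βk / 2 * ‖AL x' - b‖ ^ 2
          + 1 / (2 * γ) * ‖x' - z‖ ^ 2 := by simp only [Pfun, ← hAL]
    have e1 : (1 - ρ * γ) / (2 * γ) = 1 / (2 * γ) - ρ / 2 := by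
      field_simp
    have hdrop : 0 ≤ βk / 2 * (t * (1 - t) * ‖AL x' - AL xs‖ ^ 2) :=
      mul_nonneg (by linarith) (mul_nonneg (mul_nonneg ht0.le (by linarith)) (sq_nonneg _))
    have hPu : Pfun f A b γ βk u z lam
        ≤ (1 - t) * Pfun f A b γ βk xs z lam + t * Pfun f A b γ βk x' z lam
          - t * (1 - t) * C := by
      rw [hPeq1, hPeq2, hPeq3, hC, e1]
      nlinarith [hfu, hdrop]
    have hPP := le_trans hmin' hPu
    have hmain : t * (Pfun f A b γ βk xs z lam + C)
        ≤ t * (Pfun f A b γ βk x' z lam + t * C) := by nlinarith [hPP]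
    exact (mul_le_mul_iff_right₀ ht0).mp hmain
  refine le_of_forall_pos_le_add fun ε hε => ?_
  rcases eq_or_lt_of_le hC0 with h | h
  · have := key 1 one_pos le_rfl
    linarith
  · set t := min 1 (ε / (2 * C)) with htdef
    have ht0 : 0 < t := lt_min one_pos (div_pos hε (by linarith))
    have ht1 : t ≤ 1 := min_le_left _ _
    have hk := key t ht0 ht1
    have htC : t * C ≤ ε := by
      have h2 : t ≤ ε / (2 * C) := min_le_right _ _
      calc t * C ≤ ε / (2 * C) * C := by nlinarith
        _ ≤ ε := by rw [div_mul_eq_mul_div, div_le_iff₀ (by linarith)]; nlinarith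
    linarith

set_option maxHeartbeats 1000000 in
lemma step_identity {n m : ℕ} (f : EuclideanSpace ℝ (Fin n) → ℝ)
    (A : Matrix (Fin m) (Fin n) ℝ) (b : EuclideanSpace ℝ (Fin m)) (γ η βa βb : ℝ)
    (hγ0 : γ ≠ 0)
    (xk zk zk1 : EuclideanSpace ℝ (Fin n)) (lamk lamk1 : EuclideanSpace ℝ (Fin m))
    (hz1 : zk1 = zk - η • (zk - xk))
    (hlam1 : lamk1 = lamk + βa • (Matrix.toEuclideanLin A xk - b)) :
    Pfun f A b γ βb xk zk1 lamk1
      = Pfun f A b γ βa xk zk lamk + (βa / 2 + βb / 2) * ‖Matrix.toEuclideanLin A xk - b‖ ^ 2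
        - η * (2 - η) / (2 * γ) * ‖xk - zk‖ ^ 2 := by
  have hvec : xk - zk1 = (1 - η) • (xk - zk) := by rw [hz1]; module
  have hn : ‖xk - zk1‖ ^ 2 = (1 - η) ^ 2 * ‖xk - zk‖ ^ 2 := by rw [hvec, sq_smul_norm]
  have hip : ⟪lamk1, Matrix.toEuclideanLin A xk - b⟫
      = ⟪lamk, Matrix.toEuclideanLin A xk - b⟫ + βa * ‖Matrix.toEuclideanLin A xk - b‖ ^ 2 := by
    rw [hlam1, inner_add_left, real_inner_smul_left, real_inner_self_eq_norm_sq]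
  simp only [Pfun]
  rw [hip, hn]
  field_simp
  ring

set_option maxHeartbeats 2000000 in
lemma scalar_step (γ η σ α L c' ρ βa βb Pnew P1 Pmid r s dz1 dz2 dx dl : ℝ)
    (hγ0 : 0 < γ) (hη0 : 0 < η) (hη2 : η < 2) (hσ : 0 < σ) (hβa : 0 < βa)
    (hα0 : 0 < α)
    (hc' : c' = γ * η / 2 * (1 - η / 2))
    (hi : Pnew = Pmid + (βa / 2 + βb / 2) * r - η * (2 - η) / (2 * γ) * s)
    (hii : Pmid + (1 - ρ * γ) / (2 * γ) * dx ≤ P1)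
    (hiii : γ ^ 2 * σ * dl ≤ 3 * dz1 + 3 * dx + 12 * γ ^ 2 * L ^ 2)
    (hiv : dl = βa ^ 2 * r)
    (hv : dz2 = η ^ 2 * s)
    (hvi : βa + βb + γ * η * (1 - η / 2) = α * (2 * (γ ^ 2 * σ) * βa ^ 2))
    (h3a1 : 3 * α ≤ (1 - ρ * γ) / (2 * γ))
    (h3a2 : 3 * α ≤ (2 - η) / (4 * γ * η))
    (hs0 : 0 ≤ s) (hdx0 : 0 ≤ dx) :
    Pnew + 3 * α * dz2 + c' * (((η * γ) ^ 2)⁻¹ * dz2 + (βa ^ 2)⁻¹ * dl)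
      ≤ P1 + 3 * α * dz1 + 12 * γ ^ 2 * L ^ 2 * α := by
  have hβa2 : (0:ℝ) < βa ^ 2 := by positivity
  have hr : (βa ^ 2)⁻¹ * dl = r := by rw [hiv]; field_simp
  have hr' : c' * ((βa ^ 2)⁻¹ * dl) = c' * r := by rw [hr]
  have hcs : c' * (((η * γ) ^ 2)⁻¹ * dz2) = η * (2 - η) / (2 * γ) * s / 2 := by
    rw [hc', hv]; field_simp
  have hBr : (βa / 2 + βb / 2) * r = α * (γ ^ 2 * σ * dl) - c' * r := by
    rw [hiv, hc']; linear_combination (r / 2) * hvi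
  have hiii' : α * (γ ^ 2 * σ * dl) ≤ α * (3 * dz1 + 3 * dx + 12 * γ ^ 2 * L ^ 2) :=
    mul_le_mul_of_nonneg_left hiii hα0.le
  have h2 : 3 * α * dz2 ≤ η * (2 - η) / (2 * γ) * s / 2 := by
    rw [hv]
    have e : η * (2 - η) / (2 * γ) * s / 2 = (2 - η) / (4 * γ * η) * (η ^ 2 * s) := by
      field_simp; ring
    rw [e]
    exact mul_le_mul_of_nonneg_right h3a2 (mul_nonneg (sq_nonneg η) hs0)
  have h3 : 3 * α * dx ≤ (1 - ρ * γ) / (2 * γ) * dx :=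
    mul_le_mul_of_nonneg_right h3a1 hdx0
  have hexp : c' * (((η * γ) ^ 2)⁻¹ * dz2 + (βa ^ 2)⁻¹ * dl)
      = c' * (((η * γ) ^ 2)⁻¹ * dz2) + c' * ((βa ^ 2)⁻¹ * dl) := by ring
  rw [hexp, hcs, hr']
  nlinarith [hi, hBr, hiii', h2, h3, hii]

set_option maxHeartbeats 1000000 in
lemma dual_bound {n m : ℕ} (A : Matrix (Fin m) (Fin n) ℝ) (b : EuclideanSpace ℝ (Fin m))
    (γ σ L βa : ℝ) (hγ0 : 0 < γ)
    (z0 z1 x1 x2 : EuclideanSpace ℝ (Fin n)) (lam1 lam2 : EuclideanSpace ℝ (Fin m))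
    (hb : b ∈ LinearMap.range (Matrix.toEuclideanLin A))
    (hσA : ∀ v ∈ LinearMap.range (Matrix.toEuclideanLin A),
      σ * ‖v‖ ^ 2 ≤ ‖Matrix.toEuclideanLin A.transpose v‖ ^ 2)
    (hlam2 : lam2 = lam1 + βa • (Matrix.toEuclideanLin A x2 - b))
    (hg1 : ‖γ⁻¹ • ((z1 - γ • Matrix.toEuclideanLin A.transpose lam2) - x2)‖ ≤ L)
    (hg0 : ‖γ⁻¹ • ((z0 - γ • Matrix.toEuclideanLin A.transpose lam1) - x1)‖ ≤ L) :
    γ ^ 2 * σ * ‖lam2 - lam1‖ ^ 2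
      ≤ 3 * ‖z1 - z0‖ ^ 2 + 3 * ‖x2 - x1‖ ^ 2 + 12 * γ ^ 2 * L ^ 2 := by
  set AT := Matrix.toEuclideanLin A.transpose with hAT
  set AL := Matrix.toEuclideanLin A with hAL
  have hnorm_smul_inv : ∀ v : EuclideanSpace ℝ (Fin n), ‖γ⁻¹ • v‖ ≤ L → ‖v‖ ≤ γ * L := by
    intro v hv
    rw [norm_smul, Real.norm_eq_abs, abs_of_pos (inv_pos.mpr hγ0)] at hv
    calc ‖v‖ = γ * (γ⁻¹ * ‖v‖) := by field_simp
      _ ≤ γ * L := mul_le_mul_of_nonneg_left hv hγ0.le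
  have hγL1 := hnorm_smul_inv _ hg1
  have hγL0 := hnorm_smul_inv _ hg0
  have hid : γ • AT (lam2 - lam1)
      = (z1 - z0) - (x2 - x1) - ((z1 - γ • AT lam2) - x2) + ((z0 - γ • AT lam1) - x1) := by
    rw [map_sub]; module
  have htri : ‖γ • AT (lam2 - lam1)‖
      ≤ ‖z1 - z0‖ + ‖x2 - x1‖ + (γ * L + γ * L) := by
    rw [hid]
    calc ‖(z1 - z0) - (x2 - x1) - ((z1 - γ • AT lam2) - x2) + ((z0 - γ • AT lam1) - x1)‖
        ≤ ‖(z1 - z0) - (x2 - x1) - ((z1 - γ • AT lam2) - x2)‖ + ‖(z0 - γ • AT lam1) - x1‖ :=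
          norm_add_le _ _
      _ ≤ ‖(z1 - z0) - (x2 - x1)‖ + ‖(z1 - γ • AT lam2) - x2‖ + ‖(z0 - γ • AT lam1) - x1‖ := by
          linarith [norm_sub_le ((z1 - z0) - (x2 - x1)) ((z1 - γ • AT lam2) - x2)]
      _ ≤ ‖z1 - z0‖ + ‖x2 - x1‖ + ‖(z1 - γ • AT lam2) - x2‖ + ‖(z0 - γ • AT lam1) - x1‖ := by
          linarith [norm_sub_le (z1 - z0) (x2 - x1)]
      _ ≤ ‖z1 - z0‖ + ‖x2 - x1‖ + (γ * L + γ * L) := by linarith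
  have hsq : ‖γ • AT (lam2 - lam1)‖ ^ 2
      ≤ 3 * ‖z1 - z0‖ ^ 2 + 3 * ‖x2 - x1‖ ^ 2 + 12 * γ ^ 2 * L ^ 2 := by
    have h1 : ‖γ • AT (lam2 - lam1)‖ ^ 2 ≤ (‖z1 - z0‖ + ‖x2 - x1‖ + (γ * L + γ * L)) ^ 2 := by
      have h0 : (0:ℝ) ≤ ‖γ • AT (lam2 - lam1)‖ := norm_nonneg _
      nlinarith [htri]
    nlinarith [sq_nonneg (‖z1 - z0‖ - ‖x2 - x1‖), sq_nonneg (‖z1 - z0‖ - 2 * (γ * L)),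
      sq_nonneg (‖x2 - x1‖ - 2 * (γ * L))]
  have hmem : lam2 - lam1 ∈ LinearMap.range AL := by
    obtain ⟨xb, hxb⟩ := hb
    refine ⟨βa • (x2 - xb), ?_⟩
    rw [map_smul, map_sub, hxb, hlam2]
    module
  have hσ' := hσA _ hmem
  calc γ ^ 2 * σ * ‖lam2 - lam1‖ ^ 2 = γ ^ 2 * (σ * ‖lam2 - lam1‖ ^ 2) := by ring
    _ ≤ γ ^ 2 * ‖AT (lam2 - lam1)‖ ^ 2 := mul_le_mul_of_nonneg_left hσ' (sq_nonneg γ)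
    _ = ‖γ • AT (lam2 - lam1)‖ ^ 2 := (sq_smul_norm γ _).symm
    _ ≤ _ := hsq

set_option maxHeartbeats 2000000

/-- Theorem 1(b): `O(1/√K)` bound for MEAL under the implicit bounded subgradient
assumption. -/
theorem stmt_12 (n m : ℕ) (A : Matrix (Fin m) (Fin n) ℝ) (b : EuclideanSpace ℝ (Fin m))
    (f : EuclideanSpace ℝ (Fin n) → ℝ) (ρ γ η Lfhat σ αstar Estar : ℝ) (K : ℕ) (hK : 1 ≤ K)
    (hρ : 0 < ρ) (hγ0 : 0 < γ) (hγ : γ < 1 / ρ) (hη0 : 0 < η) (hη2 : η < 2)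
    (hLf : 0 < Lfhat) (hσ : 0 < σ)
    (hlsc : LowerSemicontinuous f)
    (hwc : ConvexOn ℝ Set.univ fun x => f x + ρ / 2 * ‖x‖ ^ 2)
    (prox : EuclideanSpace ℝ (Fin n) → EuclideanSpace ℝ (Fin n))
    (hproxmin : ∀ w x, f (prox w) + 1 / (2 * γ) * ‖prox w - w‖ ^ 2
        ≤ f x + 1 / (2 * γ) * ‖x - w‖ ^ 2)
    (hproxuniq : ∀ w x, (∀ y, f x + 1 / (2 * γ) * ‖x - w‖ ^ 2
        ≤ f y + 1 / (2 * γ) * ‖y - w‖ ^ 2) → x = prox w)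
    (hbnd : ∀ w, ‖γ⁻¹ • (w - prox w)‖ ≤ Lfhat)
    (hb : b ∈ LinearMap.range (Matrix.toEuclideanLin A))
    (hσA : ∀ v ∈ LinearMap.range (Matrix.toEuclideanLin A),
      σ * ‖v‖ ^ 2 ≤ ‖Matrix.toEuclideanLin A.transpose v‖ ^ 2)
    (β : ℕ → ℝ) (hβ : ∀ k, 0 < β k)
    (hαk : ∀ k, (β k + β (k + 1) + γ * η * (1 - η / 2)) / (2 * (γ ^ 2 * σ) * β k ^ 2)
        = αstar / K)
    (hαstar0 : 0 < αstar)
    (hαstar : αstar ≤ min ((1 - ρ * γ) / (6 * γ)) (1 / (12 * γ) * (2 / η - 1)))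
    (x z : ℕ → EuclideanSpace ℝ (Fin n)) (lam : ℕ → EuclideanSpace ℝ (Fin m))
    (hxmin : ∀ k x', Pfun f A b γ (β k) (x (k + 1)) (z k) (lam k)
        ≤ Pfun f A b γ (β k) x' (z k) (lam k))
    (hz : ∀ k, z (k + 1) = z k - η • (z k - x (k + 1)))
    (hlam : ∀ k, lam (k + 1) = lam k + β k • (Matrix.toEuclideanLin A (x (k + 1)) - b))
    (hprox : ∀ k, x (k + 1)
        = prox (z k - γ • Matrix.toEuclideanLin A.transpose (lam (k + 1))))
    (hEt : ∀ k, 1 ≤ k → k ≤ K + 1 →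
      Estar ≤ Pfun f A b γ (β k) (x k) (z k) (lam k)
          + 3 * (αstar / K) * ‖z k - z (k - 1)‖ ^ 2) :
    sInf ((fun t => Real.sqrt (((η * γ) ^ 2)⁻¹ * ‖z t - z (t + 1)‖ ^ 2
          + (β t ^ 2)⁻¹ * ‖lam (t + 1) - lam t‖ ^ 2)) '' Set.Icc 1 K)
      ≤ Real.sqrt ((Pfun f A b γ (β 1) (x 1) (z 1) (lam 1)
            + 3 * (αstar / K) * ‖z 1 - z 0‖ ^ 2 - Estar
            + 12 * γ ^ 2 * Lfhat ^ 2 * αstar) / (γ * η / 2 * (1 - η / 2)))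
        / Real.sqrt K := by
  have hK0 : (0:ℝ) < K := by exact_mod_cast Nat.pos_of_ne_zero (by omega)
  set α : ℝ := αstar / K with hαdef
  have hα0 : 0 < α := div_pos hαstar0 hK0
  have hργ1 : ρ * γ < 1 := by
    rw [lt_div_iff₀ hρ] at hγ; linarith [hγ]
  have hη1 : 0 < 1 - η / 2 := by linarith
  set c' : ℝ := γ * η / 2 * (1 - η / 2) with hc'def
  have hc'0 : 0 < c' := by
    rw [hc'def]; positivity
  have hαle : α ≤ αstar := by
    have hK1 : (1:ℝ) ≤ K := by exact_mod_cast hK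
    rw [hαdef, div_le_iff₀ hK0]; nlinarith [hK1, hαstar0]
  have hγne : γ ≠ 0 := ne_of_gt hγ0
  have hηne : η ≠ 0 := ne_of_gt hη0
  have h3a1 : 3 * α ≤ (1 - ρ * γ) / (2 * γ) := by
    have h1 : αstar ≤ (1 - ρ * γ) / (6 * γ) := le_trans hαstar (min_le_left _ _)
    have h2 : (1 - ρ * γ) / (6 * γ) * 3 = (1 - ρ * γ) / (2 * γ) := by
      field_simp; ring
    nlinarith [hαle, h1]
  have h3a2 : 3 * α ≤ (2 - η) / (4 * γ * η) := by
    have h1 : αstar ≤ 1 / (12 * γ) * (2 / η - 1) := le_trans hαstar (min_le_right _ _)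
    have h2 : 1 / (12 * γ) * (2 / η - 1) * 3 = (2 - η) / (4 * γ * η) := by
      field_simp; ring
    nlinarith [hαle, h1]
  -- per-step descent
  have hstep : ∀ j : ℕ,
      Pfun f A b γ (β (j + 1 + 1)) (x (j + 1 + 1)) (z (j + 1 + 1)) (lam (j + 1 + 1))
        + 3 * α * ‖z (j + 1) - z (j + 1 + 1)‖ ^ 2
        + c' * (((η * γ) ^ 2)⁻¹ * ‖z (j + 1) - z (j + 1 + 1)‖ ^ 2
            + (β (j + 1) ^ 2)⁻¹ * ‖lam (j + 1 + 1) - lam (j + 1)‖ ^ 2)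
      ≤ Pfun f A b γ (β (j + 1)) (x (j + 1)) (z (j + 1)) (lam (j + 1))
        + 3 * α * ‖z (j + 1) - z j‖ ^ 2 + 12 * γ ^ 2 * Lfhat ^ 2 * α := by
    intro j
    have hi := step_identity f A b γ η (β (j + 1)) (β (j + 1 + 1)) hγne
      (x (j + 1 + 1)) (z (j + 1)) (z (j + 1 + 1)) (lam (j + 1)) (lam (j + 1 + 1))
      (hz (j + 1)) (hlam (j + 1))
    have hii0 := strong_min_s12 f A b γ (β (j + 1)) ρ hγ0 (hβ (j + 1)) hργ1.le hwc
      (z (j + 1)) (x (j + 1 + 1)) (lam (j + 1)) (hxmin (j + 1)) (x (j + 1))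
    rw [norm_sub_rev (x (j + 1)) (x (j + 1 + 1))] at hii0
    have hg1 : ‖γ⁻¹ • ((z (j + 1) - γ • Matrix.toEuclideanLin A.transpose (lam (j + 1 + 1)))
        - x (j + 1 + 1))‖ ≤ Lfhat := by
      have h := hbnd (z (j + 1) - γ • Matrix.toEuclideanLin A.transpose (lam (j + 1 + 1)))
      rwa [← hprox (j + 1)] at h
    have hg0 : ‖γ⁻¹ • ((z j - γ • Matrix.toEuclideanLin A.transpose (lam (j + 1)))
        - x (j + 1))‖ ≤ Lfhat := by
      have h := hbnd (z j - γ • Matrix.toEuclideanLin A.transpose (lam (j + 1)))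
      rwa [← hprox j] at h
    have hiii := dual_bound A b γ σ Lfhat (β (j + 1)) hγ0 (z j) (z (j + 1))
      (x (j + 1)) (x (j + 1 + 1)) (lam (j + 1)) (lam (j + 1 + 1)) hb hσA
      (hlam (j + 1)) hg1 hg0
    have hiv : ‖lam (j + 1 + 1) - lam (j + 1)‖ ^ 2
        = β (j + 1) ^ 2 * ‖Matrix.toEuclideanLin A (x (j + 1 + 1)) - b‖ ^ 2 := by
      have hvec : lam (j + 1 + 1) - lam (j + 1)
          = β (j + 1) • (Matrix.toEuclideanLin A (x (j + 1 + 1)) - b) := by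
        rw [hlam (j + 1)]; abel
      rw [hvec, sq_smul_norm]
    have hv : ‖z (j + 1) - z (j + 1 + 1)‖ ^ 2
        = η ^ 2 * ‖x (j + 1 + 1) - z (j + 1)‖ ^ 2 := by
      have hvec : z (j + 1) - z (j + 1 + 1) = η • (z (j + 1) - x (j + 1 + 1)) := by
        rw [hz (j + 1)]; module
      rw [hvec, sq_smul_norm, norm_sub_rev]
    have hvi : β (j + 1) + β (j + 1 + 1) + γ * η * (1 - η / 2)
        = α * (2 * (γ ^ 2 * σ) * β (j + 1) ^ 2) := by
      have h := hαk (j + 1)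
      rw [div_eq_iff (ne_of_gt (mul_pos (mul_pos two_pos (mul_pos (pow_pos hγ0 2) hσ)) (pow_pos (hβ (j + 1)) 2)))] at h
      exact h
    exact scalar_step γ η σ α Lfhat c' ρ (β (j + 1)) (β (j + 1 + 1))
      (Pfun f A b γ (β (j + 1 + 1)) (x (j + 1 + 1)) (z (j + 1 + 1)) (lam (j + 1 + 1)))
      (Pfun f A b γ (β (j + 1)) (x (j + 1)) (z (j + 1)) (lam (j + 1)))
      (Pfun f A b γ (β (j + 1)) (x (j + 1 + 1)) (z (j + 1)) (lam (j + 1)))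
      (‖Matrix.toEuclideanLin A (x (j + 1 + 1)) - b‖ ^ 2)
      (‖x (j + 1 + 1) - z (j + 1)‖ ^ 2)
      (‖z (j + 1) - z j‖ ^ 2)
      (‖z (j + 1) - z (j + 1 + 1)‖ ^ 2)
      (‖x (j + 1 + 1) - x (j + 1)‖ ^ 2)
      (‖lam (j + 1 + 1) - lam (j + 1)‖ ^ 2)
      hγ0 hη0 hη2 hσ (hβ (j + 1)) hα0 hc'def hi hii0 hiii hiv hv hvi h3a1 h3a2
      (sq_nonneg _) (sq_nonneg _)
  -- telescoping
  have htel : ∀ N : ℕ,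
      Pfun f A b γ (β (N + 1)) (x (N + 1)) (z (N + 1)) (lam (N + 1))
        + 3 * α * ‖z (N + 1) - z N‖ ^ 2
        + c' * (∑ k ∈ Finset.Icc 1 N, (((η * γ) ^ 2)⁻¹ * ‖z k - z (k + 1)‖ ^ 2
            + (β k ^ 2)⁻¹ * ‖lam (k + 1) - lam k‖ ^ 2))
      ≤ Pfun f A b γ (β 1) (x 1) (z 1) (lam 1) + 3 * α * ‖z 1 - z 0‖ ^ 2
        + N * (12 * γ ^ 2 * Lfhat ^ 2 * α) := by
    intro N
    induction N with
    | zero =>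
      rw [Finset.Icc_eq_empty (by omega), Finset.sum_empty]
      norm_num
    | succ N ih =>
      rw [Finset.sum_Icc_succ_top (by omega : 1 ≤ N + 1)]
      rw [show ‖z (N + 1 + 1) - z (N + 1)‖ = ‖z (N + 1) - z (N + 1 + 1)‖ from norm_sub_rev _ _]
      have hs := hstep N
      push_cast
      push_cast at ih
      linarith [ih, hs]
  have htelK := htel K
  have hKB : (K:ℝ) * (12 * γ ^ 2 * Lfhat ^ 2 * α) = 12 * γ ^ 2 * Lfhat ^ 2 * αstar := by
    rw [hαdef]; field_simp
  have hEK1 := hEt (K + 1) (by omega) le_rfl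
  simp only [Nat.add_sub_cancel] at hEK1
  have hE1 := hEt 1 le_rfl (by omega)
  norm_num at hE1
  -- sum bound
  set S : ℝ := ∑ k ∈ Finset.Icc 1 K, (((η * γ) ^ 2)⁻¹ * ‖z k - z (k + 1)‖ ^ 2
      + (β k ^ 2)⁻¹ * ‖lam (k + 1) - lam k‖ ^ 2) with hSdef
  set Num : ℝ := Pfun f A b γ (β 1) (x 1) (z 1) (lam 1) + 3 * α * ‖z 1 - z 0‖ ^ 2 - Estar
      + 12 * γ ^ 2 * Lfhat ^ 2 * αstar with hNumdef
  have hcS : c' * S ≤ Num := by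
    rw [hNumdef]
    linarith [htelK, hEK1, hKB]
  have hNum0 : 0 ≤ Num := by
    rw [hNumdef]
    have : (0:ℝ) ≤ 12 * γ ^ 2 * Lfhat ^ 2 * αstar := by positivity
    linarith [hE1]
  -- choose minimizing index
  obtain ⟨t0, ht0mem, ht0min⟩ := Finset.exists_min_image (Finset.Icc 1 K)
    (fun t => ((η * γ) ^ 2)⁻¹ * ‖z t - z (t + 1)‖ ^ 2
      + (β t ^ 2)⁻¹ * ‖lam (t + 1) - lam t‖ ^ 2)
    ⟨1, Finset.mem_Icc.mpr ⟨le_rfl, hK⟩⟩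
  have hcard : (Finset.Icc 1 K).card = K := by
    rw [Nat.card_Icc]; omega
  have hmin_sum : (K:ℝ) * (((η * γ) ^ 2)⁻¹ * ‖z t0 - z (t0 + 1)‖ ^ 2
      + (β t0 ^ 2)⁻¹ * ‖lam (t0 + 1) - lam t0‖ ^ 2) ≤ S := by
    have h := Finset.card_nsmul_le_sum (Finset.Icc 1 K)
      (fun t => ((η * γ) ^ 2)⁻¹ * ‖z t - z (t + 1)‖ ^ 2
        + (β t ^ 2)⁻¹ * ‖lam (t + 1) - lam t‖ ^ 2)
      (((η * γ) ^ 2)⁻¹ * ‖z t0 - z (t0 + 1)‖ ^ 2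
        + (β t0 ^ 2)⁻¹ * ‖lam (t0 + 1) - lam t0‖ ^ 2)
      (fun i hi => ht0min i hi)
    rw [hcard, nsmul_eq_mul] at h
    exact_mod_cast h
  have hΦt0 : ((η * γ) ^ 2)⁻¹ * ‖z t0 - z (t0 + 1)‖ ^ 2
      + (β t0 ^ 2)⁻¹ * ‖lam (t0 + 1) - lam t0‖ ^ 2 ≤ Num / c' / K := by
    rw [div_div, le_div_iff₀ (by positivity)]
    nlinarith [mul_le_mul_of_nonneg_left hmin_sum hc'0.le, hcS]
  have hbdd : BddBelow ((fun t => Real.sqrt (((η * γ) ^ 2)⁻¹ * ‖z t - z (t + 1)‖ ^ 2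
      + (β t ^ 2)⁻¹ * ‖lam (t + 1) - lam t‖ ^ 2)) '' Set.Icc 1 K) := by
    refine ⟨0, fun y hy => ?_⟩
    obtain ⟨t, _, rfl⟩ := hy
    exact Real.sqrt_nonneg _
  have hmem : (fun t => Real.sqrt (((η * γ) ^ 2)⁻¹ * ‖z t - z (t + 1)‖ ^ 2
      + (β t ^ 2)⁻¹ * ‖lam (t + 1) - lam t‖ ^ 2)) t0
      ∈ (fun t => Real.sqrt (((η * γ) ^ 2)⁻¹ * ‖z t - z (t + 1)‖ ^ 2
      + (β t ^ 2)⁻¹ * ‖lam (t + 1) - lam t‖ ^ 2)) '' Set.Icc 1 K := by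
    refine ⟨t0, ?_, rfl⟩
    have := Finset.mem_Icc.mp ht0mem
    exact Set.mem_Icc.mpr this
  have hfin : Real.sqrt (((η * γ) ^ 2)⁻¹ * ‖z t0 - z (t0 + 1)‖ ^ 2
      + (β t0 ^ 2)⁻¹ * ‖lam (t0 + 1) - lam t0‖ ^ 2) ≤ Real.sqrt (Num / c') / Real.sqrt K := by
    have h1 : Real.sqrt (((η * γ) ^ 2)⁻¹ * ‖z t0 - z (t0 + 1)‖ ^ 2
        + (β t0 ^ 2)⁻¹ * ‖lam (t0 + 1) - lam t0‖ ^ 2) ≤ Real.sqrt (Num / c' / K) :=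
      Real.sqrt_le_sqrt hΦt0
    rwa [Real.sqrt_div (div_nonneg hNum0 hc'0.le) (K:ℝ)] at h1
  calc sInf ((fun t => Real.sqrt (((η * γ) ^ 2)⁻¹ * ‖z t - z (t + 1)‖ ^ 2
          + (β t ^ 2)⁻¹ * ‖lam (t + 1) - lam t‖ ^ 2)) '' Set.Icc 1 K)
      ≤ (fun t => Real.sqrt (((η * γ) ^ 2)⁻¹ * ‖z t - z (t + 1)‖ ^ 2
          + (β t ^ 2)⁻¹ * ‖lam (t + 1) - lam t‖ ^ 2)) t0 := csInf_le hbdd hmem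
    _ ≤ Real.sqrt (Num / c') / Real.sqrt K := hfin
    _ = _ := by rw [hNumdef]
end

section
/- Let f : ℝ^n → ℝ be lower semicontinuous and ρ-weakly convex with the implicit Lipschitz subgradient property with constant L_f > 0, let γ ∈ (0, 1/ρ), η ∈ (0, 2), and let β > 0 be a fixed penalty parameter. Assume b lies in the column space of A and σ̃ > 0 satisfies ‖Aᵀv‖² ≥ σ̃‖v‖² for every v in the column space of A; set c_{γ,A} := γ²σ̃ and α := (2β + γη(1 − η/2))/(2c_{γ,A}β²), and assume α < min{ (1 − γρ)/(6γ(1 + γL_f)²), (1/(12γ))(2/η − 1) }. Let (x^k, z^k, λ^k, s^k) be iMEAL iterates with constant penalty β_k = β, step size η, and accuracies ε_k ≥ 0 satisfying Σ_{k=0}^∞ ε_k² < ∞, and suppose the sequence E^k := P_β(x^k, z^k, λ^k) + 3α‖z^k − z^{k−1}‖² (k ≥ 1) is bounded below. Then √k · (min_{1≤t≤k} Φ_t) → 0 as k → ∞, where Φ_t := √((ηγ)⁻²‖z^t − z^{t+1}‖² + β⁻²‖λ^{t+1} − λ^t‖²). -/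
open scoped RealInnerProductSpace
open Filter

lemma aux_min_sqrt (a : ℕ → ℝ) (ha : ∀ t, 0 ≤ a t) (hsum : Summable a) :
    Tendsto (fun k : ℕ => Real.sqrt k * sInf ((fun t => Real.sqrt (a t)) '' Set.Icc 1 k))
      atTop (nhds 0) := by
  set T : ℕ → ℝ := fun j => ∑' i, a (i + j) with hTdef
  have hTnn : ∀ j, 0 ≤ T j := fun j => tsum_nonneg (fun i => ha _)
  have hT : Tendsto T atTop (nhds 0) := tendsto_sum_nat_add a
  have hhalf : Tendsto (fun k : ℕ => (k + 1) / 2) atTop atTop := by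
    apply tendsto_atTop_atTop.mpr
    intro N
    exact ⟨2 * N, fun k hk => by omega⟩
  have hG : Tendsto (fun k : ℕ => Real.sqrt (2 * T ((k + 1) / 2))) atTop (nhds 0) := by
    have h1 : Tendsto (fun k : ℕ => 2 * T ((k + 1) / 2)) atTop (nhds 0) := by
      have := (hT.comp hhalf).const_mul (2 : ℝ)
      simpa using this
    have := (Real.continuous_sqrt.tendsto 0).comp h1
    rw [Real.sqrt_zero] at this
    exact this
  apply squeeze_zero' (g := fun k : ℕ => Real.sqrt (2 * T ((k + 1) / 2)))
  · filter_upwards with k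
    have h0 : 0 ≤ sInf ((fun t => Real.sqrt (a t)) '' Set.Icc 1 k) := by
      apply Real.sInf_nonneg
      rintro y ⟨t, _, rfl⟩
      exact Real.sqrt_nonneg _
    positivity
  · filter_upwards [eventually_ge_atTop 1] with k hk
    set j : ℕ := (k + 1) / 2 with hj
    have hj1 : 1 ≤ j := by omega
    have hjk : j ≤ k := by omega
    have hne : (Finset.Icc j k).Nonempty := ⟨j, Finset.mem_Icc.mpr ⟨le_rfl, hjk⟩⟩
    obtain ⟨t₀, ht₀mem, ht₀⟩ := Finset.exists_mem_eq_inf' hne a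
    set mv : ℝ := (Finset.Icc j k).inf' hne a with hmv
    have hmnn : 0 ≤ mv := ht₀ ▸ ha t₀
    have hS1 : sInf ((fun t => Real.sqrt (a t)) '' Set.Icc 1 k) ≤ Real.sqrt mv := by
      rw [ht₀]
      apply csInf_le ((Set.finite_Icc 1 k).image _).bddBelow
      refine ⟨t₀, ?_, rfl⟩
      simp only [Set.mem_Icc]
      have := Finset.mem_Icc.mp ht₀mem
      omega
    have hcard : (Finset.Icc j k).card • mv ≤ ∑ t ∈ Finset.Icc j k, a t :=
      Finset.card_nsmul_le_sum _ _ _ (fun t ht => Finset.inf'_le _ ht)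
    have hsumT : ∑ t ∈ Finset.Icc j k, a t ≤ T j := by
      have he : ∑ t ∈ Finset.Icc j k, a t = ∑ i ∈ Finset.range (k + 1 - j), a (i + j) := by
        rw [← Finset.Ico_add_one_right_eq_Icc, Finset.sum_Ico_eq_sum_range]
        exact Finset.sum_congr rfl (fun i _ => by rw [add_comm])
      rw [he]
      exact Summable.sum_le_tsum _ (fun i _ => ha _) ((summable_nat_add_iff j).mpr hsum)
    have hcardval : (Finset.Icc j k).card = k + 1 - j := Nat.card_Icc j k
    have hkm : (k : ℝ) * mv ≤ 2 * T j := by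
      have h2 : (k : ℝ) ≤ 2 * ((k + 1 - j : ℕ) : ℝ) := by
        have : k ≤ 2 * (k + 1 - j) := by omega
        exact_mod_cast this
      have h3 : ((k + 1 - j : ℕ) : ℝ) * mv ≤ T j := by
        have := hcard.trans hsumT
        rwa [hcardval, nsmul_eq_mul] at this
      nlinarith [hTnn j]
    calc Real.sqrt k * sInf ((fun t => Real.sqrt (a t)) '' Set.Icc 1 k)
        ≤ Real.sqrt k * Real.sqrt mv := by
          apply mul_le_mul_of_nonneg_left hS1 (Real.sqrt_nonneg _)
      _ = Real.sqrt (k * mv) := (Real.sqrt_mul (Nat.cast_nonneg k) _).symm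
      _ ≤ Real.sqrt (2 * T j) := Real.sqrt_le_sqrt hkm
  · exact hG

set_option maxHeartbeats 4000000 in
/-- Theorem 2(a): iteration complexity `o(1/√k)` of iMEAL under the implicit Lipschitz
subgradient assumption. -/
theorem stmt_13 (n m : ℕ) (A : Matrix (Fin m) (Fin n) ℝ) (b : EuclideanSpace ℝ (Fin m))
    (f : EuclideanSpace ℝ (Fin n) → ℝ) (ρ γ η Lf β σ α : ℝ)
    (hρ : 0 < ρ) (hγ0 : 0 < γ) (hγ : γ < 1 / ρ) (hη0 : 0 < η) (hη2 : η < 2)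
    (hLf : 0 < Lf) (hβ : 0 < β) (hσ : 0 < σ)
    (hlsc : LowerSemicontinuous f)
    (hwc : ConvexOn ℝ Set.univ fun x => f x + ρ / 2 * ‖x‖ ^ 2)
    (prox : EuclideanSpace ℝ (Fin n) → EuclideanSpace ℝ (Fin n))
    (hproxmin : ∀ w x, f (prox w) + 1 / (2 * γ) * ‖prox w - w‖ ^ 2
        ≤ f x + 1 / (2 * γ) * ‖x - w‖ ^ 2)
    (hproxuniq : ∀ w x, (∀ y, f x + 1 / (2 * γ) * ‖x - w‖ ^ 2
        ≤ f y + 1 / (2 * γ) * ‖y - w‖ ^ 2) → x = prox w)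
    (hlip : ∀ w w', ‖γ⁻¹ • (w - prox w) - γ⁻¹ • (w' - prox w')‖
        ≤ Lf * ‖prox w - prox w'‖)
    (hb : b ∈ LinearMap.range (Matrix.toEuclideanLin A))
    (hσA : ∀ v ∈ LinearMap.range (Matrix.toEuclideanLin A),
      σ * ‖v‖ ^ 2 ≤ ‖Matrix.toEuclideanLin A.transpose v‖ ^ 2)
    (hαdef : α = (2 * β + γ * η * (1 - η / 2)) / (2 * (γ ^ 2 * σ) * β ^ 2))
    (hα : α < min ((1 - γ * ρ) / (6 * γ * (1 + γ * Lf) ^ 2)) (1 / (12 * γ) * (2 / η - 1)))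
    (ε : ℕ → ℝ) (hε : ∀ k, 0 ≤ ε k) (hsum : Summable fun k : ℕ => ε k ^ 2)
    (x z s : ℕ → EuclideanSpace ℝ (Fin n)) (lam : ℕ → EuclideanSpace ℝ (Fin m))
    (hs : ∀ k, ‖s k‖ ≤ ε k)
    (hprox : ∀ k, x (k + 1)
        = prox (z k - γ • (Matrix.toEuclideanLin A.transpose (lam (k + 1)) - s k)))
    (hxdesc : ∀ k, Pfun f A b γ β (x k) (z k) (lam k)
        ≥ Pfun f A b γ β (x (k + 1)) (z k) (lam k)
          + ⟪s k, x k - x (k + 1)⟫ + (γ⁻¹ - ρ) / 2 * ‖x (k + 1) - x k‖ ^ 2)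
    (hz : ∀ k, z (k + 1) = z k - η • (z k - x (k + 1)))
    (hlam : ∀ k, lam (k + 1) = lam k + β • (Matrix.toEuclideanLin A (x (k + 1)) - b))
    (B : ℝ)
    (hB : ∀ k, 1 ≤ k →
      B ≤ Pfun f A b γ β (x k) (z k) (lam k) + 3 * α * ‖z k - z (k - 1)‖ ^ 2) :
    Filter.Tendsto (fun k : ℕ => Real.sqrt k *
        sInf ((fun t => Real.sqrt (((η * γ) ^ 2)⁻¹ * ‖z t - z (t + 1)‖ ^ 2
            + (β ^ 2)⁻¹ * ‖lam (t + 1) - lam t‖ ^ 2)) '' Set.Icc 1 k))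
      Filter.atTop (nhds 0) := by
  have hγne : γ ≠ 0 := ne_of_gt hγ0
  have hηne : η ≠ 0 := ne_of_gt hη0
  have hγρ : γ * ρ < 1 := by
    rw [lt_div_iff₀ hρ] at hγ; linarith
  have hη1 : (0:ℝ) < 1 - η / 2 := by linarith
  have hαpos : 0 < α := by
    rw [hαdef]
    apply div_pos
    · nlinarith [mul_pos (mul_pos hγ0 hη0) hη1]
    · positivity
  have hα1 : α < (1 - γ * ρ) / (6 * γ * (1 + γ * Lf) ^ 2) := lt_of_lt_of_le hα (min_le_left _ _)
  have hα2 : α < 1 / (12 * γ) * (2 / η - 1) := lt_of_lt_of_le hα (min_le_right _ _)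
  obtain ⟨a₁, ha₁def⟩ : ∃ a : ℝ, a = (γ⁻¹ - ρ) / 2 - 3 * α * (1 + γ * Lf) ^ 2 := ⟨_, rfl⟩
  obtain ⟨a₂, ha₂def⟩ : ∃ a : ℝ, a = (2 - η) / (2 * γ * η) - 6 * α := ⟨_, rfl⟩
  have hγγ : γ * γ⁻¹ = 1 := mul_inv_cancel₀ hγne
  have ha₁pos : 0 < a₁ := by
    have h6 : (0:ℝ) < 6 * γ * (1 + γ * Lf) ^ 2 := by positivity
    have h := (lt_div_iff₀ h6).mp hα1
    have hp : 0 < a₁ * (2 * γ) := by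
      rw [ha₁def]; nlinarith
    nlinarith
  have ha₂pos : 0 < a₂ := by
    have h12 : (0:ℝ) < 12 * γ * η := by positivity
    have h := mul_lt_mul_of_pos_right hα2 h12
    have hrhs : 1 / (12 * γ) * (2 / η - 1) * (12 * γ * η) = 2 - η := by
      field_simp
    rw [hrhs] at h
    have hp : 0 < a₂ * (2 * γ * η) := by
      rw [ha₂def]
      have he : ((2 - η) / (2 * γ * η) - 6 * α) * (2 * γ * η)
          = (2 - η) - 12 * γ * η * α := by
        field_simp; ring
      rw [he]; nlinarith
    nlinarith [mul_pos (mul_pos (by norm_num : (0:ℝ) < 2) hγ0) hη0]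
  have hα3 : 1 / (γ ^ 2 * σ * β) ≤ α := by
    have key : 0 ≤ γ * η * (1 - η / 2) * (γ ^ 2 * σ * β) :=
      mul_nonneg (mul_nonneg (mul_pos hγ0 hη0).le hη1.le) (by positivity)
    rw [hαdef, div_le_div_iff₀ (by positivity) (by positivity)]
    nlinarith [key]
  set TA := Matrix.toEuclideanLin A with hTA
  set TT := Matrix.toEuclideanLin A.transpose with hTT
  -- basic kinematic identities
  have hDz : ∀ k, ‖z k - z (k + 1)‖ = η * ‖z k - x (k + 1)‖ := by
    intro k
    have hzz : z k - z (k + 1) = η • (z k - x (k + 1)) := by rw [hz k]; module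
    rw [hzz, norm_smul, Real.norm_eq_abs, abs_of_pos hη0]
  have hdlam : ∀ k, ‖lam (k + 1) - lam k‖ = β * ‖TA (x (k + 1)) - b‖ := by
    intro k
    have : lam (k + 1) - lam k = β • (TA (x (k + 1)) - b) := by rw [hlam k]; abel
    rw [this, norm_smul, Real.norm_eq_abs, abs_of_pos hβ]
  -- P update identity across z and λ updates
  have hP2 : ∀ k, Pfun f A b γ β (x (k + 1)) (z (k + 1)) (lam (k + 1))
      = Pfun f A b γ β (x (k + 1)) (z k) (lam k) + β * ‖TA (x (k + 1)) - b‖ ^ 2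
        - (2 - η) * η / (2 * γ) * ‖z k - x (k + 1)‖ ^ 2 := by
    intro k
    have h1 : ⟪lam (k + 1), TA (x (k + 1)) - b⟫
        = ⟪lam k, TA (x (k + 1)) - b⟫ + β * ‖TA (x (k + 1)) - b‖ ^ 2 := by
      rw [hlam k, inner_add_left, real_inner_smul_left, real_inner_self_eq_norm_sq]
    have h2 : ‖x (k + 1) - z (k + 1)‖ ^ 2 = (1 - η) ^ 2 * ‖x (k + 1) - z k‖ ^ 2 := by
      have hzz : x (k + 1) - z (k + 1) = (1 - η) • (x (k + 1) - z k) := by rw [hz k]; module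
      rw [hzz, norm_smul, Real.norm_eq_abs, mul_pow, sq_abs]
    have h3 : ‖z k - x (k + 1)‖ = ‖x (k + 1) - z k‖ := norm_sub_rev _ _
    simp only [Pfun, ← hTA, h1, h2, h3]
    field_simp
    ring
  -- x-descent bound
  have hP3 : ∀ k, Pfun f A b γ β (x (k + 1)) (z k) (lam k)
      ≤ Pfun f A b γ β (x k) (z k) (lam k) + ε k * ‖x (k + 1) - x k‖
        - (γ⁻¹ - ρ) / 2 * ‖x (k + 1) - x k‖ ^ 2 := by
    intro k
    have h := hxdesc k
    have h1 := abs_real_inner_le_norm (s k) (x k - x (k + 1))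
    have h2 : ‖x k - x (k + 1)‖ = ‖x (k + 1) - x k‖ := norm_sub_rev _ _
    have h3 : ‖s k‖ * ‖x k - x (k + 1)‖ ≤ ε k * ‖x (k + 1) - x k‖ := by
      rw [h2]; exact mul_le_mul_of_nonneg_right (hs k) (norm_nonneg _)
    have h4 := neg_abs_le ⟪s k, x k - x (k + 1)⟫
    linarith
  -- dual bound
  have hdual : ∀ k, σ * ‖lam (k + 2) - lam (k + 1)‖ ^ 2
      ≤ 3 * γ⁻¹ ^ 2 * ‖z k - z (k + 1)‖ ^ 2
        + 3 * (γ⁻¹ + Lf) ^ 2 * ‖x (k + 2) - x (k + 1)‖ ^ 2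
        + 6 * ε (k + 1) ^ 2 + 6 * ε k ^ 2 := by
    intro k
    have hrange : lam (k + 2) - lam (k + 1) ∈ LinearMap.range TA := by
      rw [hlam (k + 1), add_sub_cancel_left]
      exact Submodule.smul_mem _ _ (Submodule.sub_mem _ (LinearMap.mem_range_self _ _) hb)
    have hbase := hσA _ hrange
    set w : ℕ → EuclideanSpace ℝ (Fin n) := fun j => z j - γ • (TT (lam (j + 1)) - s j) with hw
    have hproxw : ∀ j, prox (w j) = x (j + 1) := by
      intro j; simp only [hw]; exact (hprox j).symm
    have hid : ∀ j, γ⁻¹ • (w j - prox (w j))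
        = γ⁻¹ • (z j - x (j + 1)) - TT (lam (j + 1)) + s j := by
      intro j
      rw [hproxw j]
      simp only [hw]
      match_scalars <;> field_simp
    have hlipw := hlip (w (k + 1)) (w k)
    rw [hid (k + 1), hid k, hproxw, hproxw] at hlipw
    have hTTd : TT (lam (k + 2)) - TT (lam (k + 1))
        = (γ⁻¹ • (z (k + 1) - z k) + γ⁻¹ • (x (k + 1) - x (k + 2))) + (s (k + 1) - s k)
          - ((γ⁻¹ • (z (k + 1) - x (k + 2)) - TT (lam (k + 2)) + s (k + 1))
            - (γ⁻¹ • (z k - x (k + 1)) - TT (lam (k + 1)) + s k)) := by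
      module
    have hn1 : ‖γ⁻¹ • (z (k + 1) - z k) + γ⁻¹ • (x (k + 1) - x (k + 2))‖
        ≤ γ⁻¹ * ‖z k - z (k + 1)‖ + γ⁻¹ * ‖x (k + 2) - x (k + 1)‖ := by
      refine (norm_add_le _ _).trans ?_
      rw [norm_smul, norm_smul, Real.norm_eq_abs, abs_of_pos (inv_pos.mpr hγ0),
        norm_sub_rev (z (k + 1)), norm_sub_rev (x (k + 1))]
    have hn2 : ‖s (k + 1) - s k‖ ≤ ε (k + 1) + ε k :=
      (norm_sub_le _ _).trans (add_le_add (hs _) (hs _))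
    have hTTnorm : ‖TT (lam (k + 2)) - TT (lam (k + 1))‖
        ≤ γ⁻¹ * ‖z k - z (k + 1)‖ + (γ⁻¹ + Lf) * ‖x (k + 2) - x (k + 1)‖
          + (ε (k + 1) + ε k) := by
      rw [hTTd]
      refine (norm_sub_le _ _).trans ?_
      have h0 := (norm_add_le (γ⁻¹ • (z (k + 1) - z k) + γ⁻¹ • (x (k + 1) - x (k + 2)))
        (s (k + 1) - s k))
      have hlipw2 : ‖γ⁻¹ • (z (k + 1) - x (k + 2)) - TT (lam (k + 2)) + s (k + 1) -
          (γ⁻¹ • (z k - x (k + 1)) - TT (lam (k + 1)) + s k)‖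
          ≤ Lf * ‖x (k + 2) - x (k + 1)‖ := hlipw
      linarith
    have hfin : ‖TT (lam (k + 2) - lam (k + 1))‖ ^ 2
        ≤ (γ⁻¹ * ‖z k - z (k + 1)‖ + (γ⁻¹ + Lf) * ‖x (k + 2) - x (k + 1)‖
          + (ε (k + 1) + ε k)) ^ 2 := by
      rw [map_sub]
      exact pow_le_pow_left₀ (norm_nonneg _) hTTnorm 2
    set aa := γ⁻¹ * ‖z k - z (k + 1)‖ with haa
    set bb := (γ⁻¹ + Lf) * ‖x (k + 2) - x (k + 1)‖ with hbb
    have h3 : (aa + bb + (ε (k + 1) + ε k)) ^ 2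
        ≤ 3 * aa ^ 2 + 3 * bb ^ 2 + 6 * ε (k + 1) ^ 2 + 6 * ε k ^ 2 := by
      nlinarith [sq_nonneg (aa - bb), sq_nonneg (aa - (ε (k + 1) + ε k)),
        sq_nonneg (bb - (ε (k + 1) + ε k)), sq_nonneg (ε (k + 1) - ε k)]
    have : σ * ‖lam (k + 2) - lam (k + 1)‖ ^ 2
        ≤ 3 * aa ^ 2 + 3 * bb ^ 2 + 6 * ε (k + 1) ^ 2 + 6 * ε k ^ 2 :=
      hbase.trans (hfin.trans h3)
    calc σ * ‖lam (k + 2) - lam (k + 1)‖ ^ 2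
        ≤ 3 * aa ^ 2 + 3 * bb ^ 2 + 6 * ε (k + 1) ^ 2 + 6 * ε k ^ 2 := this
      _ = 3 * γ⁻¹ ^ 2 * ‖z k - z (k + 1)‖ ^ 2
          + 3 * (γ⁻¹ + Lf) ^ 2 * ‖x (k + 2) - x (k + 1)‖ ^ 2
          + 6 * ε (k + 1) ^ 2 + 6 * ε k ^ 2 := by rw [haa, hbb]; ring
    -- Lyapunov function and one-step descent
  obtain ⟨g, hg⟩ : ∃ g : ℕ → ℝ, g = fun k => a₁ / 2 * ‖x (k + 2) - x (k + 1)‖ ^ 2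
      + a₂ * ‖z (k + 1) - z (k + 2)‖ ^ 2 := ⟨_, rfl⟩
  obtain ⟨EE, hEE⟩ : ∃ E : ℕ → ℝ, E = fun k => Pfun f A b γ β (x (k + 1)) (z (k + 1)) (lam (k + 1))
      + 3 * α * ‖z k - z (k + 1)‖ ^ 2 := ⟨_, rfl⟩
  have h2a₁ : (0:ℝ) < 2 * a₁ := by linarith
  have hEdesc : ∀ k, EE (k + 1) + g k
      ≤ EE k + (6 / (σ * β) + 1 / (2 * a₁)) * (ε (k + 1) ^ 2 + ε k ^ 2) := by
    intro k
    have hmain : Pfun f A b γ β (x (k + 2)) (z (k + 2)) (lam (k + 2))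
        + 3 * α * ‖z (k + 1) - z (k + 2)‖ ^ 2
        + (a₁ / 2 * ‖x (k + 2) - x (k + 1)‖ ^ 2 + a₂ * ‖z (k + 1) - z (k + 2)‖ ^ 2)
        ≤ Pfun f A b γ β (x (k + 1)) (z (k + 1)) (lam (k + 1))
          + 3 * α * ‖z k - z (k + 1)‖ ^ 2
          + (6 / (σ * β) + 1 / (2 * a₁)) * (ε (k + 1) ^ 2 + ε k ^ 2) := by
      have h2 : Pfun f A b γ β (x (k + 2)) (z (k + 2)) (lam (k + 2))
          = Pfun f A b γ β (x (k + 2)) (z (k + 1)) (lam (k + 1))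
            + β * ‖TA (x (k + 2)) - b‖ ^ 2
            - (2 - η) * η / (2 * γ) * ‖z (k + 1) - x (k + 2)‖ ^ 2 := hP2 (k + 1)
      have h3 : Pfun f A b γ β (x (k + 2)) (z (k + 1)) (lam (k + 1))
          ≤ Pfun f A b γ β (x (k + 1)) (z (k + 1)) (lam (k + 1))
            + ε (k + 1) * ‖x (k + 2) - x (k + 1)‖
            - (γ⁻¹ - ρ) / 2 * ‖x (k + 2) - x (k + 1)‖ ^ 2 := hP3 (k + 1)
      have ha₁eq : (γ⁻¹ - ρ) / 2 = a₁ + 3 * α * (1 + γ * Lf) ^ 2 := by rw [ha₁def]; ring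
      rw [ha₁eq] at h3
      have h5 : σ * ‖lam (k + 2) - lam (k + 1)‖ ^ 2
          ≤ 3 * γ⁻¹ ^ 2 * ‖z k - z (k + 1)‖ ^ 2
            + 3 * (γ⁻¹ + Lf) ^ 2 * ‖x (k + 2) - x (k + 1)‖ ^ 2
            + 6 * ε (k + 1) ^ 2 + 6 * ε k ^ 2 := hdual k
      have hd1 : ‖lam (k + 2) - lam (k + 1)‖ = β * ‖TA (x (k + 2)) - b‖ := hdlam (k + 1)
      have hDzk : ‖z (k + 1) - z (k + 2)‖ = η * ‖z (k + 1) - x (k + 2)‖ := hDz (k + 1)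
      have hσβ : (0:ℝ) < σ * β := mul_pos hσ hβ
      -- bound on the augmented-penalty increase via the dual bound
      have hbe : β * ‖TA (x (k + 2)) - b‖ ^ 2
          ≤ 3 * α * ‖z k - z (k + 1)‖ ^ 2
            + 3 * α * (1 + γ * Lf) ^ 2 * ‖x (k + 2) - x (k + 1)‖ ^ 2
            + 6 / (σ * β) * (ε (k + 1) ^ 2 + ε k ^ 2) := by
        have he1 : β * ‖TA (x (k + 2)) - b‖ ^ 2 = ‖lam (k + 2) - lam (k + 1)‖ ^ 2 / β := by
          rw [hd1]; field_simp
        have he2 : ‖lam (k + 2) - lam (k + 1)‖ ^ 2 / β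
            ≤ (3 * γ⁻¹ ^ 2 * ‖z k - z (k + 1)‖ ^ 2
              + 3 * (γ⁻¹ + Lf) ^ 2 * ‖x (k + 2) - x (k + 1)‖ ^ 2
              + 6 * ε (k + 1) ^ 2 + 6 * ε k ^ 2) / (σ * β) := by
          rw [div_le_div_iff₀ hβ hσβ]
          nlinarith [mul_le_mul_of_nonneg_right h5 hβ.le]
        have hc1 : 3 * γ⁻¹ ^ 2 / (σ * β) ≤ 3 * α := by
          have hfoo : 3 * γ⁻¹ ^ 2 / (σ * β) = 3 * (1 / (γ ^ 2 * σ * β)) := by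
            field_simp
          rw [hfoo]; linarith
        have hc2 : 3 * (γ⁻¹ + Lf) ^ 2 / (σ * β) ≤ 3 * α * (1 + γ * Lf) ^ 2 := by
          have hfac : 3 * (γ⁻¹ + Lf) ^ 2 / (σ * β)
              = 3 * (1 / (γ ^ 2 * σ * β)) * (1 + γ * Lf) ^ 2 := by
            field_simp
          rw [hfac]
          have := mul_le_mul_of_nonneg_right (by linarith : 3 * (1 / (γ ^ 2 * σ * β)) ≤ 3 * α)
            (sq_nonneg (1 + γ * Lf))
          linarith
        have hsplit : (3 * γ⁻¹ ^ 2 * ‖z k - z (k + 1)‖ ^ 2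
              + 3 * (γ⁻¹ + Lf) ^ 2 * ‖x (k + 2) - x (k + 1)‖ ^ 2
              + 6 * ε (k + 1) ^ 2 + 6 * ε k ^ 2) / (σ * β)
            = (3 * γ⁻¹ ^ 2 / (σ * β)) * ‖z k - z (k + 1)‖ ^ 2
              + (3 * (γ⁻¹ + Lf) ^ 2 / (σ * β)) * ‖x (k + 2) - x (k + 1)‖ ^ 2
              + 6 / (σ * β) * (ε (k + 1) ^ 2 + ε k ^ 2) := by
          ring
        rw [hsplit] at he2
        have hm1 := mul_le_mul_of_nonneg_right hc1 (sq_nonneg ‖z k - z (k + 1)‖)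
        have hm2 := mul_le_mul_of_nonneg_right hc2 (sq_nonneg ‖x (k + 2) - x (k + 1)‖)
        rw [he1]
        linarith
      -- Young's inequality on the error term
      have hεu : ε (k + 1) * ‖x (k + 2) - x (k + 1)‖
          ≤ a₁ / 2 * ‖x (k + 2) - x (k + 1)‖ ^ 2 + 1 / (2 * a₁) * ε (k + 1) ^ 2 := by
        have hexp : 2 * a₁ * (a₁ / 2 * ‖x (k + 2) - x (k + 1)‖ ^ 2
              + 1 / (2 * a₁) * ε (k + 1) ^ 2)
            = a₁ ^ 2 * ‖x (k + 2) - x (k + 1)‖ ^ 2 + a₁ * ε (k + 1) ^ 2 / a₁ := by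
          ring
        have hexp2 : a₁ * ε (k + 1) ^ 2 / a₁ = ε (k + 1) ^ 2 := by
          field_simp
        have key : 2 * a₁ * (ε (k + 1) * ‖x (k + 2) - x (k + 1)‖)
            ≤ 2 * a₁ * (a₁ / 2 * ‖x (k + 2) - x (k + 1)‖ ^ 2
              + 1 / (2 * a₁) * ε (k + 1) ^ 2) := by
          rw [hexp, hexp2]
          nlinarith [sq_nonneg (a₁ * ‖x (k + 2) - x (k + 1)‖ - ε (k + 1))]
        exact le_of_mul_le_mul_left key h2a₁
      -- the z-decrease term rewritten via a₂
      have hDeq : (2 - η) * η / (2 * γ) * ‖z (k + 1) - x (k + 2)‖ ^ 2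
          = (a₂ + 6 * α) * ‖z (k + 1) - z (k + 2)‖ ^ 2 := by
        rw [hDzk, ha₂def]
        field_simp
        ring
      rw [hDeq] at h2
      have h3αD : 0 ≤ 3 * α * ‖z (k + 1) - z (k + 2)‖ ^ 2 := by positivity
      have hextra : 0 ≤ 1 / (2 * a₁) * ε k ^ 2 := by positivity
      linarith
    simp only [hEE, hg]
    exact hmain
  -- lower bound on the Lyapunov function
  have hEB : ∀ k, B ≤ EE k := by
    intro k
    have h := hB (k + 1) (Nat.le_add_left 1 k)
    simp only [Nat.add_sub_cancel] at h
    simp only [hEE]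
    rwa [norm_sub_rev (z (k + 1))] at h
  obtain ⟨S, hS⟩ : ∃ S : ℝ, S = ∑' k, ε k ^ 2 := ⟨_, rfl⟩
  have hSnn : 0 ≤ S := by rw [hS]; exact tsum_nonneg (fun k => sq_nonneg _)
  have hepssum : ∀ K, ∑ j ∈ Finset.range K, (ε (j + 1) ^ 2 + ε j ^ 2) ≤ 2 * S := by
    intro K
    have h1 : ∑ j ∈ Finset.range K, ε j ^ 2 ≤ S := by
      rw [hS]; exact Summable.sum_le_tsum _ (fun _ _ => sq_nonneg _) hsum
    have h2 : ∑ j ∈ Finset.range K, ε (j + 1) ^ 2 ≤ S := by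
      have hle : ∑ j ∈ Finset.range K, ε (j + 1) ^ 2 ≤ ∑ j ∈ Finset.range (K + 1), ε j ^ 2 := by
        rw [Finset.sum_range_succ' (fun j => ε j ^ 2) K]
        have := sq_nonneg (ε 0); linarith
      rw [hS]; exact hle.trans (Summable.sum_le_tsum _ (fun _ _ => sq_nonneg _) hsum)
    rw [Finset.sum_add_distrib]; linarith
  have htel : ∀ K, EE K + ∑ j ∈ Finset.range K, g j
      ≤ EE 0 + (6 / (σ * β) + 1 / (2 * a₁))
          * ∑ j ∈ Finset.range K, (ε (j + 1) ^ 2 + ε j ^ 2) := by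
    intro K
    induction K with
    | zero => simp
    | succ K ih =>
      rw [Finset.sum_range_succ, Finset.sum_range_succ, mul_add]
      have := hEdesc K
      linarith
  have hCpos : (0:ℝ) < 6 / (σ * β) + 1 / (2 * a₁) :=
    add_pos (div_pos (by norm_num) (mul_pos hσ hβ)) (div_pos one_pos h2a₁)
  have hgbound : ∀ K, ∑ j ∈ Finset.range K, g j
      ≤ (EE 0 - B) + (6 / (σ * β) + 1 / (2 * a₁)) * (2 * S) := by
    intro K
    have h1 := htel K
    have h2 := hEB K
    have h3 := mul_le_mul_of_nonneg_left (hepssum K) hCpos.le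
    linarith
  have hgnonneg : ∀ k, 0 ≤ g k := by
    intro k
    simp only [hg]
    have h1 : 0 ≤ a₁ / 2 * ‖x (k + 2) - x (k + 1)‖ ^ 2 :=
      mul_nonneg (by linarith) (sq_nonneg _)
    have h2 : 0 ≤ a₂ * ‖z (k + 1) - z (k + 2)‖ ^ 2 :=
      mul_nonneg ha₂pos.le (sq_nonneg _)
    linarith
  have hgsum : Summable g := summable_of_sum_range_le hgnonneg hgbound
  -- summability of the squared primal increments
  have husum : Summable (fun k => ‖x (k + 2) - x (k + 1)‖ ^ 2) := by
    apply Summable.of_nonneg_of_le (fun k => sq_nonneg _) (fun k => ?_) (hgsum.mul_left (2 / a₁))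
    have hg2 : a₁ / 2 * ‖x (k + 2) - x (k + 1)‖ ^ 2 ≤ g k := by
      simp only [hg]
      have : 0 ≤ a₂ * ‖z (k + 1) - z (k + 2)‖ ^ 2 := mul_nonneg ha₂pos.le (sq_nonneg _)
      linarith
    calc ‖x (k + 2) - x (k + 1)‖ ^ 2
        = 2 / a₁ * (a₁ / 2 * ‖x (k + 2) - x (k + 1)‖ ^ 2) := by
          field_simp
          try ring
      _ ≤ 2 / a₁ * g k :=
          mul_le_mul_of_nonneg_left hg2 (div_nonneg (by norm_num) ha₁pos.le)
  have hDsum1 : Summable (fun k => ‖z (k + 1) - z (k + 2)‖ ^ 2) := by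
    apply Summable.of_nonneg_of_le (fun k => sq_nonneg _) (fun k => ?_) (hgsum.mul_left (1 / a₂))
    have hg2 : a₂ * ‖z (k + 1) - z (k + 2)‖ ^ 2 ≤ g k := by
      simp only [hg]
      have : 0 ≤ a₁ / 2 * ‖x (k + 2) - x (k + 1)‖ ^ 2 :=
        mul_nonneg (by linarith) (sq_nonneg _)
      linarith
    calc ‖z (k + 1) - z (k + 2)‖ ^ 2
        = 1 / a₂ * (a₂ * ‖z (k + 1) - z (k + 2)‖ ^ 2) := by
          field_simp
          try ring
      _ ≤ 1 / a₂ * g k :=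
          mul_le_mul_of_nonneg_left hg2 (div_nonneg (by norm_num) ha₂pos.le)
  have hDsum : Summable (fun k => ‖z k - z (k + 1)‖ ^ 2) := by
    rw [← summable_nat_add_iff 1]
    exact hDsum1
  have hdsum2 : Summable (fun k => ‖lam (k + 2) - lam (k + 1)‖ ^ 2) := by
    have hR : Summable (fun k => 1 / σ * (3 * γ⁻¹ ^ 2 * ‖z k - z (k + 1)‖ ^ 2
        + 3 * (γ⁻¹ + Lf) ^ 2 * ‖x (k + 2) - x (k + 1)‖ ^ 2
        + 6 * ε (k + 1) ^ 2 + 6 * ε k ^ 2)) := by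
      apply Summable.mul_left
      exact (((hDsum.mul_left _).add (husum.mul_left _)).add
        (((summable_nat_add_iff 1).mpr hsum).mul_left _)).add (hsum.mul_left _)
    apply Summable.of_nonneg_of_le (fun k => sq_nonneg _) (fun k => ?_) hR
    have h5 := hdual k
    calc ‖lam (k + 2) - lam (k + 1)‖ ^ 2
        = 1 / σ * (σ * ‖lam (k + 2) - lam (k + 1)‖ ^ 2) := by
          field_simp
      _ ≤ 1 / σ * (3 * γ⁻¹ ^ 2 * ‖z k - z (k + 1)‖ ^ 2
          + 3 * (γ⁻¹ + Lf) ^ 2 * ‖x (k + 2) - x (k + 1)‖ ^ 2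
          + 6 * ε (k + 1) ^ 2 + 6 * ε k ^ 2) :=
          mul_le_mul_of_nonneg_left h5 (by positivity)
  have hdsum : Summable (fun k => ‖lam (k + 1) - lam k‖ ^ 2) := by
    rw [← summable_nat_add_iff 1]
    exact hdsum2
  have hasum : Summable (fun t => ((η * γ) ^ 2)⁻¹ * ‖z t - z (t + 1)‖ ^ 2
      + (β ^ 2)⁻¹ * ‖lam (t + 1) - lam t‖ ^ 2) :=
    (hDsum.mul_left _).add (hdsum.mul_left _)
  exact aux_min_sqrt _ (fun t => by positivity) hasum
end
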